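/- arXiv:2312.05564 — 7 statements merged into one kernel-verified Lean document; each statement's English description precedes it below -/
import Mathlib

section
/- Every finite simple graph G has an almost majority edge coloring with 4 colors; that is, there is an edge coloring of G with 4 colors such that for every vertex u with deg(u) ≥ 2 and every color α, at most half of the edges incident with u have color α. -/
open SimpleGraph Finset

set_option linter.unusedSectionVars false
set_option maxHeartbeats 1000000

namespace AMEC

variable {V : Type*} [Fintype V] [DecidableEq V]

def ecnt (E : Finset (Sym2 V)) (c : Sym2 V → Fin 4) (z : V) (γ : Fin 4) : ℕ :=
  (E.filter (fun e => z ∈ e ∧ c e = γ)).card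

def edeg (E : Finset (Sym2 V)) (z : V) : ℕ :=
  (E.filter (fun e => z ∈ e)).card

def EValid (E : Finset (Sym2 V)) (c : Sym2 V → Fin 4) : Prop :=
  ∀ z γ, 2 ≤ edeg E z → 2 * ecnt E c z γ ≤ edeg E z

lemma sum_ecnt (E : Finset (Sym2 V)) (c : Sym2 V → Fin 4) (z : V) :
    ∑ γ : Fin 4, ecnt E c z γ = edeg E z := by
  unfold ecnt edeg
  rw [Finset.card_eq_sum_card_fiberwise (f := fun e => c e) (t := Finset.univ)
    (fun x _ => mem_univ _)]
  refine Finset.sum_congr rfl (fun γ _ => ?_)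
  rw [Finset.filter_filter]

lemma ecnt_le_edeg (E : Finset (Sym2 V)) (c : Sym2 V → Fin 4) (z : V) (γ : Fin 4) :
    ecnt E c z γ ≤ edeg E z := by
  apply Finset.card_le_card
  intro e he
  simp only [Finset.mem_filter] at he ⊢
  exact ⟨he.1, he.2.1⟩

lemma evalid_helper {E : Finset (Sym2 V)} {c : Sym2 V → Fin 4} (h : EValid E c)
    (z : V) (γ : Fin 4) : 2 * ecnt E c z γ ≤ edeg E z + 1 := by
  rcases le_or_gt 2 (edeg E z) with h2 | h2
  · exact le_trans (h z γ h2) (Nat.le_succ _)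
  · have := ecnt_le_edeg E c z γ
    omega

lemma edeg_erase_mem {E : Finset (Sym2 V)} {e : Sym2 V} (he : e ∈ E) {z : V} (hz : z ∈ e) :
    edeg (E.erase e) z + 1 = edeg E z := by
  unfold edeg
  rw [Finset.filter_erase, Finset.card_erase_of_mem (by simp [he, hz])]
  have : 1 ≤ (E.filter (fun e => z ∈ e)).card :=
    Finset.card_pos.mpr ⟨e, by simp [he, hz]⟩
  omega

lemma edeg_erase_not_mem {E : Finset (Sym2 V)} {e : Sym2 V} {z : V} (hz : z ∉ e) :
    edeg (E.erase e) z = edeg E z := by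
  unfold edeg
  rw [Finset.filter_erase, Finset.erase_eq_of_notMem (by simp [hz])]

lemma ecnt_erase_mem {E : Finset (Sym2 V)} {e : Sym2 V} (he : e ∈ E) {c : Sym2 V → Fin 4}
    {z : V} (hz : z ∈ e) {γ : Fin 4} (hc : c e = γ) :
    ecnt (E.erase e) c z γ + 1 = ecnt E c z γ := by
  unfold ecnt
  rw [Finset.filter_erase, Finset.card_erase_of_mem (by simp [he, hz, hc])]
  have : 1 ≤ (E.filter (fun e => z ∈ e ∧ c e = γ)).card :=
    Finset.card_pos.mpr ⟨e, by simp [he, hz, hc]⟩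
  omega

lemma ecnt_erase_not {E : Finset (Sym2 V)} {e : Sym2 V} {c : Sym2 V → Fin 4}
    {z : V} {γ : Fin 4} (h : ¬ (z ∈ e ∧ c e = γ)) :
    ecnt (E.erase e) c z γ = ecnt E c z γ := by
  unfold ecnt
  rw [Finset.filter_erase, Finset.erase_eq_of_notMem (by simp; tauto)]

lemma ecnt_congr {E : Finset (Sym2 V)} {c c' : Sym2 V → Fin 4}
    (h : ∀ e ∈ E, c e = c' e) (z : V) (γ : Fin 4) :
    ecnt E c z γ = ecnt E c' z γ := by
  unfold ecnt
  apply Finset.card_bij (fun e _ => e) <;> simp_all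

def goodSet (E' : Finset (Sym2 V)) (c' : Sym2 V → Fin 4) (z : V) (D : ℕ) : Finset (Fin 4) :=
  Finset.univ.filter (fun γ => 2 * (ecnt E' c' z γ + 1) ≤ D ∨ D ≤ 1)

lemma mem_goodSet {E' : Finset (Sym2 V)} {c' : Sym2 V → Fin 4} {z : V} {D : ℕ} {γ : Fin 4} :
    γ ∈ goodSet E' c' z D ↔ (2 * (ecnt E' c' z γ + 1) ≤ D ∨ D ≤ 1) := by
  simp [goodSet]

lemma bad_facts {E' : Finset (Sym2 V)} {c' : Sym2 V → Fin 4} {z : V} {D : ℕ} {γ : Fin 4}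
    (h : γ ∉ goodSet E' c' z D) : 2 ≤ D ∧ D ≤ 2 * ecnt E' c' z γ + 1 := by
  rw [mem_goodSet] at h
  push_neg at h
  omega

lemma goodSet_card_ge_two {E' : Finset (Sym2 V)} {c' : Sym2 V → Fin 4} {z : V} {D : ℕ}
    (hD : D = edeg E' z + 1) : 2 ≤ (goodSet E' c' z D).card := by
  by_contra h
  push_neg at h
  set bad : Finset (Fin 4) := Finset.univ \ goodSet E' c' z D with hbad
  have hbc : 3 ≤ bad.card := by
    rw [hbad, Finset.card_sdiff_of_subset (Finset.subset_univ _)]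
    have : (Finset.univ : Finset (Fin 4)).card = 4 := by simp
    omega
  have hδ : ∀ γ ∈ bad, edeg E' z ≤ 2 * ecnt E' c' z γ := by
    intro γ hγ
    have := bad_facts (Finset.mem_sdiff.mp hγ).2
    omega
  have hnonzero : 1 ≤ edeg E' z := by
    obtain ⟨γ, hγ⟩ := Finset.card_pos.mp (by omega : 0 < bad.card)
    have := bad_facts (Finset.mem_sdiff.mp hγ).2
    omega
  have hsum : ∑ γ ∈ bad, ecnt E' c' z γ ≤ edeg E' z := by
    rw [← sum_ecnt E' c' z]
    exact Finset.sum_le_sum_of_subset (Finset.subset_univ _)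
  have hlow : bad.card * edeg E' z ≤ ∑ γ ∈ bad, 2 * ecnt E' c' z γ := by
    calc bad.card * edeg E' z = ∑ _γ ∈ bad, edeg E' z := by
          rw [Finset.sum_const, smul_eq_mul]
      _ ≤ _ := Finset.sum_le_sum hδ
  rw [← Finset.mul_sum] at hlow
  nlinarith [hsum, hbc, hnonzero, hlow]

lemma goodSet_card_ge_three {E' : Finset (Sym2 V)} {c' : Sym2 V → Fin 4} {z : V} {D : ℕ}
    (hD : D = edeg E' z + 1) (hD2 : D ≤ 2) : 3 ≤ (goodSet E' c' z D).card := by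
  by_contra h
  push_neg at h
  set bad : Finset (Fin 4) := Finset.univ \ goodSet E' c' z D with hbad
  have hbc : 2 ≤ bad.card := by
    rw [hbad, Finset.card_sdiff_of_subset (Finset.subset_univ _)]
    have : (Finset.univ : Finset (Fin 4)).card = 4 := by simp
    omega
  have hδ : ∀ γ ∈ bad, 1 ≤ ecnt E' c' z γ := by
    intro γ hγ
    have := bad_facts (Finset.mem_sdiff.mp hγ).2
    omega
  have hsum : ∑ γ ∈ bad, ecnt E' c' z γ ≤ edeg E' z := by
    rw [← sum_ecnt E' c' z]
    exact Finset.sum_le_sum_of_subset (Finset.subset_univ _)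
  have hlow : bad.card * 1 ≤ ∑ γ ∈ bad, ecnt E' c' z γ := by
    calc bad.card * 1 = ∑ _γ ∈ bad, 1 := by rw [Finset.sum_const, smul_eq_mul]
      _ ≤ _ := Finset.sum_le_sum hδ
  omega

lemma card_incident_filter (E : Finset (Sym2 V)) (hE : ∀ e ∈ E, ¬ e.IsDiag) (z : V)
    (p : Sym2 V → Prop) [DecidablePred p] :
    (E.filter (fun e => z ∈ e ∧ p e)).card
      = (Finset.univ.filter (fun y => z ≠ y ∧ s(z,y) ∈ E ∧ p s(z,y))).card := by
  refine Finset.card_bij' (fun e he => Sym2.Mem.other' (Finset.mem_filter.mp he).2.1)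
    (fun y _ => s(z,y)) ?_ ?_ ?_ ?_
  · intro e he
    have hm := Finset.mem_filter.mp he
    have hspec := Sym2.other_spec' hm.2.1
    rw [Finset.mem_filter]
    refine ⟨Finset.mem_univ _, ?_, ?_, ?_⟩
    · intro h
      apply hE e hm.1
      rw [← hspec]
      exact Sym2.mk_isDiag_iff.mpr (by exact h)
    · rw [hspec]; exact hm.1
    · rw [hspec]; exact hm.2.2
  · intro y hy
    have hm := Finset.mem_filter.mp hy
    rw [Finset.mem_filter]
    exact ⟨hm.2.2.1, Sym2.mem_mk_left _ _, hm.2.2.2⟩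
  · intro e he
    exact Sym2.other_spec' (Finset.mem_filter.mp he).2.1
  · intro y hy
    have hm := Finset.mem_filter.mp hy
    have hspec := Sym2.other_spec' (Sym2.mem_mk_left z y : z ∈ s(z,y))
    rw [Sym2.eq_iff] at hspec
    rcases hspec with ⟨_, h⟩ | ⟨h1, _⟩
    · exact h
    · exact absurd h1 hm.2.1

lemma edeg_eq_card (E : Finset (Sym2 V)) (hE : ∀ e ∈ E, ¬ e.IsDiag) (z : V) :
    edeg E z = (Finset.univ.filter (fun y => z ≠ y ∧ s(z,y) ∈ E)).card := by
  have h := card_incident_filter E hE z (fun _ => True)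
  simp only [and_true] at h
  exact h

lemma ecnt_eq_card (E : Finset (Sym2 V)) (hE : ∀ e ∈ E, ¬ e.IsDiag) (c : Sym2 V → Fin 4)
    (z : V) (γ : Fin 4) :
    ecnt E c z γ = (Finset.univ.filter (fun y => z ≠ y ∧ s(z,y) ∈ E ∧ c s(z,y) = γ)).card :=
  card_incident_filter E hE z (fun e => c e = γ)

lemma ecnt_pair (E : Finset (Sym2 V)) (c : Sym2 V → Fin 4) (z : V) {a b : Fin 4} (hab : a ≠ b) :
    (E.filter (fun e => z ∈ e ∧ (c e = a ∨ c e = b))).card = ecnt E c z a + ecnt E c z b := by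
  unfold ecnt
  have h1 : E.filter (fun e => z ∈ e ∧ (c e = a ∨ c e = b))
      = E.filter (fun e => (z ∈ e ∧ c e = a) ∨ (z ∈ e ∧ c e = b)) := by
    apply Finset.filter_congr
    intro e _
    tauto
  rw [h1, Finset.filter_or]
  apply Finset.card_union_of_disjoint
  rw [Finset.disjoint_left]
  intro e he1 he2
  have ha := (Finset.mem_filter.mp he1).2.2
  have hb := (Finset.mem_filter.mp he2).2.2
  exact hab (ha.symm.trans hb)

/-- The Kempe subgraph spanned by edges of `E` colored `a` or `b`. -/
def kgraph (E : Finset (Sym2 V)) (c : Sym2 V → Fin 4) (a b : Fin 4) : SimpleGraph V where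
  Adj z y := z ≠ y ∧ s(z,y) ∈ E ∧ (c s(z,y) = a ∨ c s(z,y) = b)
  symm := by
    constructor
    intro z y h
    obtain ⟨h1, h2, h3⟩ := h
    refine ⟨h1.symm, ?_, ?_⟩ <;> rwa [Sym2.eq_swap]
  loopless := ⟨fun z h => h.1 rfl⟩

instance kgraph_dec (E : Finset (Sym2 V)) (c : Sym2 V → Fin 4) (a b : Fin 4) :
    DecidableRel (kgraph E c a b).Adj := fun z y =>
  inferInstanceAs (Decidable (z ≠ y ∧ s(z,y) ∈ E ∧ (c s(z,y) = a ∨ c s(z,y) = b)))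

lemma kgraph_degree (E : Finset (Sym2 V)) (hE : ∀ e ∈ E, ¬ e.IsDiag) (c : Sym2 V → Fin 4)
    {a b : Fin 4} (hab : a ≠ b) (z : V) :
    (kgraph E c a b).degree z = ecnt E c z a + ecnt E c z b := by
  rw [← ecnt_pair E c z hab,
    card_incident_filter E hE z (fun e => c e = a ∨ c e = b), degree, neighborFinset_eq_filter]
  congr 1

def cswap (a b γ : Fin 4) : Fin 4 := if γ = a then b else if γ = b then a else γ

lemma cswap_invol (a b γ : Fin 4) : cswap a b (cswap a b γ) = γ := by
  unfold cswap
  split_ifs <;> simp_all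

lemma cswap_eq_iff (a b γ δ : Fin 4) : cswap a b γ = δ ↔ γ = cswap a b δ := by
  constructor
  · intro h; rw [← h, cswap_invol]
  · intro h; rw [h, cswap_invol]

lemma cswap_other {a b γ : Fin 4} (h1 : γ ≠ a) (h2 : γ ≠ b) : cswap a b γ = γ := by
  unfold cswap; rw [if_neg h1, if_neg h2]

lemma cswap_a (a b : Fin 4) : cswap a b a = b := by unfold cswap; rw [if_pos rfl]

lemma cswap_b {a b : Fin 4} (hab : a ≠ b) : cswap a b b = a := by
  unfold cswap; rw [if_neg (Ne.symm hab), if_pos rfl]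

open scoped Classical in
/-- Swap colors `a`,`b` on the connected component of `w` in the Kempe subgraph. -/
noncomputable def kswap (E : Finset (Sym2 V)) (c : Sym2 V → Fin 4) (a b : Fin 4) (w : V) :
    Sym2 V → Fin 4 :=
  fun e => if e ∈ E ∧ (c e = a ∨ c e = b) ∧ (∃ z, z ∈ e ∧ (kgraph E c a b).Reachable w z)
    then cswap a b (c e) else c e

lemma kswap_cnt_mem (E : Finset (Sym2 V)) (hE : ∀ e ∈ E, ¬ e.IsDiag) (c : Sym2 V → Fin 4)
    {a b : Fin 4} (hab : a ≠ b) {w z : V} (hz : (kgraph E c a b).Reachable w z) (γ : Fin 4) :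
    ecnt E (kswap E c a b w) z γ = ecnt E c z (cswap a b γ) := by
  unfold ecnt
  congr 1
  ext e
  simp only [Finset.mem_filter]
  constructor
  · rintro ⟨heE, hze, hc⟩
    refine ⟨heE, hze, ?_⟩
    unfold kswap at hc
    by_cases hcol : c e = a ∨ c e = b
    · rw [if_pos ⟨heE, hcol, z, hze, hz⟩] at hc
      rw [← hc, cswap_invol]
    · rw [if_neg (fun hcond => hcol hcond.2.1)] at hc
      rw [hc] at hcol ⊢
      push_neg at hcol
      rw [cswap_other hcol.1 hcol.2]
  · rintro ⟨heE, hze, hc⟩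
    refine ⟨heE, hze, ?_⟩
    unfold kswap
    by_cases hcol : c e = a ∨ c e = b
    · rw [if_pos ⟨heE, hcol, z, hze, hz⟩]
      rw [hc, cswap_invol]
    · rw [if_neg (fun hcond => hcol hcond.2.1)]
      rw [hc]
      push_neg at hcol
      rw [hc] at hcol
      -- hcol : cswap a b γ ≠ a ∧ cswap a b γ ≠ b ; need : cswap a b γ = γ hence γ itself
      by_cases hga : γ = a
      · exfalso; apply hcol.2; rw [hga, cswap_a]
      · by_cases hgb : γ = b
        · exfalso; apply hcol.1; rw [hgb, cswap_b hab]
        · rw [cswap_other hga hgb]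
  
lemma kswap_cnt_not_mem (E : Finset (Sym2 V)) (hE : ∀ e ∈ E, ¬ e.IsDiag) (c : Sym2 V → Fin 4)
    {a b : Fin 4} {w z : V} (hz : ¬ (kgraph E c a b).Reachable w z) (γ : Fin 4) :
    ecnt E (kswap E c a b w) z γ = ecnt E c z γ := by
  unfold ecnt
  congr 1
  apply Finset.filter_congr
  intro e heE
  by_cases hze : z ∈ e
  · have hsw : kswap E c a b w e = c e := by
      unfold kswap
      rw [if_neg]
      rintro ⟨_, hcol, y, hye, hreach⟩
      have hyz : y ≠ z := fun h => hz (h ▸ hreach)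
      have he2 : e = s(y,z) := (Sym2.mem_and_mem_iff hyz).mp ⟨hye, hze⟩
      apply hz
      refine hreach.trans (SimpleGraph.Adj.reachable ?_)
      exact ⟨hyz, he2 ▸ heE, by rw [← he2]; exact hcol⟩
    rw [hsw]
  · simp [hze]

lemma kswap_valid (E : Finset (Sym2 V)) (hE : ∀ e ∈ E, ¬ e.IsDiag) (c : Sym2 V → Fin 4)
    {a b : Fin 4} (hab : a ≠ b) (w : V) (hval : EValid E c) :
    EValid E (kswap E c a b w) := by
  intro z γ h2
  by_cases hz : (kgraph E c a b).Reachable w z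
  · rw [kswap_cnt_mem E hE c hab hz]
    exact hval z _ h2
  · rw [kswap_cnt_not_mem E hE c hz]
    exact hval z _ h2

/-- The subgraph induced on the connected component of `w`. -/
def compGraph (H : SimpleGraph V) (w : V) : SimpleGraph V where
  Adj x y := H.Adj x y ∧ H.Reachable w x ∧ H.Reachable w y
  symm := ⟨fun x y h => ⟨h.1.symm, h.2.2, h.2.1⟩⟩
  loopless := ⟨fun x h => H.loopless.irrefl x h.1⟩

instance compGraph_dec (H : SimpleGraph V) [DecidableRel H.Adj] (w : V) :
    DecidableRel (compGraph H w).Adj := fun x y =>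
  inferInstanceAs (Decidable (_ ∧ _ ∧ _))

lemma compGraph_nbr (H : SimpleGraph V) [DecidableRel H.Adj] {w z : V}
    (hz : H.Reachable w z) : (compGraph H w).neighborFinset z = H.neighborFinset z := by
  ext y
  rw [mem_neighborFinset, mem_neighborFinset]
  constructor
  · exact fun h => h.1
  · intro h
    exact ⟨h, hz, hz.trans h.reachable⟩

lemma compGraph_nbr_empty (H : SimpleGraph V) [DecidableRel H.Adj] {w z : V}
    (hz : ¬ H.Reachable w z) : (compGraph H w).neighborFinset z = ∅ := by
  ext y
  rw [mem_neighborFinset]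
  simp only [Finset.notMem_empty, iff_false]
  intro h
  exact hz h.2.1

lemma three_endpoints (H : SimpleGraph V) [DecidableRel H.Adj]
    (hdeg : ∀ z, H.degree z ≤ 2) {u v w : V} (huv : u ≠ v) (huw : u ≠ w) (hvw : v ≠ w)
    (du : H.degree u = 1) (dv : H.degree v = 1) (dw : H.degree w = 1)
    (ru : H.Reachable w u) (rv : H.Reachable w v) : False := by
  classical
  set S : Finset V := Finset.univ.filter (fun z => H.Reachable w z) with hS
  have hmemS : ∀ z, z ∈ S ↔ H.Reachable w z := by
    intro z; rw [hS]; simp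
  -- the component graph H2
  set H2 := compGraph H w with hH2
  -- relation between degrees
  have hdeg2 : ∀ z ∈ S, H2.degree z = H.degree z := by
    intro z hz
    rw [degree, compGraph_nbr H ((hmemS z).mp hz), degree]
  have hdeg2' : ∀ z ∉ S, H2.degree z = 0 := by
    intro z hz
    rw [degree, compGraph_nbr_empty H (fun h => hz ((hmemS z).mpr h))]
    simp
  -- handshake
  have hhs : ∑ z, H2.degree z = 2 * H2.edgeFinset.card :=
    SimpleGraph.sum_degrees_eq_twice_card_edges H2
  have hsplit : ∑ z, H2.degree z = ∑ z ∈ S, H.degree z := by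
    rw [← Finset.sum_filter_add_sum_filter_not Finset.univ (fun z => z ∈ S)
      (fun z => H2.degree z)]
    have h1 : ∑ z ∈ Finset.univ.filter (fun z => z ∈ S), H2.degree z
        = ∑ z ∈ S, H.degree z := by
      rw [Finset.filter_mem_eq_inter, Finset.univ_inter]
      exact Finset.sum_congr rfl hdeg2
    have h2 : ∑ z ∈ Finset.univ.filter (fun z => z ∉ S), H2.degree z = 0 := by
      apply Finset.sum_eq_zero
      intro z hz
      exact hdeg2' z (Finset.mem_filter.mp hz).2
    omega
  -- the injection from S.erase w into the edges of H2
  have key : ∀ z ∈ S.erase w, ∃ y, H.Adj y z ∧ H.dist w y + 1 = H.dist w z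
      ∧ H.Reachable w y := by
    intro z hz
    have hzw : z ≠ w := (Finset.mem_erase.mp hz).1
    have hreach : H.Reachable w z := (hmemS z).mp (Finset.mem_erase.mp hz).2
    obtain ⟨p, hp⟩ := hreach.exists_walk_length_eq_dist
    have hpos : 0 < H.dist w z := hreach.pos_dist_of_ne (fun h => hzw h.symm)
    cases hq : p.reverse with
    | nil => exact absurd rfl hzw
    | cons ha q =>
      rename_i y
      refine ⟨y, ha.symm, ?_, ⟨q.reverse⟩⟩
      have hlen : p.length = q.length + 1 := by
        have := congrArg SimpleGraph.Walk.length hq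
        rwa [SimpleGraph.Walk.length_reverse, SimpleGraph.Walk.length_cons] at this
      have h1 : H.dist w y ≤ q.length := by
        have := SimpleGraph.dist_le q.reverse
        rwa [SimpleGraph.Walk.length_reverse] at this
      have h2 : H.dist w z ≤ H.dist w y + 1 := by
        have hry : H.Reachable w y := ⟨q.reverse⟩
        obtain ⟨r, hr⟩ := hry.exists_walk_length_eq_dist
        have := SimpleGraph.dist_le (r.concat ha.symm)
        rwa [SimpleGraph.Walk.length_concat, hr] at this
      omega
  set pred : V → V := fun z =>
    if h : ∃ y, H.Adj y z ∧ H.dist w y + 1 = H.dist w z ∧ H.Reachable w y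
    then Classical.choose h else z with hpred_def
  have hpred : ∀ z ∈ S.erase w, H.Adj (pred z) z ∧ H.dist w (pred z) + 1 = H.dist w z
      ∧ H.Reachable w (pred z) := by
    intro z hz
    have hex := key z hz
    rw [hpred_def]
    simp only [dif_pos hex]
    exact Classical.choose_spec hex
  have hinj : 2 * (S.card - 1) ≤ 2 * H2.edgeFinset.card := by
    have hcle : (S.erase w).card ≤ H2.edgeFinset.card := by
      apply Finset.card_le_card_of_injOn (fun z => s(pred z, z))
      · intro z hz
        obtain ⟨ha, hd, hr⟩ := hpred z hz
        rw [Finset.mem_coe, SimpleGraph.mem_edgeFinset, SimpleGraph.mem_edgeSet]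
        exact ⟨ha, hr, (hmemS z).mp (Finset.mem_erase.mp hz).2⟩
      · intro z1 hz1 z2 hz2 heq
        simp only [Finset.coe_erase, Set.mem_diff] at hz1 hz2
        have hz1' : z1 ∈ S.erase w := Finset.mem_erase.mpr ⟨by simpa using hz1.2, by
          have := hz1.1; simpa using this⟩
        have hz2' : z2 ∈ S.erase w := Finset.mem_erase.mpr ⟨by simpa using hz2.2, by
          have := hz2.1; simpa using this⟩
        obtain ⟨ha1, hd1, _⟩ := hpred z1 hz1'
        obtain ⟨ha2, hd2, _⟩ := hpred z2 hz2'
        rw [Sym2.eq_iff] at heq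
        rcases heq with ⟨_, h⟩ | ⟨h1, h2⟩
        · exact h
        · rw [h1] at hd1
          rw [← h2] at hd2
          omega
    have hw : w ∈ S := (hmemS w).mpr (SimpleGraph.Reachable.refl w)
    rw [Finset.card_erase_of_mem hw] at hcle
    omega
  -- upper bound on the degree sum
  set T : Finset V := {u, v, w} with hT
  have hTS : T ⊆ S := by
    intro z hz
    rw [hT] at hz
    simp only [Finset.mem_insert, Finset.mem_singleton] at hz
    rcases hz with h | h | h <;> rw [h]
    · exact (hmemS u).mpr ru
    · exact (hmemS v).mpr rv
    · exact (hmemS w).mpr (SimpleGraph.Reachable.refl w)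
  have hTcard : T.card = 3 :=
    Finset.card_eq_three.mpr ⟨u, v, w, huv, huw, hvw, rfl⟩
  have hTsum : ∑ z ∈ T, H.degree z = 3 := by
    rw [hT]
    rw [Finset.sum_insert (by simp [huv, huw]), Finset.sum_insert (by simp [hvw]),
      Finset.sum_singleton, du, dv, dw]
    norm_num

  have hsum_split : ∑ z ∈ S \ T, H.degree z + ∑ z ∈ T, H.degree z = ∑ z ∈ S, H.degree z :=
    Finset.sum_sdiff hTS
  have hrest : ∑ z ∈ S \ T, H.degree z ≤ 2 * (S.card - 3) := by
    calc ∑ z ∈ S \ T, H.degree z ≤ ∑ _z ∈ S \ T, 2 :=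
          Finset.sum_le_sum (fun z _ => hdeg z)
      _ = (S \ T).card * 2 := by rw [Finset.sum_const, smul_eq_mul]
      _ = 2 * (S.card - 3) := by rw [Finset.card_sdiff_of_subset hTS, hTcard, Nat.mul_comm]
  have hScard : 3 ≤ S.card := hTcard ▸ Finset.card_le_card hTS
  omega

lemma extend_two_core (E : Finset (Sym2 V)) (w u v : V) (e f : Sym2 V)
    (c' : Sym2 V → Fin 4) (α β : Fin 4)
    (hef : e ≠ f) (he : e ∈ E) (hf : f ∈ E)
    (hme : ∀ z, z ∈ e ↔ z = w ∨ z = u) (hmf : ∀ z, z ∈ f ↔ z = w ∨ z = v)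
    (huv : u ≠ v)
    (hval : EValid ((E.erase e).erase f) c')
    (hαβ : α ≠ β)
    (hu : 2 * (ecnt ((E.erase e).erase f) c' u α + 1) ≤ edeg E u ∨ edeg E u ≤ 1)
    (hv : 2 * (ecnt ((E.erase e).erase f) c' v β + 1) ≤ edeg E v ∨ edeg E v ≤ 1)
    (hwα : 2 * (ecnt ((E.erase e).erase f) c' w α + 1) ≤ edeg E w ∨ edeg E w ≤ 1)
    (hwβ : 2 * (ecnt ((E.erase e).erase f) c' w β + 1) ≤ edeg E w ∨ edeg E w ≤ 1) :
    ∃ c, EValid E c := by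
  have hwe : w ∈ e := (hme w).mpr (Or.inl rfl)
  have hwf : w ∈ f := (hmf w).mpr (Or.inl rfl)
  let c : Sym2 V → Fin 4 := Function.update (Function.update c' e α) f β
  have hce : c e = α := by
    show Function.update (Function.update c' e α) f β e = α
    rw [Function.update_of_ne hef, Function.update_self]
  have hcf : c f = β := by
    show Function.update (Function.update c' e α) f β f = β
    rw [Function.update_self]
  have hcE' : ∀ g ∈ (E.erase e).erase f, c g = c' g := by
    intro g hg
    have hgf : g ≠ f := (Finset.mem_erase.mp hg).1
    have hge : g ≠ e := (Finset.mem_erase.mp (Finset.mem_erase.mp hg).2).1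
    show Function.update (Function.update c' e α) f β g = c' g
    rw [Function.update_of_ne hgf, Function.update_of_ne hge]
  have hfE : f ∈ E.erase e := Finset.mem_erase.mpr ⟨fun h => hef h.symm, hf⟩
  have key : ∀ z γ, ecnt E c z γ =
      ecnt ((E.erase e).erase f) c' z γ
        + (if z ∈ e ∧ γ = α then 1 else 0) + (if z ∈ f ∧ γ = β then 1 else 0) := by
    intro z γ
    have hcc : ecnt ((E.erase e).erase f) c z γ = ecnt ((E.erase e).erase f) c' z γ :=
      ecnt_congr hcE' z γ
    by_cases h1 : z ∈ e ∧ γ = α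
    · have s1 := ecnt_erase_mem (γ := γ) (c := c) he h1.1 (by rw [h1.2]; exact hce)
      by_cases h2 : z ∈ f ∧ γ = β
      · have s2 := ecnt_erase_mem (E := E.erase e) (γ := γ) (c := c) hfE h2.1
          (by rw [h2.2]; exact hcf)
        rw [if_pos h1, if_pos h2]
        omega
      · have s2 := ecnt_erase_not (E := E.erase e) (e := f) (c := c) (z := z) (γ := γ)
          (fun hh => h2 ⟨hh.1, by rw [← hh.2, hcf]⟩)
        rw [if_pos h1, if_neg h2]
        omega
    · have s1 := ecnt_erase_not (E := E) (e := e) (c := c) (z := z) (γ := γ)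
        (fun hh => h1 ⟨hh.1, by rw [← hh.2, hce]⟩)
      by_cases h2 : z ∈ f ∧ γ = β
      · have s2 := ecnt_erase_mem (E := E.erase e) (γ := γ) (c := c) hfE h2.1
          (by rw [h2.2]; exact hcf)
        rw [if_neg h1, if_pos h2]
        omega
      · have s2 := ecnt_erase_not (E := E.erase e) (e := f) (c := c) (z := z) (γ := γ)
          (fun hh => h2 ⟨hh.1, by rw [← hh.2, hcf]⟩)
        rw [if_neg h1, if_neg h2]
        omega
  have keyd : ∀ z, edeg E z =
      edeg ((E.erase e).erase f) z + (if z ∈ e then 1 else 0) + (if z ∈ f then 1 else 0) := by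
    intro z
    by_cases h1 : z ∈ e
    · have s1 := edeg_erase_mem he h1
      by_cases h2 : z ∈ f
      · have s2 := edeg_erase_mem hfE h2
        rw [if_pos h1, if_pos h2]; omega
      · have s2 := edeg_erase_not_mem (E := E.erase e) (e := f) h2
        rw [if_pos h1, if_neg h2]; omega
    · have s1 := edeg_erase_not_mem (E := E) (e := e) h1
      by_cases h2 : z ∈ f
      · have s2 := edeg_erase_mem hfE h2
        rw [if_neg h1, if_pos h2]; omega
      · have s2 := edeg_erase_not_mem (E := E.erase e) (e := f) h2
        rw [if_neg h1, if_neg h2]; omega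
  refine ⟨c, ?_⟩
  intro z γ h2
  have hk := key z γ
  have hkd := keyd z
  have hhelp := evalid_helper hval z γ
  by_cases hze : z ∈ e <;> by_cases hzf : z ∈ f
  · -- z = w
    have hzw : z = w := by
      rcases (hme z).mp hze with h | h
      · exact h
      · rcases (hmf z).mp hzf with h' | h'
        · exact h'
        · exact absurd (h ▸ h') huv
    rw [hzw] at hk hkd h2 hhelp ⊢
    rw [if_pos hwe, if_pos hwf] at hkd
    by_cases hγα : γ = α
    · rw [hγα] at hk hhelp ⊢
      rw [if_pos ⟨hwe, rfl⟩, if_neg (fun hh : w ∈ f ∧ α = β => hαβ hh.2)] at hk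
      rcases hwα with h | h <;> omega
    · by_cases hγβ : γ = β
      · rw [hγβ] at hk hhelp ⊢
        rw [if_neg (fun hh : w ∈ e ∧ β = α => hαβ hh.2.symm), if_pos ⟨hwf, rfl⟩] at hk
        rcases hwβ with h | h <;> omega
      · rw [if_neg (fun hh => hγα hh.2), if_neg (fun hh => hγβ hh.2)] at hk
        omega
  · -- z = u
    have hzu : z = u := by
      rcases (hme z).mp hze with h | h
      · exact absurd (h ▸ hwf) hzf
      · exact h
    have hue : u ∈ e := hzu ▸ hze
    have huf : u ∉ f := hzu ▸ hzf
    rw [hzu] at hk hkd h2 hhelp ⊢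
    rw [if_pos hue, if_neg huf] at hkd
    by_cases hγα : γ = α
    · rw [hγα] at hk hhelp ⊢
      rw [if_pos ⟨hue, rfl⟩, if_neg (fun hh => huf hh.1)] at hk
      rcases hu with h | h <;> omega
    · rw [if_neg (fun hh => hγα hh.2), if_neg (fun hh => huf hh.1)] at hk
      omega
  · -- z = v
    have hzv : z = v := by
      rcases (hmf z).mp hzf with h | h
      · exact absurd (h ▸ hwe) hze
      · exact h
    have hvf : v ∈ f := hzv ▸ hzf
    have hve : v ∉ e := hzv ▸ hze
    rw [hzv] at hk hkd h2 hhelp ⊢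
    rw [if_neg hve, if_pos hvf] at hkd
    by_cases hγβ : γ = β
    · rw [hγβ] at hk hhelp ⊢
      rw [if_neg (fun hh => hve hh.1), if_pos ⟨hvf, rfl⟩] at hk
      rcases hv with h | h <;> omega
    · rw [if_neg (fun hh => hve hh.1), if_neg (fun hh => hγβ hh.2)] at hk
      omega
  · rw [if_neg (fun hh => hze hh.1), if_neg (fun hh => hzf hh.1)] at hk
    rw [if_neg hze, if_neg hzf] at hkd
    have := hval z γ (by omega)
    omega

lemma extend_one_core (E : Finset (Sym2 V)) (u v : V) (e : Sym2 V)
    (c' : Sym2 V → Fin 4) (α : Fin 4)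
    (he : e ∈ E) (hme : ∀ z, z ∈ e ↔ z = u ∨ z = v)
    (hval : EValid (E.erase e) c')
    (hu : 2 * (ecnt (E.erase e) c' u α + 1) ≤ edeg E u ∨ edeg E u ≤ 1)
    (hv : 2 * (ecnt (E.erase e) c' v α + 1) ≤ edeg E v ∨ edeg E v ≤ 1) :
    ∃ c, EValid E c := by
  let c : Sym2 V → Fin 4 := Function.update c' e α
  have hce : c e = α := Function.update_self e α c'
  have hcE' : ∀ g ∈ E.erase e, c g = c' g := by
    intro g hg
    exact Function.update_of_ne (Finset.mem_erase.mp hg).1 α c'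
  have key : ∀ z γ, ecnt E c z γ =
      ecnt (E.erase e) c' z γ + (if z ∈ e ∧ γ = α then 1 else 0) := by
    intro z γ
    have hcc : ecnt (E.erase e) c z γ = ecnt (E.erase e) c' z γ := ecnt_congr hcE' z γ
    by_cases h1 : z ∈ e ∧ γ = α
    · have s1 := ecnt_erase_mem (γ := γ) (c := c) he h1.1 (by rw [h1.2]; exact hce)
      rw [if_pos h1]; omega
    · have s1 := ecnt_erase_not (E := E) (e := e) (c := c) (z := z) (γ := γ)
        (fun hh => h1 ⟨hh.1, by rw [← hh.2, hce]⟩)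
      rw [if_neg h1]; omega
  have keyd : ∀ z, edeg E z = edeg (E.erase e) z + (if z ∈ e then 1 else 0) := by
    intro z
    by_cases h1 : z ∈ e
    · have s1 := edeg_erase_mem he h1
      rw [if_pos h1]; omega
    · have s1 := edeg_erase_not_mem (E := E) (e := e) h1
      rw [if_neg h1]; omega
  refine ⟨c, ?_⟩
  intro z γ h2
  have hk := key z γ
  have hkd := keyd z
  have hhelp := evalid_helper hval z γ
  by_cases hze : z ∈ e
  · rw [if_pos hze] at hkd
    by_cases hγα : γ = α
    · rw [hγα] at hk hhelp ⊢
      rw [if_pos ⟨hze, rfl⟩] at hk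
      rcases (hme z).mp hze with h | h
      · rw [h] at hk hkd h2 hhelp ⊢
        rcases hu with hh | hh <;> omega
      · rw [h] at hk hkd h2 hhelp ⊢
        rcases hv with hh | hh <;> omega
    · rw [if_neg (fun hh => hγα hh.2)] at hk
      omega
  · rw [if_neg (fun hh => hze hh.1)] at hk
    rw [if_neg hze] at hkd
    have := hval z γ (by omega)
    omega

lemma edeg_le_of_subset {E' E : Finset (Sym2 V)} (h : E' ⊆ E) (z : V) :
    edeg E' z ≤ edeg E z :=
  Finset.card_le_card (Finset.filter_subset_filter _ h)

lemma ecnt_pair_le (E : Finset (Sym2 V)) (c : Sym2 V → Fin 4) (z : V) {a b : Fin 4}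
    (hab : a ≠ b) : ecnt E c z a + ecnt E c z b ≤ edeg E z := by
  rw [← ecnt_pair E c z hab]
  apply Finset.card_le_card
  intro e he
  rw [Finset.mem_filter] at he ⊢
  exact ⟨he.1, he.2.1⟩

lemma edge_at {E : Finset (Sym2 V)} (hnd : ∀ e ∈ E, ¬ e.IsDiag) {w : V} {e : Sym2 V}
    (heE : e ∈ E) (hwe : w ∈ e) :
    ∃ u, u ≠ w ∧ (∀ z, z ∈ e ↔ z = w ∨ z = u) := by
  have hspec := Sym2.other_spec' hwe
  refine ⟨Sym2.Mem.other' hwe, ?_, ?_⟩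
  · intro h
    apply hnd e heE
    rw [← hspec, h]
    exact Sym2.mk_isDiag_iff.mpr rfl
  · intro z
    constructor
    · intro hz
      rw [← hspec, Sym2.mem_iff] at hz
      exact hz
    · intro hz
      rw [← hspec, Sym2.mem_iff]
      exact hz

lemma main_lemma (n : ℕ) : ∀ (E : Finset (Sym2 V)), E.card = n →
    (∀ e ∈ E, ¬ e.IsDiag) → ∃ c : Sym2 V → Fin 4, EValid E c := by
  induction n using Nat.strong_induction_on with
  | _ n IH =>
  intro E hcard hnd
  by_cases hE0 : E = ∅
  · refine ⟨fun _ => 0, ?_⟩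
    intro z γ h2
    rw [hE0] at h2
    simp [edeg] at h2
  -- E is nonempty
  by_cases hbig : ∃ w, 4 ≤ edeg E w
  · -- Case 1 : a vertex of degree at least 4
    obtain ⟨w, hw⟩ := hbig
    have h2le : 1 < (E.filter (fun e => w ∈ e)).card := by
      have : edeg E w = (E.filter (fun e => w ∈ e)).card := rfl
      omega
    obtain ⟨e, he, f, hf, hef⟩ := Finset.one_lt_card.mp h2le
    have heE : e ∈ E := (Finset.mem_filter.mp he).1
    have hwe : w ∈ e := (Finset.mem_filter.mp he).2
    have hfE : f ∈ E := (Finset.mem_filter.mp hf).1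
    have hwf : w ∈ f := (Finset.mem_filter.mp hf).2
    obtain ⟨u, huw, hme⟩ := edge_at hnd heE hwe
    obtain ⟨v, hvw, hmf⟩ := edge_at hnd hfE hwf
    have huv : u ≠ v := by
      intro h
      apply hef
      have h1 : ∀ z, z ∈ e ↔ z ∈ f := by
        intro z; rw [hme z, hmf z, h]
      exact Sym2.ext h1
    have hue : u ∈ e := (hme u).mpr (Or.inr rfl)
    have hvf : v ∈ f := (hmf v).mpr (Or.inr rfl)
    have hunf : u ∉ f := by
      rw [hmf u]; push_neg; exact ⟨huw, huv⟩
    have hvne : v ∉ e := by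
      rw [hme v]; push_neg; exact ⟨hvw, fun h => huv h.symm⟩
    have hfEe : f ∈ E.erase e := Finset.mem_erase.mpr ⟨Ne.symm hef, hfE⟩
    have hcard' : ((E.erase e).erase f).card = n - 2 := by
      rw [Finset.card_erase_of_mem hfEe, Finset.card_erase_of_mem heE, hcard]
      omega
    have hn2 : 2 ≤ n := by
      have := Finset.one_lt_card.mpr ⟨e, heE, f, hfE, hef⟩
      omega
    have hnd' : ∀ g ∈ (E.erase e).erase f, ¬ g.IsDiag := fun g hg =>
      hnd g (Finset.mem_of_mem_erase (Finset.mem_of_mem_erase hg))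
    obtain ⟨c', hval⟩ := IH (n - 2) (by omega) _ hcard' hnd'
    -- degree relations
    have hdu : edeg ((E.erase e).erase f) u + 1 = edeg E u := by
      rw [edeg_erase_not_mem hunf, edeg_erase_mem heE hue]
    have hdv : edeg ((E.erase e).erase f) v + 1 = edeg E v := by
      rw [edeg_erase_mem hfEe hvf, edeg_erase_not_mem hvne]
    have hdw : edeg ((E.erase e).erase f) w + 2 = edeg E w := by
      have h1 := edeg_erase_mem hfEe (z := w) hwf
      have h2 := edeg_erase_mem heE (z := w) hwe
      omega
    -- choose colors
    have hgv := goodSet_card_ge_two (E' := (E.erase e).erase f) (c' := c') (z := v)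
      (D := edeg E v) hdv.symm
    obtain ⟨β, hβ⟩ := Finset.card_pos.mp (by omega : 0 < (goodSet ((E.erase e).erase f) c' v (edeg E v)).card)
    have hgu := goodSet_card_ge_two (E' := (E.erase e).erase f) (c' := c') (z := u)
      (D := edeg E u) hdu.symm
    have : 0 < ((goodSet ((E.erase e).erase f) c' u (edeg E u)).erase β).card := by
      have := Finset.pred_card_le_card_erase
        (s := goodSet ((E.erase e).erase f) c' u (edeg E u)) (a := β)
      omega
    obtain ⟨α, hα⟩ := Finset.card_pos.mp this
    have hαβ : α ≠ β := (Finset.mem_erase.mp hα).1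
    have hαg : α ∈ goodSet ((E.erase e).erase f) c' u (edeg E u) := (Finset.mem_erase.mp hα).2
    -- w-conditions
    have hwcond : ∀ γ, 2 * (ecnt ((E.erase e).erase f) c' w γ + 1) ≤ edeg E w := by
      intro γ
      have := hval w γ (by omega)
      omega
    exact extend_two_core E w u v e f c' α β hef heE hfE hme hmf huv hval hαβ
      (mem_goodSet.mp hαg) (mem_goodSet.mp hβ) (Or.inl (hwcond α)) (Or.inl (hwcond β))
  -- now all degrees are at most 3
  have hsub : ∀ z, edeg E z ≤ 3 := by
    intro z
    by_contra hcon
    exact hbig ⟨z, by omega⟩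
  by_cases hdeg3 : ∃ w, edeg E w = 3
  · -- Case 3 : a vertex of degree exactly 3
    obtain ⟨w, hw3⟩ := hdeg3
    have hcard3 : (E.filter (fun e => w ∈ e)).card = 3 := hw3
    obtain ⟨e, f, g, hef, heg, hfg, hEw⟩ := Finset.card_eq_three.mp hcard3
    have heE : e ∈ E ∧ w ∈ e := by
      have : e ∈ E.filter (fun e' => w ∈ e') := by
        rw [hEw]; exact Finset.mem_insert_self _ _
      exact Finset.mem_filter.mp this
    have hfE : f ∈ E ∧ w ∈ f := by
      have : f ∈ E.filter (fun e' => w ∈ e') := by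
        rw [hEw]; exact Finset.mem_insert_of_mem (Finset.mem_insert_self _ _)
      exact Finset.mem_filter.mp this
    have hgE : g ∈ E ∧ w ∈ g := by
      have : g ∈ E.filter (fun e' => w ∈ e') := by
        rw [hEw]
        exact Finset.mem_insert_of_mem (Finset.mem_insert_of_mem (Finset.mem_singleton_self _))
      exact Finset.mem_filter.mp this
    obtain ⟨u, huw, hme⟩ := edge_at hnd heE.1 heE.2
    obtain ⟨v, hvw, hmf⟩ := edge_at hnd hfE.1 hfE.2
    have huv : u ≠ v := fun h => hef (Sym2.ext (fun z => by rw [hme z, hmf z, h]))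
    have hfEe : f ∈ E.erase e := Finset.mem_erase.mpr ⟨Ne.symm hef, hfE.1⟩
    have hgE' : g ∈ (E.erase e).erase f :=
      Finset.mem_erase.mpr ⟨Ne.symm hfg, Finset.mem_erase.mpr ⟨Ne.symm heg, hgE.1⟩⟩
    have hnd' : ∀ g' ∈ (E.erase e).erase f, ¬ g'.IsDiag := fun g' hg' =>
      hnd g' (Finset.mem_of_mem_erase (Finset.mem_of_mem_erase hg'))
    have hcard' : ((E.erase e).erase f).card = n - 2 := by
      rw [Finset.card_erase_of_mem hfEe, Finset.card_erase_of_mem heE.1, hcard]; omega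
    have hn2 : 2 ≤ n := by
      have := Finset.one_lt_card.mpr ⟨e, heE.1, f, hfE.1, hef⟩
      omega
    obtain ⟨c', hval⟩ := IH (n - 2) (by omega) _ hcard' hnd'
    have hue : u ∈ e := (hme u).mpr (Or.inr rfl)
    have hvf : v ∈ f := (hmf v).mpr (Or.inr rfl)
    have hunf : u ∉ f := by rw [hmf u]; push_neg; exact ⟨huw, huv⟩
    have hvne : v ∉ e := by rw [hme v]; push_neg; exact ⟨hvw, fun h => huv h.symm⟩
    have hdu : edeg ((E.erase e).erase f) u + 1 = edeg E u := by
      rw [edeg_erase_not_mem hunf, edeg_erase_mem heE.1 hue]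
    have hdv : edeg ((E.erase e).erase f) v + 1 = edeg E v := by
      rw [edeg_erase_mem hfEe hvf, edeg_erase_not_mem hvne]
    have hdw1 : edeg ((E.erase e).erase f) w = 1 := by
      have h1 := edeg_erase_mem hfEe (z := w) hfE.2
      have h2 := edeg_erase_mem heE.1 (z := w) heE.2
      omega
    have hEw' : ((E.erase e).erase f).filter (fun e' => w ∈ e') = {g} := by
      have hg : g ∈ ((E.erase e).erase f).filter (fun e' => w ∈ e') :=
        Finset.mem_filter.mpr ⟨hgE', hgE.2⟩
      have hc1 : (((E.erase e).erase f).filter (fun e' => w ∈ e')).card = 1 := hdw1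
      obtain ⟨t, ht⟩ := Finset.card_eq_one.mp hc1
      rw [ht] at hg ⊢
      rw [Finset.mem_singleton] at hg
      rw [hg]
    have hcntw : ∀ γ, ecnt ((E.erase e).erase f) c' w γ = if c' g = γ then 1 else 0 := by
      intro γ
      unfold ecnt
      rw [← Finset.filter_filter, hEw', Finset.filter_singleton]
      by_cases h : c' g = γ
      · rw [if_pos h, if_pos h]; simp
      · rw [if_neg h, if_neg h]; simp
    have hgu := goodSet_card_ge_two (E' := (E.erase e).erase f) (c' := c') (z := u)
      (D := edeg E u) hdu.symm
    have hgv := goodSet_card_ge_two (E' := (E.erase e).erase f) (c' := c') (z := v)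
      (D := edeg E v) hdv.symm
    have hAu : 0 < ((goodSet ((E.erase e).erase f) c' u (edeg E u)).erase (c' g)).card := by
      have := Finset.pred_card_le_card_erase
        (s := goodSet ((E.erase e).erase f) c' u (edeg E u)) (a := c' g)
      omega
    have hAv : 0 < ((goodSet ((E.erase e).erase f) c' v (edeg E v)).erase (c' g)).card := by
      have := Finset.pred_card_le_card_erase
        (s := goodSet ((E.erase e).erase f) c' v (edeg E v)) (a := c' g)
      omega
    obtain ⟨α0, hα0⟩ := Finset.card_pos.mp hAu
    obtain ⟨β0, hβ0⟩ := Finset.card_pos.mp hAv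
    by_cases hpick : ∃ α ∈ (goodSet ((E.erase e).erase f) c' u (edeg E u)).erase (c' g),
        ∃ β ∈ (goodSet ((E.erase e).erase f) c' v (edeg E v)).erase (c' g), α ≠ β
    · obtain ⟨α, hα, β, hβ, hαβ⟩ := hpick
      have hαγ0 : α ≠ c' g := (Finset.mem_erase.mp hα).1
      have hβγ0 : β ≠ c' g := (Finset.mem_erase.mp hβ).1
      refine extend_two_core E w u v e f c' α β hef heE.1 hfE.1 hme hmf huv hval hαβ
        (mem_goodSet.mp (Finset.mem_erase.mp hα).2) (mem_goodSet.mp (Finset.mem_erase.mp hβ).2)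
        (Or.inl ?_) (Or.inl ?_)
      · rw [hcntw α, if_neg (fun h => hαγ0 h.symm)]
        omega
      · rw [hcntw β, if_neg (fun h => hβγ0 h.symm)]
        omega
    · -- the stuck configuration
      push_neg at hpick
      have hβ0α0 : α0 = β0 := hpick α0 hα0 β0 hβ0
      have hAu_all : ∀ α ∈ (goodSet ((E.erase e).erase f) c' u (edeg E u)).erase (c' g),
          α = α0 := fun α hα => (hpick α hα β0 hβ0).trans hβ0α0.symm
      have hα0Av : α0 ∈ (goodSet ((E.erase e).erase f) c' v (edeg E v)).erase (c' g) := by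
        rw [hβ0α0]; exact hβ0
      have hα0γ0 : α0 ≠ c' g := (Finset.mem_erase.mp hα0).1
      have hα0gu : α0 ∈ goodSet ((E.erase e).erase f) c' u (edeg E u) :=
        (Finset.mem_erase.mp hα0).2
      have hα0gv : α0 ∈ goodSet ((E.erase e).erase f) c' v (edeg E v) :=
        (Finset.mem_erase.mp hα0Av).2
      have hγ0gu : c' g ∈ goodSet ((E.erase e).erase f) c' u (edeg E u) := by
        by_contra hng
        have heq := Finset.erase_eq_of_notMem hng
        obtain ⟨a1, ha1, a2, ha2, ha12⟩ := Finset.one_lt_card.mp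
          (by rw [heq]; omega :
            1 < ((goodSet ((E.erase e).erase f) c' u (edeg E u)).erase (c' g)).card)
        exact ha12 ((hAu_all a1 ha1).trans (hAu_all a2 ha2).symm)
      have hγ0gv : c' g ∈ goodSet ((E.erase e).erase f) c' v (edeg E v) := by
        by_contra hng
        have heq := Finset.erase_eq_of_notMem hng
        obtain ⟨a1, ha1, a2, ha2, ha12⟩ := Finset.one_lt_card.mp
          (by rw [heq]; omega :
            1 < ((goodSet ((E.erase e).erase f) c' v (edeg E v)).erase (c' g)).card)
        have e1 : a1 = α0 := (hpick α0 hα0 a1 ha1).symm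
        have e2 : a2 = α0 := (hpick α0 hα0 a2 ha2).symm
        exact ha12 (e1.trans e2.symm)
      have hpaircard : ((Finset.univ : Finset (Fin 4)) \ {α0, c' g}).card = 2 := by
        rw [Finset.card_sdiff_of_subset (Finset.subset_univ _), Finset.card_pair hα0γ0]
        simp
      obtain ⟨b1, b2, hb12, hB⟩ := Finset.card_eq_two.mp hpaircard
      have hb1B : b1 ∈ (Finset.univ : Finset (Fin 4)) \ {α0, c' g} := by
        rw [hB]; exact Finset.mem_insert_self _ _
      have hb2B : b2 ∈ (Finset.univ : Finset (Fin 4)) \ {α0, c' g} := by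
        rw [hB]; exact Finset.mem_insert_of_mem (Finset.mem_singleton_self _)
      have hb1' : b1 ≠ α0 ∧ b1 ≠ c' g := by
        have := (Finset.mem_sdiff.mp hb1B).2
        simp only [Finset.mem_insert, Finset.mem_singleton] at this
        push_neg at this
        exact this
      have hb2' : b2 ≠ α0 ∧ b2 ≠ c' g := by
        have := (Finset.mem_sdiff.mp hb2B).2
        simp only [Finset.mem_insert, Finset.mem_singleton] at this
        push_neg at this
        exact this
      have hbadu : ∀ b, b ≠ α0 → b ≠ c' g →
          b ∉ goodSet ((E.erase e).erase f) c' u (edeg E u) := by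
        intro b hbα hbγ hmem
        exact hbα (hAu_all b (Finset.mem_erase.mpr ⟨hbγ, hmem⟩))
      have hbadv : ∀ b, b ≠ α0 → b ≠ c' g →
          b ∉ goodSet ((E.erase e).erase f) c' v (edeg E v) := by
        intro b hbα hbγ hmem
        exact hbα ((hpick α0 hα0 b (Finset.mem_erase.mpr ⟨hbγ, hmem⟩))).symm
      have hfactsu : edeg E u = 3 ∧ ecnt ((E.erase e).erase f) c' u b1 = 1
          ∧ ecnt ((E.erase e).erase f) c' u (c' g) = 0 := by
        have h1 := bad_facts (hbadu b1 hb1'.1 hb1'.2)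
        have h2 := bad_facts (hbadu b2 hb2'.1 hb2'.2)
        have hpairsum : ecnt ((E.erase e).erase f) c' u b1
            + ecnt ((E.erase e).erase f) c' u b2 ≤ edeg ((E.erase e).erase f) u := by
          have hs := Finset.sum_le_sum_of_subset
            (Finset.subset_univ ({b1, b2} : Finset (Fin 4)))
            (f := fun γ => ecnt ((E.erase e).erase f) c' u γ)
          rw [Finset.sum_pair hb12, sum_ecnt] at hs
          exact hs
        have hsubu := hsub u
        have hγgood := mem_goodSet.mp hγ0gu
        omega
      have hfactsv : edeg E v = 3 ∧ ecnt ((E.erase e).erase f) c' v b1 = 1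
          ∧ ecnt ((E.erase e).erase f) c' v (c' g) = 0 := by
        have h1 := bad_facts (hbadv b1 hb1'.1 hb1'.2)
        have h2 := bad_facts (hbadv b2 hb2'.1 hb2'.2)
        have hpairsum : ecnt ((E.erase e).erase f) c' v b1
            + ecnt ((E.erase e).erase f) c' v b2 ≤ edeg ((E.erase e).erase f) v := by
          have hs := Finset.sum_le_sum_of_subset
            (Finset.subset_univ ({b1, b2} : Finset (Fin 4)))
            (f := fun γ => ecnt ((E.erase e).erase f) c' v γ)
          rw [Finset.sum_pair hb12, sum_ecnt] at hs
          exact hs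
        have hsubv := hsub v
        have hγgood := mem_goodSet.mp hγ0gv
        omega
      -- the Kempe graph on colors (c' g) and b1
      have hγb1 : c' g ≠ b1 := fun h => hb1'.2 h.symm
      have hα0b1 : α0 ≠ b1 := fun h => hb1'.1 h.symm
      have hdegH : ∀ z, (kgraph ((E.erase e).erase f) c' (c' g) b1).degree z ≤ 2 := by
        intro z
        rw [kgraph_degree ((E.erase e).erase f) hnd' c' hγb1 z]
        by_cases hz2 : 2 ≤ edeg ((E.erase e).erase f) z
        · have h1 := hval z (c' g) hz2
          have h2 := hval z b1 hz2
          have h3 : edeg ((E.erase e).erase f) z ≤ 3 := by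
            have h4 : (E.erase e).erase f ⊆ E := fun t ht =>
              Finset.mem_of_mem_erase (Finset.mem_of_mem_erase ht)
            exact le_trans (edeg_le_of_subset h4 z) (hsub z)
          omega
        · have := ecnt_pair_le ((E.erase e).erase f) c' z hγb1
          omega
      have hdegHu : (kgraph ((E.erase e).erase f) c' (c' g) b1).degree u = 1 := by
        rw [kgraph_degree ((E.erase e).erase f) hnd' c' hγb1 u]
        omega
      have hdegHv : (kgraph ((E.erase e).erase f) c' (c' g) b1).degree v = 1 := by
        rw [kgraph_degree ((E.erase e).erase f) hnd' c' hγb1 v]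
        omega
      have hdegHw : (kgraph ((E.erase e).erase f) c' (c' g) b1).degree w = 1 := by
        rw [kgraph_degree ((E.erase e).erase f) hnd' c' hγb1 w]
        rw [hcntw (c' g), if_pos rfl, hcntw b1, if_neg hγb1]
      have hno : ¬ ((kgraph ((E.erase e).erase f) c' (c' g) b1).Reachable w u
          ∧ (kgraph ((E.erase e).erase f) c' (c' g) b1).Reachable w v) := by
        rintro ⟨h1, h2⟩
        exact three_endpoints _ hdegH huv huw hvw hdegHu hdegHv hdegHw h1 h2
      have hval'' := kswap_valid ((E.erase e).erase f) hnd' c' hγb1 w hval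
      have hwreach : (kgraph ((E.erase e).erase f) c' (c' g) b1).Reachable w w :=
        SimpleGraph.Reachable.refl w
      have hcnt''wγ : ecnt ((E.erase e).erase f) (kswap ((E.erase e).erase f) c' (c' g) b1 w)
          w (c' g) = 0 := by
        rw [kswap_cnt_mem ((E.erase e).erase f) hnd' c' hγb1 hwreach, cswap_a,
          hcntw b1, if_neg hγb1]
      have hcnt''wα : ecnt ((E.erase e).erase f) (kswap ((E.erase e).erase f) c' (c' g) b1 w)
          w α0 = 0 := by
        rw [kswap_cnt_mem ((E.erase e).erase f) hnd' c' hγb1 hwreach,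
          cswap_other hα0γ0 hα0b1, hcntw α0, if_neg (fun h => hα0γ0 h.symm)]
      by_cases hru : (kgraph ((E.erase e).erase f) c' (c' g) b1).Reachable w u
      · have hrv : ¬ (kgraph ((E.erase e).erase f) c' (c' g) b1).Reachable w v :=
          fun h => hno ⟨hru, h⟩
        have hcnt''u : ecnt ((E.erase e).erase f) (kswap ((E.erase e).erase f) c' (c' g) b1 w)
            u α0 = ecnt ((E.erase e).erase f) c' u α0 := by
          rw [kswap_cnt_mem ((E.erase e).erase f) hnd' c' hγb1 hru, cswap_other hα0γ0 hα0b1]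
        have hcnt''v : ecnt ((E.erase e).erase f) (kswap ((E.erase e).erase f) c' (c' g) b1 w)
            v (c' g) = ecnt ((E.erase e).erase f) c' v (c' g) :=
          kswap_cnt_not_mem ((E.erase e).erase f) hnd' c' hrv (c' g)
        refine extend_two_core E w u v e f (kswap ((E.erase e).erase f) c' (c' g) b1 w)
          α0 (c' g) hef heE.1 hfE.1 hme hmf huv hval'' hα0γ0
          (Or.inl ?_) (Or.inl ?_) (Or.inl ?_) (Or.inl ?_)
        · rw [hcnt''u]
          have := mem_goodSet.mp hα0gu
          omega
        · rw [hcnt''v]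
          omega
        · rw [hcnt''wα]
          omega
        · rw [hcnt''wγ]
          omega
      · have hcnt''u : ecnt ((E.erase e).erase f) (kswap ((E.erase e).erase f) c' (c' g) b1 w)
            u (c' g) = ecnt ((E.erase e).erase f) c' u (c' g) :=
          kswap_cnt_not_mem ((E.erase e).erase f) hnd' c' hru (c' g)
        have hcnt''v : ecnt ((E.erase e).erase f) (kswap ((E.erase e).erase f) c' (c' g) b1 w)
            v α0 = ecnt ((E.erase e).erase f) c' v α0 := by
          by_cases hrv : (kgraph ((E.erase e).erase f) c' (c' g) b1).Reachable w v
          · rw [kswap_cnt_mem ((E.erase e).erase f) hnd' c' hγb1 hrv, cswap_other hα0γ0 hα0b1]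
          · exact kswap_cnt_not_mem ((E.erase e).erase f) hnd' c' hrv α0
        refine extend_two_core E w u v e f (kswap ((E.erase e).erase f) c' (c' g) b1 w)
          (c' g) α0 hef heE.1 hfE.1 hme hmf huv hval'' (fun h => hα0γ0 h.symm)
          (Or.inl ?_) (Or.inl ?_) (Or.inl ?_) (Or.inl ?_)
        · rw [hcnt''u]
          omega
        · rw [hcnt''v]
          have := mem_goodSet.mp hα0gv
          omega
        · rw [hcnt''wγ]
          omega
        · rw [hcnt''wα]
          omega
  · -- Case 2 : all degrees at most 2
    have hsmall : ∀ z, edeg E z ≤ 2 := by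
      intro z
      have h2 : ¬ edeg E z = 3 := fun h => hdeg3 ⟨z, h⟩
      have := hsub z
      omega
    obtain ⟨e, heE⟩ := Finset.nonempty_iff_ne_empty.mpr hE0
    have hue : e.out.1 ∈ e := Sym2.out_fst_mem e
    obtain ⟨v, hvu, hme⟩ := edge_at hnd heE hue
    have hcard' : (E.erase e).card = n - 1 := by
      rw [Finset.card_erase_of_mem heE, hcard]
    have hn1 : 1 ≤ n := by
      have := Finset.card_pos.mpr ⟨e, heE⟩
      omega
    have hnd' : ∀ g' ∈ E.erase e, ¬ g'.IsDiag := fun g' hg' =>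
      hnd g' (Finset.mem_of_mem_erase hg')
    obtain ⟨c', hval⟩ := IH (n - 1) (by omega) _ hcard' hnd'
    have hue' : e.out.1 ∈ e := (hme e.out.1).mpr (Or.inl rfl)
    have hve : v ∈ e := (hme v).mpr (Or.inr rfl)
    have hdu : edeg (E.erase e) e.out.1 + 1 = edeg E e.out.1 := edeg_erase_mem heE hue'
    have hdv : edeg (E.erase e) v + 1 = edeg E v := edeg_erase_mem heE hve
    have hgu := goodSet_card_ge_three (E' := E.erase e) (c' := c') (z := e.out.1)
      (D := edeg E e.out.1) hdu.symm (hsmall e.out.1)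
    have hgv := goodSet_card_ge_three (E' := E.erase e) (c' := c') (z := v)
      (D := edeg E v) hdv.symm (hsmall v)
    have hcap : 0 < ((goodSet (E.erase e) c' e.out.1 (edeg E e.out.1))
        ∩ (goodSet (E.erase e) c' v (edeg E v))).card := by
      have hun := Finset.card_inter_add_card_union
        (goodSet (E.erase e) c' e.out.1 (edeg E e.out.1)) (goodSet (E.erase e) c' v (edeg E v))
      have hle : ((goodSet (E.erase e) c' e.out.1 (edeg E e.out.1))
          ∪ (goodSet (E.erase e) c' v (edeg E v))).card ≤ 4 := by
        have h4 := Finset.card_le_univ ((goodSet (E.erase e) c' e.out.1 (edeg E e.out.1))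
          ∪ (goodSet (E.erase e) c' v (edeg E v)))
        simpa using h4
      omega
    obtain ⟨α, hα⟩ := Finset.card_pos.mp hcap
    exact extend_one_core E e.out.1 v e c' α heE
      hme hval
      (mem_goodSet.mp (Finset.mem_inter.mp hα).1) (mem_goodSet.mp (Finset.mem_inter.mp hα).2)

end AMEC

open SimpleGraph

/-- Almost majority edge coloring: the majority condition is required only at vertices of
degree at least 2. -/
def IsAlmostMajorityEdgeColoring {V : Type*} [Fintype V] [DecidableEq V]
    (G : SimpleGraph V) [DecidableRel G.Adj] {k : ℕ} (c : Sym2 V → Fin k) : Prop :=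
  ∀ u : V, ∀ α : Fin k, 2 ≤ G.degree u →
    2 * ((G.neighborFinset u).filter (fun v => c s(u, v) = α)).card ≤ G.degree u

/-- Every finite simple graph has an almost majority edge coloring with 4 colors. -/
theorem almost_majority_four_colors {V : Type*} [Fintype V] [DecidableEq V]
    (G : SimpleGraph V) [DecidableRel G.Adj] :
    ∃ c : Sym2 V → Fin 4, IsAlmostMajorityEdgeColoring G c := by
  have hnd : ∀ e ∈ G.edgeFinset, ¬ e.IsDiag := fun e he =>
    G.not_isDiag_of_mem_edgeSet (SimpleGraph.mem_edgeFinset.mp he)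
  obtain ⟨c, hc⟩ := AMEC.main_lemma (G.edgeFinset.card) G.edgeFinset rfl hnd
  refine ⟨c, ?_⟩
  intro u α h2
  have hdeg : AMEC.edeg G.edgeFinset u = G.degree u := by
    rw [AMEC.edeg_eq_card G.edgeFinset hnd u, degree, neighborFinset_eq_filter]
    congr 1
    ext y
    simp only [Finset.mem_filter, Finset.mem_univ, true_and,
      SimpleGraph.mem_edgeFinset, SimpleGraph.mem_edgeSet]
    constructor
    · exact fun h => h.2
    · exact fun h => ⟨h.ne, h⟩
  have hcnt : AMEC.ecnt G.edgeFinset c u α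
      = ((G.neighborFinset u).filter (fun v => c s(u, v) = α)).card := by
    rw [AMEC.ecnt_eq_card G.edgeFinset hnd c u α, neighborFinset_eq_filter,
      Finset.filter_filter]
    congr 1
    ext y
    simp only [Finset.mem_filter, Finset.mem_univ, true_and,
      SimpleGraph.mem_edgeFinset, SimpleGraph.mem_edgeSet]
    constructor
    · exact fun h => ⟨h.2.1, h.2.2⟩
    · exact fun h => ⟨h.1.ne, h.1, h.2⟩
  rw [← hcnt, ← hdeg]
  exact hc u α (by rw [hdeg]; exact h2)
end

section
/- Let G be a finite simple graph with minimum degree at least 2 and let H be a connected spanning subgraph of G equipped with an edge coloring with a colors such that for every vertex v of H and every color α, twice the number of edges of H incident with v having color α is at most the degree of v in G. Suppose the graph G − H (on the same vertex set, with edge set E(G) \ E(H)) admits a weak majority edge coloring with b colors. Then the coloring of E(G) obtained by using the a colors on E(H) and b new colors on E(G) \ E(H) is a majority edge coloring of G with a + b colors; in particular G has a majority edge coloring with a + b colors. -/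
open SimpleGraph

/-- Majority edge coloring. -/
def IsMajorityEdgeColoring {V : Type*} [Fintype V] [DecidableEq V]
    (G : SimpleGraph V) [DecidableRel G.Adj] {k : ℕ} (c : Sym2 V → Fin k) : Prop :=
  ∀ u : V, ∀ α : Fin k,
    2 * ((G.neighborFinset u).filter (fun v => c s(u, v) = α)).card ≤ G.degree u

/-- Let `G` have minimum degree at least 2, and let `H` be a connected spanning subgraph of `G`
with an `a`-edge-coloring `cH` such that every color appears at each vertex `v` on at most
`deg_G(v)/2` edges of `H`. If `G - H` has a weak majority edge coloring `cK` with `b` colors,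
then the combined coloring (using the `a` colors on `E(H)` and `b` new colors on
`E(G) \ E(H)`) is a majority edge coloring of `G` with `a + b` colors. -/
theorem majority_of_combined_coloring {V : Type*} [Fintype V] [DecidableEq V]
    (G H : SimpleGraph V) [DecidableRel G.Adj] [DecidableRel H.Adj]
    (hsub : H ≤ G) (hδ : ∀ v : V, 2 ≤ G.degree v) (hHconn : H.Connected)
    {a b : ℕ} (cH : Sym2 V → Fin a)
    (hcH : ∀ v : V, ∀ α : Fin a,
      2 * ((H.neighborFinset v).filter (fun u => cH s(v, u) = α)).card ≤ G.degree v)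
    (cK : Sym2 V → Fin b)
    (hcK : ∀ v : V, ∀ β : Fin b,
      (((G \ H).neighborFinset v).filter (fun u => cK s(v, u) = β)).card
        ≤ ((G \ H).degree v + 1) / 2)
    (c : Sym2 V → Fin (a + b))
    (hcEq₁ : ∀ u v : V, H.Adj u v → c s(u, v) = Fin.castAdd b (cH s(u, v)))
    (hcEq₂ : ∀ u v : V, G.Adj u v → ¬ H.Adj u v → c s(u, v) = Fin.natAdd a (cK s(u, v))) :
    IsMajorityEdgeColoring G c := by
  intro u α
  have hdeg : H.degree u + (G \ H).degree u = G.degree u := by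
    rw [degree, degree, degree, ← Finset.card_union_of_disjoint]
    · congr 1; ext v; simp only [Finset.mem_union, mem_neighborFinset, sdiff_adj]
      constructor
      · rintro (h | ⟨h, _⟩)
        · exact hsub h
        · exact h
      · intro h
        by_cases hH : H.Adj u v
        · exact Or.inl hH
        · exact Or.inr ⟨h, hH⟩
    · simp only [Finset.disjoint_left, mem_neighborFinset, sdiff_adj]
      tauto
  by_cases hα : (α : ℕ) < a
  · -- old color
    calc 2 * ((G.neighborFinset u).filter (fun v => c s(u, v) = α)).card
        ≤ 2 * ((H.neighborFinset u).filter (fun v => cH s(u, v) = ⟨α, hα⟩)).card := by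
          apply Nat.mul_le_mul_left
          apply Finset.card_le_card
          intro v hv
          simp only [Finset.mem_filter, mem_neighborFinset] at hv ⊢
          obtain ⟨hGadj, hc⟩ := hv
          by_cases hH : H.Adj u v
          · refine ⟨hH, ?_⟩
            rw [hcEq₁ u v hH] at hc
            apply Fin.ext
            simpa using congrArg Fin.val hc
          · exfalso
            rw [hcEq₂ u v hGadj hH] at hc
            have := congrArg Fin.val hc
            simp [Fin.natAdd] at this
            omega
      _ ≤ G.degree u := hcH u ⟨α, hα⟩
  · -- new color
    push_neg at hα
    have hβ : (α : ℕ) - a < b := by omega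
    have hcard : ((G.neighborFinset u).filter (fun v => c s(u, v) = α)).card
        ≤ (((G \ H).neighborFinset u).filter (fun v => cK s(u, v) = ⟨(α : ℕ) - a, hβ⟩)).card := by
      apply Finset.card_le_card
      intro v hv
      simp only [Finset.mem_filter, mem_neighborFinset, sdiff_adj] at hv ⊢
      obtain ⟨hGadj, hc⟩ := hv
      by_cases hH : H.Adj u v
      · exfalso
        rw [hcEq₁ u v hH] at hc
        have := congrArg Fin.val hc
        simp [Fin.castAdd, Fin.castLE] at this
        have : (cH s(u, v)).val < a := (cH s(u, v)).isLt
        omega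
      · refine ⟨⟨hGadj, hH⟩, ?_⟩
        rw [hcEq₂ u v hGadj hH] at hc
        have := congrArg Fin.val hc
        simp [Fin.natAdd] at this
        apply Fin.ext
        simp
        omega
    have hHdeg : 1 ≤ H.degree u := by
      have hexv : ∃ v, G.Adj u v := by
        rw [← degree_pos_iff_exists_adj]
        have := hδ u; omega
      obtain ⟨v, hv⟩ := hexv
      have huv : u ≠ v := G.ne_of_adj hv
      obtain ⟨w⟩ := hHconn u v
      cases w with
      | nil => exact absurd rfl huv
      | cons h p => exact (H.degree_pos_iff_exists_adj u).mpr ⟨_, h⟩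
    have hk := hcK u ⟨(α : ℕ) - a, hβ⟩
    omega
end

section
/- Every finite simple graph of minimum degree at least 4 which has a connected asymmetric spanning subgraph of minimum degree at least 4 admits a majority distinguishing edge coloring with 6 colors; that is, M'_D(G) ≤ 6 for every such graph G. -/
open SimpleGraph

namespace MDC

variable {V : Type*} [DecidableEq V]

def mdeg (E : Multiset (Sym2 V)) (v : V) : ℕ := E.countP (fun e => v ∈ e)

@[simp] lemma mdeg_zero (v : V) : mdeg (0 : Multiset (Sym2 V)) v = 0 := rfl

@[simp] lemma mdeg_add (A B : Multiset (Sym2 V)) (v : V) :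
    mdeg (A + B) v = mdeg A v + mdeg B v := Multiset.countP_add _ _ _

@[simp] lemma mdeg_cons (e : Sym2 V) (E : Multiset (Sym2 V)) (v : V) :
    mdeg (e ::ₘ E) v = (if v ∈ e then 1 else 0) + mdeg E v := by
  simp only [mdeg, Multiset.countP_cons]
  split <;> omega

lemma mdeg_mono {A B : Multiset (Sym2 V)} (h : A ≤ B) (v : V) : mdeg A v ≤ mdeg B v := by
  obtain ⟨C, rfl⟩ := Multiset.le_iff_exists_add.mp h
  simp

lemma mdeg_sub {B E : Multiset (Sym2 V)} (h : B ≤ E) (v : V) :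
    mdeg (E - B) v = mdeg E v - mdeg B v := by
  have h2 : E - B + B = E := tsub_add_cancel_of_le h
  have := mdeg_add (E - B) B v
  rw [h2] at this
  omega

lemma exists_mem_of_mdeg_pos {E : Multiset (Sym2 V)} {v : V} (h : 0 < mdeg E v) :
    ∃ e ∈ E, v ∈ e := Multiset.countP_pos.mp h

lemma cons_le_of_mem_sub {B E : Multiset (Sym2 V)} {e : Sym2 V} (hB : B ≤ E)
    (he : e ∈ E - B) : e ::ₘ B ≤ E := by
  rw [Multiset.le_iff_count]
  intro x
  have h1 := Multiset.le_iff_count.mp hB x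
  have h2 := Multiset.count_pos.mpr he
  rw [Multiset.count_sub] at h2
  rw [Multiset.count_cons]
  by_cases hx : x = e
  · subst hx; simp; omega
  · simp [hx]; omega


set_option linter.unusedSectionVars false

def pE : List V → Multiset (Sym2 V)
  | [] => 0
  | [_] => 0
  | a :: b :: t => s(a, b) ::ₘ pE (b :: t)

@[simp] lemma pE_nil : pE ([] : List V) = 0 := rfl
@[simp] lemma pE_single (a : V) : pE [a] = 0 := rfl
@[simp] lemma pE_cons2 (a b : V) (t : List V) :
    pE (a :: b :: t) = s(a, b) ::ₘ pE (b :: t) := rfl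

lemma mdeg_pE_of_not_mem : ∀ (l : List V) (v : V), v ∉ l → mdeg (pE l) v = 0
  | [], v, _ => rfl
  | [_], v, _ => rfl
  | a :: b :: t, v, h => by
    have hv : v ∉ b :: t := fun hh => h (List.mem_cons_of_mem _ hh)
    rw [pE_cons2, mdeg_cons, mdeg_pE_of_not_mem (b :: t) v hv]
    have hva : v ≠ a := fun hh => h (hh ▸ List.mem_cons_self)
    have hvb : v ≠ b := fun hh => hv (hh ▸ List.mem_cons_self)
    simp [Sym2.mem_iff, hva, hvb]

lemma mdeg_pE_head (a : V) (t : List V) (h : a ∉ t) :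
    mdeg (pE (a :: t)) a = if t.isEmpty then 0 else 1 := by
  cases t with
  | nil => rfl
  | cons b t' =>
    rw [pE_cons2, mdeg_cons, mdeg_pE_of_not_mem _ a h]
    simp [Sym2.mem_iff]

lemma mdeg_pE_getLast : ∀ (a b : V) (t : List V), (a :: b :: t).Nodup →
    mdeg (pE (a :: b :: t)) ((a :: b :: t).getLast (by simp)) = 1
  | a, b, [], h => by
    show mdeg (s(a,b) ::ₘ 0) b = 1
    rw [mdeg_cons]
    simp [Sym2.mem_iff]
  | a, b, c :: t', h => by
    have hrec := mdeg_pE_getLast b c t' h.of_cons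
    have hgl : (a :: b :: c :: t').getLast (by simp) = (b :: c :: t').getLast (by simp) := by
      rw [List.getLast_cons]
    rw [hgl, pE_cons2, mdeg_cons, hrec]
    set w := (b :: c :: t').getLast (by simp) with hw
    have hwmem : w ∈ b :: c :: t' := List.getLast_mem _
    have ha : a ∉ b :: c :: t' := (List.nodup_cons.mp h).1
    have hb : b ∉ c :: t' := (List.nodup_cons.mp h.of_cons).1
    have hwa : w ≠ a := fun hh => ha (hh ▸ hwmem)
    have hwmem2 : w ∈ c :: t' := by
      have hgl2 : (b :: c :: t').getLast (by simp) = (c :: t').getLast (by simp) := by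
        rw [List.getLast_cons]
      rw [hw, hgl2]
      exact List.getLast_mem _
    have hwb : w ≠ b := fun hh => hb (hh ▸ hwmem2)
    simp [Sym2.mem_iff, hwa, hwb]

lemma mdeg_pE_int : ∀ (a : V) (t : List V) (v : V), (a :: t).Nodup → v ∈ t →
    v ≠ (a :: t).getLast (by simp) → mdeg (pE (a :: t)) v = 2
  | a, [], v, h, hv, _ => absurd hv List.not_mem_nil
  | a, b :: t', v, h, hv, hlast => by
    have ha : a ∉ b :: t' := (List.nodup_cons.mp h).1
    have hgl : (a :: b :: t').getLast (by simp) = (b :: t').getLast (by simp) := by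
      rw [List.getLast_cons]
    rw [hgl] at hlast
    rw [pE_cons2, mdeg_cons]
    have hva : v ≠ a := fun hh => ha (hh ▸ hv)
    by_cases hvb : v = b
    · subst hvb
      cases t' with
      | nil => exact absurd rfl hlast
      | cons c t'' =>
        have : mdeg (pE (v :: c :: t'')) v = 1 := by
          rw [mdeg_pE_head v (c :: t'') (List.nodup_cons.mp h.of_cons).1]
          rfl
        rw [this]
        simp [Sym2.mem_iff]
    · have hvt : v ∈ t' := by
        rcases List.mem_cons.mp hv with h1 | h1
        · exact absurd h1 hvb
        · exact h1
      rw [mdeg_pE_int b t' v h.of_cons hvt hlast]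
      simp [Sym2.mem_iff, hva, hvb]

lemma pE_split : ∀ (l : List V), l.Nodup →
    ∃ A B, A + B = pE l ∧ ∀ v, mdeg A v ≤ 1 ∧ mdeg B v ≤ 1
  | [], _ => ⟨0, 0, by simp, fun v => by simp⟩
  | [_], _ => ⟨0, 0, by simp, fun v => by simp⟩
  | a :: b :: t, h => by
    obtain ⟨A, B, hsum, hb⟩ := pE_split (b :: t) h.of_cons
    have ha : a ∉ b :: t := (List.nodup_cons.mp h).1
    have hA0 : mdeg A a = 0 ∧ mdeg B a = 0 := by
      have h1 : mdeg A a + mdeg B a = mdeg (pE (b :: t)) a := by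
        rw [← hsum, mdeg_add]
      rw [mdeg_pE_of_not_mem _ _ ha] at h1
      omega
    have hheadb : mdeg A b + mdeg B b ≤ 1 := by
      have h1 : mdeg A b + mdeg B b = mdeg (pE (b :: t)) b := by
        rw [← hsum, mdeg_add]
      rw [mdeg_pE_head b t (List.nodup_cons.mp h.of_cons).1] at h1
      split at h1 <;> omega
    by_cases hc : mdeg A b = 0
    · refine ⟨s(a, b) ::ₘ A, B, by rw [Multiset.cons_add, hsum, pE_cons2], fun v => ?_⟩
      rw [mdeg_cons]
      have := hb v
      by_cases hva : v = a
      · subst hva; simp [Sym2.mem_iff, hA0.1, hA0.2]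
      · by_cases hvb : v = b
        · subst hvb; simp [Sym2.mem_iff, hc]; omega
        · simp [Sym2.mem_iff, hva, hvb]; omega
    · have hcB : mdeg B b = 0 := by omega
      refine ⟨A, s(a, b) ::ₘ B, by rw [Multiset.add_cons, hsum, pE_cons2], fun v => ?_⟩
      rw [mdeg_cons]
      have := hb v
      by_cases hva : v = a
      · subst hva; simp [Sym2.mem_iff, hA0.1, hA0.2]
      · by_cases hvb : v = b
        · subst hvb; simp [Sym2.mem_iff, hcB]; omega
        · simp [Sym2.mem_iff, hva, hvb]; omega

def cycM (a b : V) (t : List V) : Multiset (Sym2 V) :=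
  s((a :: b :: t).getLast (by simp), a) ::ₘ pE (a :: b :: t)

lemma mdeg_cycM (a b : V) (t : List V) (h : (a :: b :: t).Nodup) (v : V) :
    mdeg (cycM a b t) v = if v ∈ a :: b :: t then 2 else 0 := by
  have hcyc : cycM a b t = s((b :: t).getLast (by simp), a) ::ₘ pE (a :: b :: t) := rfl
  set w := (b :: t).getLast (by simp) with hw
  have hwmem : w ∈ b :: t := List.getLast_mem _
  have ha : a ∉ b :: t := (List.nodup_cons.mp h).1
  have hwa : w ≠ a := fun hh => ha (hh ▸ hwmem)
  rw [hcyc, mdeg_cons]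
  by_cases hvl : v ∈ a :: b :: t
  · simp only [hvl, if_true]
    by_cases hva : v = a
    · subst hva
      rw [mdeg_pE_head v (b :: t) ha]
      simp [Sym2.mem_iff]
    · by_cases hvw : v = w
      · subst hvw
        have : mdeg (pE (a :: b :: t)) w = 1 := mdeg_pE_getLast a b t h
        rw [this]
        simp [Sym2.mem_iff]
      · have hvbt : v ∈ b :: t := by
          rcases List.mem_cons.mp hvl with h1 | h1
          · exact absurd h1 hva
          · exact h1
        have : mdeg (pE (a :: b :: t)) v = 2 := mdeg_pE_int a (b :: t) v h hvbt hvw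
        rw [this]
        simp [Sym2.mem_iff, hva, hvw]
  · have hva : v ≠ a := fun hh => hvl (hh ▸ List.mem_cons_self)
    have hvw : v ≠ w := fun hh => hvl (hh ▸ List.mem_cons_of_mem _ hwmem)
    rw [mdeg_pE_of_not_mem _ _ hvl]
    simp [Sym2.mem_iff, hva, hvw, hvl]

lemma cycM_split (a b : V) (t : List V) (h : (a :: b :: t).Nodup) :
    ∃ CA CB, CA + CB = cycM a b t ∧ (∀ v, v ≠ a → mdeg CA v ≤ 1 ∧ mdeg CB v ≤ 1) ∧
      mdeg CA a ≤ 2 ∧ mdeg CB a ≤ 1 := by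
  obtain ⟨A, B, hsum, hb⟩ := pE_split (a :: b :: t) h
  have hcyc : cycM a b t = s((b :: t).getLast (by simp), a) ::ₘ pE (a :: b :: t) := rfl
  set w := (b :: t).getLast (by simp) with hw
  have hwsum : mdeg A w + mdeg B w = 1 := by
    have h1 : mdeg A w + mdeg B w = mdeg (pE (a :: b :: t)) w := by
      rw [← hsum, mdeg_add]
    rw [h1]
    exact mdeg_pE_getLast a b t h
  have hwmem : w ∈ b :: t := List.getLast_mem _
  have ha : a ∉ b :: t := (List.nodup_cons.mp h).1
  have hwa : w ≠ a := fun hh => ha (hh ▸ hwmem)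
  by_cases hc : mdeg A w = 0
  · refine ⟨s(w, a) ::ₘ A, B, by rw [Multiset.cons_add, hsum, hcyc], fun v hva => ?_, ?_, ?_⟩
    · rw [mdeg_cons]
      have := hb v
      by_cases hvw : v = w
      · subst hvw; simp [Sym2.mem_iff, hc]; omega
      · simp [Sym2.mem_iff, hvw, hva]; omega
    · rw [mdeg_cons]
      have := (hb a).1
      simp [Sym2.mem_iff]; omega
    · exact (hb a).2
  · have hcB : mdeg B w = 0 := by omega
    refine ⟨s(w, a) ::ₘ B, A, by
        rw [Multiset.cons_add, add_comm B A, hsum, hcyc], fun v hva => ?_, ?_, ?_⟩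
    · rw [mdeg_cons]
      have := hb v
      by_cases hvw : v = w
      · subst hvw; simp [Sym2.mem_iff, hcB]; omega
      · simp [Sym2.mem_iff, hvw, hva]; omega
    · rw [mdeg_cons]
      have := (hb a).2
      simp [Sym2.mem_iff]; omega
    · exact (hb a).1

lemma pE_tail_le (x : V) (l : List V) : pE l ≤ pE (x :: l) := by
  cases l with
  | nil => simp
  | cons y t => rw [pE_cons2]; exact Multiset.le_cons_self _ _

lemma pE_suffix_le (l₁ l₂ : List V) : pE l₂ ≤ pE (l₁ ++ l₂) := by
  induction l₁ with
  | nil => simp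
  | cons x l₁ ih => exact le_trans ih (by rw [List.cons_append]; exact pE_tail_le x _)

lemma pE_append_singleton : ∀ (l : List V) (hl : l ≠ []) (y : V),
    pE (l ++ [y]) = s(l.getLast hl, y) ::ₘ pE l
  | [], hl, y => absurd rfl hl
  | [x], _, y => by simp
  | a :: b :: t, _, y => by
    have ih := pE_append_singleton (b :: t) (by simp) y
    show s(a, b) ::ₘ pE ((b :: t) ++ [y]) =
      s((b :: t).getLast (by simp), y) ::ₘ (s(a, b) ::ₘ pE (b :: t))
    rw [ih, Multiset.cons_swap]

lemma getLast_eq_of_append {l l₁ l₂ : List V} {y : V} (h : l = l₁ ++ y :: l₂)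
    (hl : l ≠ []) : l.getLast hl = (y :: l₂).getLast (by simp) := by
  subst h
  exact List.getLast_append_of_ne_nil _ (by simp)

lemma cyc_aux [Fintype V] (E : Multiset (Sym2 V)) (hd : ∀ e ∈ E, ¬ e.IsDiag)
    (hno : ∀ w, mdeg E w ≠ 1) :
    ∀ (n : ℕ) (a b : V) (t : List V), (a :: b :: t).Nodup → pE (a :: b :: t) ≤ E →
      Fintype.card V < (a :: b :: t).length + n →
      ∃ a' b' t', (a' :: b' :: t').Nodup ∧ cycM a' b' t' ≤ E := by
  intro n
  induction n with
  | zero =>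
    intro a b t h hle hlen
    have := h.length_le_card
    omega
  | succ n ih =>
    intro a b t h hle hlen
    set l := a :: b :: t with hl
    have hlne : l ≠ [] := by simp [hl]
    set w := l.getLast hlne with hw
    have hpw : mdeg (pE l) w = 1 := mdeg_pE_getLast a b t h
    have hEw : 2 ≤ mdeg E w := by
      have h1 : mdeg (pE l) w ≤ mdeg E w := mdeg_mono hle w
      have := hno w
      omega
    have hsub : 0 < mdeg (E - pE l) w := by
      rw [mdeg_sub hle]
      omega
    obtain ⟨f, hfmem, hwf⟩ := exists_mem_of_mdeg_pos hsub
    set y := Sym2.Mem.other hwf with hy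
    have hfy : s(w, y) = f := Sym2.other_spec hwf
    have hyw : y ≠ w := by
      intro hh
      apply hd f (Multiset.mem_of_le (tsub_le_self) hfmem)
      rw [← hfy, hh]
      exact Sym2.mk_isDiag_iff.mpr rfl
    by_cases hyl : y ∈ l
    · -- found a cycle
      obtain ⟨l₁, l₂, hsplit⟩ := List.append_of_mem hyl
      have hgl2 : w = (y :: l₂).getLast (by simp) := by
        rw [hw]
        exact getLast_eq_of_append hsplit hlne
      have hl2ne : l₂ ≠ [] := by
        intro hh
        apply hyw
        subst hh
        rw [hgl2]
        rfl
      obtain ⟨c, t₂, rfl⟩ := List.exists_cons_of_ne_nil hl2ne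
      refine ⟨y, c, t₂, ?_, ?_⟩
      · have hsub2 : (y :: c :: t₂).Sublist l := by
          rw [hsplit]
          exact List.sublist_append_right l₁ _
        exact h.sublist hsub2
      · have hcycdef : cycM y c t₂ = s((y :: c :: t₂).getLast (by simp), y) ::ₘ pE (y :: c :: t₂) := rfl
        have hglc : (y :: c :: t₂).getLast (by simp) = w := hgl2.symm
        have hpele : pE (y :: c :: t₂) ≤ pE l := by
          rw [hsplit]
          exact pE_suffix_le l₁ _
        have hfmem2 : f ∈ E - pE (y :: c :: t₂) :=
          Multiset.mem_of_le (tsub_le_tsub_left hpele E) hfmem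
        rw [hcycdef, hglc, hfy]
        exact cons_le_of_mem_sub (le_trans hpele hle) hfmem2
    · -- extend the path
      have h' : (a :: b :: (t ++ [y])).Nodup := by
        have : l ++ [y] = a :: b :: (t ++ [y]) := by simp [hl]
        rw [← this]
        rw [List.nodup_append]
        exact ⟨h, List.nodup_singleton y, by simp [hyl, List.disjoint_singleton]; exact fun x hx hxy => hyl (hxy ▸ hx)⟩
      have hpe : pE (a :: b :: (t ++ [y])) = s(w, y) ::ₘ pE l := by
        have h1 := pE_append_singleton l hlne y
        have h2 : l ++ [y] = a :: b :: (t ++ [y]) := by simp [hl]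
        rw [← h2, h1, ← hw]
      have hle' : pE (a :: b :: (t ++ [y])) ≤ E := by
        rw [hpe, hfy]
        exact cons_le_of_mem_sub hle hfmem
      have hlen' : Fintype.card V < (a :: b :: (t ++ [y])).length + n := by
        simp only [List.length_cons, List.length_append, List.length_singleton]
        simp only [hl, List.length_cons] at hlen
        omega
      exact ih a b (t ++ [y]) h' hle' hlen'

lemma exists_leaf_or_cycM [Fintype V] (E : Multiset (Sym2 V)) (hd : ∀ e ∈ E, ¬ e.IsDiag)
    (h0 : E ≠ 0) :
    (∃ w, mdeg E w = 1) ∨ ∃ a b t, (a :: b :: t).Nodup ∧ cycM a b t ≤ E := by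
  by_cases hleaf : ∃ w, mdeg E w = 1
  · exact Or.inl hleaf
  · right
    push_neg at hleaf
    obtain ⟨e, heE⟩ := Multiset.exists_mem_of_ne_zero h0
    induction e using Sym2.ind with
    | _ x y =>
      have hxy : x ≠ y := fun hh => hd _ heE (Sym2.mk_isDiag_iff.mpr hh)
      have hpe : pE [x, y] ≤ E := by
        show s(x, y) ::ₘ 0 ≤ E
        simpa using heE
      exact cyc_aux E hd hleaf (Fintype.card V) x y []
        (by simp [hxy]) hpe (by simp only [List.length_cons, List.length_nil]; omega)

theorem msplit [Fintype V] (E : Multiset (Sym2 V)) :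
    ∃ A B, A + B = E ∧ ∀ v, 2 * mdeg A v ≤ mdeg E v + 2 ∧ 2 * mdeg B v ≤ mdeg E v + 2 := by
  suffices h : ∀ (n : ℕ) (E : Multiset (Sym2 V)), E.card ≤ n →
      ∃ A B, A + B = E ∧ ∀ v, 2 * mdeg A v ≤ mdeg E v + 2 ∧ 2 * mdeg B v ≤ mdeg E v + 2 by
    exact h E.card E le_rfl
  intro n
  induction n with
  | zero =>
    intro E hE
    have h0 : E = 0 := Multiset.card_eq_zero.mp (Nat.le_zero.mp hE)
    exact ⟨0, 0, by simp [h0], fun v => by simp⟩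
  | succ n ih =>
    intro E hE
    by_cases h0 : E = 0
    · exact ⟨0, 0, by simp [h0], fun v => by simp [h0]⟩
    by_cases hdiag : ∃ e ∈ E, e.IsDiag
    · obtain ⟨e, heE, hdg⟩ := hdiag
      obtain ⟨x, hex⟩ : ∃ x, e = s(x, x) := by
        induction e using Sym2.ind with
        | _ u v => exact ⟨u, by rw [Sym2.mk_isDiag_iff.mp hdg]⟩
      obtain ⟨A, B, hs, hb⟩ := ih (E.erase e) (by
        have := Multiset.card_erase_lt_of_mem heE
        omega)
      have hcons : e ::ₘ E.erase e = E := Multiset.cons_erase heE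
      have hdegE : ∀ v, mdeg E v = (if v ∈ e then 1 else 0) + mdeg (E.erase e) v := by
        intro v
        conv_lhs => rw [← hcons]
        rw [mdeg_cons]
      have hsx : mdeg A x + mdeg B x = mdeg (E.erase e) x := by
        rw [← hs, mdeg_add]
      have hmemx : ∀ v, (v ∈ e) ↔ v = x := by
        intro v
        rw [hex]
        simp [Sym2.mem_iff]
      by_cases hside : 2 * mdeg A x ≤ mdeg (E.erase e) x
      · refine ⟨e ::ₘ A, B, by rw [Multiset.cons_add, hs, hcons], fun v => ?_⟩
        have h1 := hb v
        have h2 := hdegE v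
        rw [mdeg_cons]
        by_cases hvx : v = x
        · subst hvx
          simp only [(hmemx v).mpr rfl] at h2 ⊢
          simp only [if_true] at h2 ⊢
          omega
        · have : ¬ (v ∈ e) := fun hh => hvx ((hmemx v).mp hh)
          simp only [this, if_false] at h2 ⊢
          omega
      · have hsideB : 2 * mdeg B x ≤ mdeg (E.erase e) x := by
          have := (hb x).1
          have := (hb x).2
          omega
        refine ⟨A, e ::ₘ B, by rw [Multiset.add_cons, hs, hcons], fun v => ?_⟩
        have h1 := hb v
        have h2 := hdegE v
        rw [mdeg_cons]
        by_cases hvx : v = x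
        · subst hvx
          simp only [(hmemx v).mpr rfl] at h2 ⊢
          simp only [if_true] at h2 ⊢
          omega
        · have : ¬ (v ∈ e) := fun hh => hvx ((hmemx v).mp hh)
          simp only [this, if_false] at h2 ⊢
          omega
    · push_neg at hdiag
      rcases exists_leaf_or_cycM E hdiag h0 with ⟨w, hw⟩ | ⟨a, b, t, hnd, hC⟩
      · -- leaf case
        obtain ⟨f, hfE, hwf⟩ := exists_mem_of_mdeg_pos (by omega : 0 < mdeg E w)
        set u := Sym2.Mem.other hwf with hu
        have hfu : s(w, u) = f := Sym2.other_spec hwf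
        have huw : u ≠ w := by
          intro hh
          apply hdiag f hfE
          rw [← hfu, hh]
          exact Sym2.mk_isDiag_iff.mpr rfl
        obtain ⟨A, B, hs, hb⟩ := ih (E.erase f) (by
          have := Multiset.card_erase_lt_of_mem hfE
          omega)
        have hcons : f ::ₘ E.erase f = E := Multiset.cons_erase hfE
        have hdegE : ∀ v, mdeg E v = (if v ∈ f then 1 else 0) + mdeg (E.erase f) v := by
          intro v
          conv_lhs => rw [← hcons]
          rw [mdeg_cons]
        have hmemf : ∀ v, (v ∈ f) ↔ (v = w ∨ v = u) := by
          intro v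
          rw [← hfu]
          simp [Sym2.mem_iff]
        have hEw0 : mdeg (E.erase f) w = 0 := by
          have := hdegE w
          simp only [hwf, if_pos] at this
          omega
        have hABw : mdeg A w = 0 ∧ mdeg B w = 0 := by
          have h1 : mdeg A w + mdeg B w = mdeg (E.erase f) w := by rw [← hs, mdeg_add]
          omega
        have hsu : mdeg A u + mdeg B u = mdeg (E.erase f) u := by rw [← hs, mdeg_add]
        by_cases hside : 2 * mdeg A u ≤ mdeg (E.erase f) u
        · refine ⟨f ::ₘ A, B, by rw [Multiset.cons_add, hs, hcons], fun v => ?_⟩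
          have h1 := hb v
          have h2 := hdegE v
          rw [mdeg_cons]
          by_cases hvw : v = w
          · subst hvw
            simp only [hwf, if_pos] at h2 ⊢
            omega
          · by_cases hvu : v = u
            · subst hvu
              have hvf : u ∈ f := (hmemf u).mpr (Or.inr rfl)
              simp only [hvf, if_pos] at h2 ⊢
              omega
            · have hvf : ¬ (v ∈ f) := by
                rw [hmemf v]
                tauto
              simp only [hvf, if_neg, if_false] at h2 ⊢
              omega
        · have hsideB : 2 * mdeg B u ≤ mdeg (E.erase f) u := by
            have := (hb u).1
            have := (hb u).2
            omega
          refine ⟨A, f ::ₘ B, by rw [Multiset.add_cons, hs, hcons], fun v => ?_⟩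
          have h1 := hb v
          have h2 := hdegE v
          rw [mdeg_cons]
          by_cases hvw : v = w
          · subst hvw
            simp only [hwf, if_pos] at h2 ⊢
            omega
          · by_cases hvu : v = u
            · subst hvu
              have hvf : u ∈ f := (hmemf u).mpr (Or.inr rfl)
              simp only [hvf, if_pos] at h2 ⊢
              omega
            · have hvf : ¬ (v ∈ f) := by
                rw [hmemf v]
                tauto
              simp only [hvf, if_neg, if_false] at h2 ⊢
              omega
      · -- cycle case
        set C := cycM a b t with hCdef
        have hCne : C ≠ 0 := Multiset.cons_ne_zero
        have hcardC : 0 < C.card := Multiset.card_pos.mpr hCne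
        have hEC : E - C + C = E := tsub_add_cancel_of_le hC
        obtain ⟨A, B, hs, hb⟩ := ih (E - C) (by
          have : (E - C).card + C.card = E.card := by
            rw [← Multiset.card_add, hEC]
          omega)
        have hdegE : ∀ v, mdeg E v = mdeg (E - C) v + mdeg C v := by
          intro v
          conv_lhs => rw [← hEC]
          rw [mdeg_add]
        have hCdeg : ∀ v, mdeg C v = if v ∈ a :: b :: t then 2 else 0 :=
          mdeg_cycM a b t hnd
        obtain ⟨CA, CB, hcs, hcv, hCA2, hCB1⟩ := cycM_split a b t hnd
        have hCAle : ∀ v, mdeg CA v + mdeg CB v = mdeg C v := by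
          intro v
          rw [hCdef, ← hcs, mdeg_add]
        have hsa : mdeg A a + mdeg B a = mdeg (E - C) a := by rw [← hs, mdeg_add]
        by_cases hside : 2 * mdeg A a ≤ mdeg (E - C) a
        · refine ⟨A + CA, B + CB, by
            rw [add_add_add_comm, hs, hcs, hEC], fun v => ?_⟩
          have h1 := hb v
          have h2 := hdegE v
          have h3 := hCAle v
          rw [mdeg_add, mdeg_add]
          by_cases hvl : v ∈ a :: b :: t
          · have hCv : mdeg C v = 2 := by rw [hCdeg v, if_pos hvl]
            by_cases hva : v = a
            · subst hva
              omega
            · have := hcv v hva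
              omega
          · have hCv : mdeg C v = 0 := by rw [hCdeg v, if_neg hvl]
            omega
        · have hsideB : 2 * mdeg B a ≤ mdeg (E - C) a := by
            have := (hb a).1
            have := (hb a).2
            omega
          refine ⟨A + CB, B + CA, by
            rw [add_add_add_comm, hs, add_comm CB CA, hcs, hEC], fun v => ?_⟩
          have h1 := hb v
          have h2 := hdegE v
          have h3 := hCAle v
          rw [mdeg_add, mdeg_add]
          by_cases hvl : v ∈ a :: b :: t
          · have hCv : mdeg C v = 2 := by rw [hCdeg v, if_pos hvl]
            by_cases hva : v = a
            · subst hva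
              omega
            · have := hcv v hva
              omega
          · have hCv : mdeg C v = 0 := by rw [hCdeg v, if_neg hvl]
            omega

lemma card_filter_le_mdeg [Fintype V] (G : SimpleGraph V) [DecidableRel G.Adj] (u : V)
    (M : Multiset (Sym2 V)) (hnd : M.Nodup) (P : V → Prop) [DecidablePred P]
    (hP : ∀ v, G.Adj u v → P v → s(u, v) ∈ M) :
    ((G.neighborFinset u).filter (fun v => P v)).card ≤ mdeg M u := by
  rw [mdeg, Multiset.countP_eq_card_filter,
    ← Multiset.toFinset_card_of_nodup (Multiset.Nodup.filter _ hnd),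
    Multiset.toFinset_filter]
  apply Finset.card_le_card_of_injOn (fun v => s(u, v))
  · intro v hv
    simp only [Finset.mem_coe] at hv ⊢
    rw [Finset.mem_filter] at hv ⊢
    obtain ⟨hv1, hv2⟩ := hv
    rw [SimpleGraph.mem_neighborFinset] at hv1
    refine ⟨Multiset.mem_toFinset.mpr (hP v hv1 hv2), ?_⟩
    simp
  · intro v₁ _ v₂ _ he
    exact Sym2.congr_right.mp he

end MDC

/-- Distinguishing edge coloring. -/
def IsDistinguishingEdgeColoring {V : Type*} (G : SimpleGraph V) {k : ℕ}
    (c : Sym2 V → Fin k) : Prop :=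
  ∀ φ : G ≃g G, (∀ u v : V, G.Adj u v → c s(φ u, φ v) = c s(u, v)) → ∀ x : V, φ x = x

set_option maxHeartbeats 4000000 in
open MDC in
/-- Every graph of minimum degree at least 4 which has a connected asymmetric spanning
subgraph of minimum degree at least 4 has a majority distinguishing edge 6-coloring. -/
theorem majority_distinguishing_six_colors {V : Type*} [Fintype V] [DecidableEq V]
    (G : SimpleGraph V) [DecidableRel G.Adj]
    (hδ : ∀ v : V, 4 ≤ G.degree v)
    (hH : ∃ H : SimpleGraph V, H ≤ G ∧ H.Connected ∧
      (∀ v : V, 4 ≤ (H.neighborSet v).ncard) ∧ ∀ φ : H ≃g H, ∀ x : V, φ x = x) :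
    ∃ c : Sym2 V → Fin 6,
      IsMajorityEdgeColoring G c ∧ IsDistinguishingEdgeColoring G c := by
  obtain ⟨H, hle, _hconn, hdeg4, hasym⟩ := hH
  haveI : DecidableRel H.Adj := Classical.decRel _
  haveI : DecidableRel (G \ H).Adj := Classical.decRel _
  set EG : Multiset (Sym2 V) := G.edgeFinset.val with hEGdef
  set EH : Multiset (Sym2 V) := H.edgeFinset.val with hEHdef
  set E2 : Multiset (Sym2 V) := (G \ H).edgeFinset.val with hE2def
  have hdisj : Disjoint H.edgeFinset ((G \ H).edgeFinset) := by
    rw [SimpleGraph.edgeFinset_sdiff]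
    exact Finset.disjoint_sdiff
  have hEsum : EH + E2 = EG := by
    have hunion : H.edgeFinset.disjUnion ((G \ H).edgeFinset) hdisj = G.edgeFinset := by
      rw [Finset.disjUnion_eq_union, SimpleGraph.edgeFinset_sdiff]
      exact Finset.union_sdiff_of_subset (SimpleGraph.edgeFinset_mono hle)
    exact congrArg Finset.val hunion
  have hndEG : EG.Nodup := G.edgeFinset.nodup
  have hmdegG : ∀ u, mdeg EG u = G.degree u := by
    intro u
    rw [mdeg, Multiset.countP_eq_card_filter]
    rw [hEGdef, ← Finset.filter_val]
    show (G.edgeFinset.filter (fun e => u ∈ e)).card = G.degree u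
    rw [← SimpleGraph.incidenceFinset_eq_filter]
    exact SimpleGraph.card_incidenceFinset_eq_degree G u
  have hmdegEH : ∀ u, mdeg EH u = H.degree u := by
    intro u
    rw [mdeg, Multiset.countP_eq_card_filter]
    rw [hEHdef, ← Finset.filter_val]
    show (H.edgeFinset.filter (fun e => u ∈ e)).card = H.degree u
    rw [← SimpleGraph.incidenceFinset_eq_filter]
    exact SimpleGraph.card_incidenceFinset_eq_degree H u
  have hHdeg4 : ∀ u, 4 ≤ mdeg EH u := by
    intro u
    rw [hmdegEH u]
    have h1 := hdeg4 u
    rwa [Set.ncard_eq_toFinset_card'] at h1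
  have hdegsum : ∀ u, mdeg EH u + mdeg E2 u = G.degree u := by
    intro u
    rw [← hmdegG u, ← hEsum, mdeg_add]
  obtain ⟨F1, F2, hF, hFb⟩ := msplit EH
  obtain ⟨A1, A2, hA, hAb⟩ := msplit F1
  obtain ⟨B1, B2, hBs, hBb⟩ := msplit F2
  obtain ⟨C1, C2, hCs, hCb⟩ := msplit E2
  set c : Sym2 V → Fin 6 := fun e =>
    if e ∈ A1 then 0 else if e ∈ A2 then 1 else if e ∈ B1 then 2
    else if e ∈ B2 then 3 else if e ∈ C1 then 4 else 5 with hcdef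
  have hmemEH : ∀ e, e ∈ EH ↔ (e ∈ A1 ∨ e ∈ A2 ∨ e ∈ B1 ∨ e ∈ B2) := by
    intro e
    conv_lhs => rw [← hF, ← hA, ← hBs]
    simp [Multiset.mem_add, or_assoc]
  have hmemE2 : ∀ e, e ∈ E2 ↔ (e ∈ C1 ∨ e ∈ C2) := by
    intro e
    conv_lhs => rw [← hCs]
    simp [Multiset.mem_add]
  have hdisjm : ∀ e ∈ E2, e ∉ EH := by
    have hnd2 : (EH + E2).Nodup := by rw [hEsum]; exact hndEG
    have hd := Multiset.nodup_add.mp hnd2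
    exact fun e he1 he2 => Multiset.disjoint_left.mp hd.2.2 he2 he1
  have hcEHle : ∀ e ∈ EH, (c e).val ≤ 3 := by
    intro e he
    have hm := (hmemEH e).mp he
    have heE2 : e ∉ E2 := fun h2 => hdisjm e h2 he
    have hC1 : e ∉ C1 := fun h => heE2 ((hmemE2 e).mpr (Or.inl h))
    simp only [hcdef]
    split_ifs with h1 h2 h3 h4
    · decide
    · decide
    · decide
    · decide
    · exact absurd hm (by tauto)
  have hcE2ge : ∀ e ∈ E2, 4 ≤ (c e).val := by
    intro e he
    have hEH' : e ∉ EH := hdisjm e he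
    have h1 : e ∉ A1 := fun h => hEH' ((hmemEH e).mpr (Or.inl h))
    have h2 : e ∉ A2 := fun h => hEH' ((hmemEH e).mpr (Or.inr (Or.inl h)))
    have h3 : e ∉ B1 := fun h => hEH' ((hmemEH e).mpr (Or.inr (Or.inr (Or.inl h))))
    have h4 : e ∉ B2 := fun h => hEH' ((hmemEH e).mpr (Or.inr (Or.inr (Or.inr h))))
    simp only [hcdef]
    rw [if_neg h1, if_neg h2, if_neg h3, if_neg h4]
    split_ifs <;> decide
  -- nodup of parts
  have hA1le : A1 ≤ EH := le_trans (le_trans (self_le_add_right _ _) (le_of_eq hA)) (le_trans (self_le_add_right _ _) (le_of_eq hF))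
  have hA2le : A2 ≤ EH := le_trans (le_trans (self_le_add_left _ _) (le_of_eq hA)) (le_trans (self_le_add_right _ _) (le_of_eq hF))
  have hB1le : B1 ≤ EH := le_trans (le_trans (self_le_add_right _ _) (le_of_eq hBs)) (le_trans (self_le_add_left _ _) (le_of_eq hF))
  have hB2le : B2 ≤ EH := le_trans (le_trans (self_le_add_left _ _) (le_of_eq hBs)) (le_trans (self_le_add_left _ _) (le_of_eq hF))
  have hC1le : C1 ≤ E2 := le_trans (self_le_add_right _ _) (le_of_eq hCs)
  have hC2le : C2 ≤ E2 := le_trans (self_le_add_left _ _) (le_of_eq hCs)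
  have hEHle : EH ≤ EG := le_trans (self_le_add_right _ _) (le_of_eq hEsum)
  have hE2le : E2 ≤ EG := le_trans (self_le_add_left _ _) (le_of_eq hEsum)
  have hndA1 : A1.Nodup := Multiset.nodup_of_le (le_trans hA1le hEHle) hndEG
  have hndA2 : A2.Nodup := Multiset.nodup_of_le (le_trans hA2le hEHle) hndEG
  have hndB1 : B1.Nodup := Multiset.nodup_of_le (le_trans hB1le hEHle) hndEG
  have hndB2 : B2.Nodup := Multiset.nodup_of_le (le_trans hB2le hEHle) hndEG
  have hndC1 : C1.Nodup := Multiset.nodup_of_le (le_trans hC1le hE2le) hndEG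
  have hndC2 : C2.Nodup := Multiset.nodup_of_le (le_trans hC2le hE2le) hndEG
  -- color class membership lemmas
  have hc0 : ∀ e, c e = 0 → e ∈ A1 := by
    intro e hce
    simp only [hcdef] at hce
    split_ifs at hce with h1 h2 h3 h4 h5
    · exact h1
    · exact absurd hce (by decide)
    · exact absurd hce (by decide)
    · exact absurd hce (by decide)
    · exact absurd hce (by decide)
    · exact absurd hce (by decide)
  have hc1 : ∀ e, c e = 1 → e ∈ A2 := by
    intro e hce
    simp only [hcdef] at hce
    split_ifs at hce with h1 h2 h3 h4 h5
    · exact absurd hce (by decide)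
    · exact h2
    · exact absurd hce (by decide)
    · exact absurd hce (by decide)
    · exact absurd hce (by decide)
    · exact absurd hce (by decide)
  have hc2 : ∀ e, c e = 2 → e ∈ B1 := by
    intro e hce
    simp only [hcdef] at hce
    split_ifs at hce with h1 h2 h3 h4 h5
    · exact absurd hce (by decide)
    · exact absurd hce (by decide)
    · exact h3
    · exact absurd hce (by decide)
    · exact absurd hce (by decide)
    · exact absurd hce (by decide)
  have hc3 : ∀ e, c e = 3 → e ∈ B2 := by
    intro e hce
    simp only [hcdef] at hce
    split_ifs at hce with h1 h2 h3 h4 h5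
    · exact absurd hce (by decide)
    · exact absurd hce (by decide)
    · exact absurd hce (by decide)
    · exact h4
    · exact absurd hce (by decide)
    · exact absurd hce (by decide)
  have hc4 : ∀ e, c e = 4 → e ∈ C1 := by
    intro e hce
    simp only [hcdef] at hce
    split_ifs at hce with h1 h2 h3 h4 h5
    · exact absurd hce (by decide)
    · exact absurd hce (by decide)
    · exact absurd hce (by decide)
    · exact absurd hce (by decide)
    · exact h5
    · exact absurd hce (by decide)
  have hc5 : ∀ e, e ∈ EG → c e = 5 → e ∈ C2 := by
    intro e heG hce
    simp only [hcdef] at hce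
    split_ifs at hce with h1 h2 h3 h4 h5
    · exact absurd hce (by decide)
    · exact absurd hce (by decide)
    · exact absurd hce (by decide)
    · exact absurd hce (by decide)
    · exact absurd hce (by decide)
    · rw [← hEsum] at heG
      rcases Multiset.mem_add.mp heG with h | h
      · exact absurd ((hmemEH e).mp h) (by tauto)
      · rcases (hmemE2 e).mp h with h | h
        · exact absurd h h5
        · exact h
  refine ⟨c, ?_, ?_⟩
  · -- majority
    intro u α
    have k1 : 2 * mdeg F1 u ≤ mdeg EH u + 2 := (hFb u).1
    have k2 : 2 * mdeg F2 u ≤ mdeg EH u + 2 := (hFb u).2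
    have k3 : 2 * mdeg A1 u ≤ mdeg F1 u + 2 := (hAb u).1
    have k4 : 2 * mdeg A2 u ≤ mdeg F1 u + 2 := (hAb u).2
    have k5 : 2 * mdeg B1 u ≤ mdeg F2 u + 2 := (hBb u).1
    have k6 : 2 * mdeg B2 u ≤ mdeg F2 u + 2 := (hBb u).2
    have k7 : 2 * mdeg C1 u ≤ mdeg E2 u + 2 := (hCb u).1
    have k8 : 2 * mdeg C2 u ≤ mdeg E2 u + 2 := (hCb u).2
    have k9 : mdeg EH u + mdeg E2 u = G.degree u := hdegsum u
    have k10 : 4 ≤ mdeg EH u := hHdeg4 u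
    have k11 : 4 ≤ G.degree u := hδ u
    fin_cases α
    · show 2 * ((G.neighborFinset u).filter (fun v => c s(u, v) = 0)).card ≤ G.degree u
      have hcard : 2 * ((G.neighborFinset u).filter (fun v => c s(u, v) = 0)).card ≤ 2 * mdeg A1 u :=
        Nat.mul_le_mul_left 2 (card_filter_le_mdeg G u A1 hndA1 _ (fun v _ hcv => hc0 _ hcv))
      omega
    · show 2 * ((G.neighborFinset u).filter (fun v => c s(u, v) = 1)).card ≤ G.degree u
      have hcard : 2 * ((G.neighborFinset u).filter (fun v => c s(u, v) = 1)).card ≤ 2 * mdeg A2 u :=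
        Nat.mul_le_mul_left 2 (card_filter_le_mdeg G u A2 hndA2 _ (fun v _ hcv => hc1 _ hcv))
      omega
    · show 2 * ((G.neighborFinset u).filter (fun v => c s(u, v) = 2)).card ≤ G.degree u
      have hcard : 2 * ((G.neighborFinset u).filter (fun v => c s(u, v) = 2)).card ≤ 2 * mdeg B1 u :=
        Nat.mul_le_mul_left 2 (card_filter_le_mdeg G u B1 hndB1 _ (fun v _ hcv => hc2 _ hcv))
      omega
    · show 2 * ((G.neighborFinset u).filter (fun v => c s(u, v) = 3)).card ≤ G.degree u
      have hcard : 2 * ((G.neighborFinset u).filter (fun v => c s(u, v) = 3)).card ≤ 2 * mdeg B2 u :=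
        Nat.mul_le_mul_left 2 (card_filter_le_mdeg G u B2 hndB2 _ (fun v _ hcv => hc3 _ hcv))
      omega
    · show 2 * ((G.neighborFinset u).filter (fun v => c s(u, v) = 4)).card ≤ G.degree u
      have hcard : 2 * ((G.neighborFinset u).filter (fun v => c s(u, v) = 4)).card ≤ 2 * mdeg C1 u :=
        Nat.mul_le_mul_left 2 (card_filter_le_mdeg G u C1 hndC1 _ (fun v _ hcv => hc4 _ hcv))
      omega
    · show 2 * ((G.neighborFinset u).filter (fun v => c s(u, v) = 5)).card ≤ G.degree u
      have hcard : 2 * ((G.neighborFinset u).filter (fun v => c s(u, v) = 5)).card ≤ 2 * mdeg C2 u :=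
        Nat.mul_le_mul_left 2 (card_filter_le_mdeg G u C2 hndC2 _
          (fun v hadj hcv => hc5 _ (Finset.mem_val.mpr (SimpleGraph.mem_edgeFinset.mpr hadj)) hcv))
      omega
  · -- distinguishing
    intro φ hpres x
    have hadjEH : ∀ u v, H.Adj u v → s(u, v) ∈ EH := fun u v h =>
      Finset.mem_val.mpr (SimpleGraph.mem_edgeFinset.mpr h)
    have hadjE2 : ∀ u v, G.Adj u v → ¬ H.Adj u v → s(u, v) ∈ E2 := fun u v hg hh =>
      Finset.mem_val.mpr (SimpleGraph.mem_edgeFinset.mpr ((SimpleGraph.sdiff_adj G H u v).mpr ⟨hg, hh⟩))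
    have key : ∀ u v, H.Adj u v → H.Adj (φ u) (φ v) := by
      intro u v h
      have hg : G.Adj u v := hle h
      have hgf : G.Adj (φ u) (φ v) := φ.map_adj_iff.mpr hg
      by_contra hnot
      have h2 := hcE2ge _ (hadjE2 _ _ hgf hnot)
      have h3 := hcEHle _ (hadjEH _ _ h)
      have h4 : (c s(φ u, φ v)).val = (c s(u, v)).val := by rw [hpres u v hg]
      omega
    have key2 : ∀ u v, H.Adj (φ u) (φ v) → H.Adj u v := by
      intro u v h
      have hgf : G.Adj (φ u) (φ v) := hle h
      have hg : G.Adj u v := φ.map_adj_iff.mp hgf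
      by_contra hnot
      have h2 := hcE2ge _ (hadjE2 _ _ hg hnot)
      have h3 := hcEHle _ (hadjEH _ _ h)
      have h4 : (c s(φ u, φ v)).val = (c s(u, v)).val := by rw [hpres u v hg]
      omega
    exact hasym ⟨φ.toEquiv, fun {a b} => ⟨key2 a b, key a b⟩⟩ x
end

section
/- For every natural number n ≥ 3 with n ≠ 4, the complete graph K_n satisfies M'_D(K_n) ≤ 3; that is, K_n has an edge coloring with 3 colors that is both a majority edge coloring and a distinguishing edge coloring. -/
open SimpleGraph

namespace MDCaux

def f (a b : ℕ) : Fin 3 :=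
  if a + 1 = b ∨ b + 1 = a then 0
  else if (a = 1 ∧ b = 3) ∨ (a = 3 ∧ b = 1) then 2
  else if (a + b) % 2 = 0 then 1 else 2
lemma f_symm (a b : ℕ) : f a b = f b a := by
  unfold f; split_ifs <;> first | rfl | (exfalso; omega)
def cg (n : ℕ) : Sym2 (Fin n) → Fin 3 :=
  Sym2.lift ⟨fun i j => f i.val j.val, fun i j => f_symm i.val j.val⟩
lemma cg_mk {n : ℕ} (a b : Fin n) : cg n s(a, b) = f a.val b.val := rfl
lemma f_eq_zero_iff {a b : ℕ} : f a b = 0 ↔ (a + 1 = b ∨ b + 1 = a) := by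
  unfold f; split_ifs <;> simp_all
lemma f_eq_one {a b : ℕ} (h : f a b = 1) :
    (a + b) % 2 = 0 ∧ ¬(a + 1 = b ∨ b + 1 = a) ∧ ¬((a = 1 ∧ b = 3) ∨ (a = 3 ∧ b = 1)) := by
  unfold f at h; split_ifs at h <;> simp_all
lemma f_eq_two {a b : ℕ} (h : f a b = 2) :
    ((a = 1 ∧ b = 3) ∨ (a = 3 ∧ b = 1)) ∨ ((a + b) % 2 = 1 ∧ ¬(a + 1 = b ∨ b + 1 = a)) := by
  unfold f at h; split_ifs at h <;> simp_all
lemma f_one {a b : ℕ} (h1 : ¬(a + 1 = b ∨ b + 1 = a))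
    (h2 : ¬((a = 1 ∧ b = 3) ∨ (a = 3 ∧ b = 1))) (h3 : (a + b) % 2 = 0) : f a b = 1 := by
  unfold f; split_ifs <;> simp_all
lemma f_ne_one_of_odd {a b : ℕ} (h : (a + b) % 2 = 1) : f a b ≠ 1 := by
  unfold f; split_ifs <;> simp_all
def iv (u v : ℕ) : ℕ :=
  if u = 1 ∧ v = 4 then 0 else if u = 3 ∧ v = 0 then 4 else if v < u then v + 1 else v - 1

def ivF {n : ℕ} (hn : 5 ≤ n) (u v : Fin n) : Fin n :=
  ⟨iv u.val v.val, by unfold iv; split_ifs <;> omega⟩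

lemma ivF_val {n : ℕ} (hn : 5 ≤ n) (u v : Fin n) : (ivF hn u v).val = iv u.val v.val := rfl


/-- Structural condition for color 2 at `u`. -/
def Q2 (u v : ℕ) : Prop :=
  (u = 1 ∧ v = 3) ∨ (u = 3 ∧ v = 1) ∨ ((u + v) % 2 = 1 ∧ (v + 3 ≤ u ∨ u + 3 ≤ v))

lemma iv_maps1 (u v : ℕ) (h1 : (u + v) % 2 = 0) (h2 : v ≠ u) :
    iv u v ≠ u ∧ f u (iv u v) ≠ 1 := by
  have hiv : iv u v = if v < u then v + 1 else v - 1 := by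
    unfold iv; rw [if_neg (by omega), if_neg (by omega)]
  rw [hiv]
  split_ifs with h
  · exact ⟨by omega, f_ne_one_of_odd (by omega)⟩
  · exact ⟨by omega, f_ne_one_of_odd (by omega)⟩

lemma iv_inj1 (u v w : ℕ) (hv1 : (u + v) % 2 = 0) (hv2 : v ≠ u)
    (hw1 : (u + w) % 2 = 0) (hw2 : w ≠ u) (h : iv u v = iv u w) : v = w := by
  unfold iv at h; split_ifs at h <;> omega

lemma iv_maps2 (u v : ℕ) (h : Q2 u v) : iv u v ≠ u ∧ f u (iv u v) ≠ 2 := by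
  have hne : iv u v ≠ u := by
    unfold Q2 at h; unfold iv; split_ifs <;> omega
  refine ⟨hne, ?_⟩
  rcases h with ⟨hu1, hv3⟩ | ⟨hu3, hv1⟩ | ⟨hpar, hgap⟩
  · have hiv : iv u v = 2 := by unfold iv; split_ifs <;> omega
    rw [hiv, hu1]; decide
  · have hiv : iv u v = 2 := by unfold iv; split_ifs <;> omega
    rw [hiv, hu3]; decide
  · by_cases hp1 : u = 1 ∧ v = 4
    · have hiv : iv u v = 0 := by unfold iv; rw [if_pos hp1]
      rw [hiv, hp1.1]; decide
    · by_cases hp2 : u = 3 ∧ v = 0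
      · have hiv : iv u v = 4 := by unfold iv; rw [if_neg (by omega), if_pos hp2]
        rw [hiv, hp2.1]; decide
      · by_cases hlt : v < u
        · have hiv : iv u v = v + 1 := by unfold iv; rw [if_neg hp1, if_neg hp2, if_pos hlt]
          rw [hiv]
          intro hf2
          rcases f_eq_two hf2 with hg | ⟨hpar2, -⟩ <;> omega
        · have hiv : iv u v = v - 1 := by unfold iv; rw [if_neg hp1, if_neg hp2, if_neg hlt]
          rw [hiv]
          intro hf2
          rcases f_eq_two hf2 with hg | ⟨hpar2, -⟩ <;> omega

lemma iv_inj2 (u v w : ℕ) (hv : Q2 u v) (hw : Q2 u w) (h : iv u v = iv u w) : v = w := by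
  unfold Q2 at hv hw; unfold iv at h; split_ifs at h <;> omega

set_option maxHeartbeats 1000000 in
lemma maj (n : ℕ) (hn : 5 ≤ n) (u : Fin n) (α : Fin 3) :
    2 * (((⊤ : SimpleGraph (Fin n)).neighborFinset u).filter
        (fun v => cg n s(u, v) = α)).card ≤ (⊤ : SimpleGraph (Fin n)).degree u := by
  classical
  set N := (⊤ : SimpleGraph (Fin n)).neighborFinset u with hN
  have hdeg : (⊤ : SimpleGraph (Fin n)).degree u = N.card := rfl
  have hmemN : ∀ v : Fin n, v ∈ N ↔ v ≠ u := by
    intro v; rw [hN, mem_neighborFinset, top_adj]; exact ne_comm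
  have hNcard : N.card = n - 1 := by
    rw [← hdeg]; simp [Fintype.card_fin]
  have hsplit : (N.filter (fun v => cg n s(u, v) = α)).card +
      (N.filter (fun v => ¬(cg n s(u, v) = α))).card = N.card :=
    Finset.card_filter_add_card_filter_not (fun v => cg n s(u, v) = α)
  rw [hdeg]
  have hα : ∀ β : Fin 3, β = 0 ∨ β = 1 ∨ β = 2 := by decide
  rcases hα α with rfl | rfl | rfl
  · -- α = 0 : at most the two path neighbours
    have hsub : N.filter (fun v => cg n s(u, v) = 0) ⊆
        {(⟨(u.val + 1) % n, Nat.mod_lt _ (by omega)⟩ : Fin n),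
         (⟨(u.val + (n - 1)) % n, Nat.mod_lt _ (by omega)⟩ : Fin n)} := by
      intro v hv
      simp only [Finset.mem_filter, hmemN, cg_mk] at hv
      obtain ⟨hvu, hc⟩ := Finset.mem_filter.1 hv
      rw [hmemN] at hvu
      have hpath := f_eq_zero_iff.1 hc
      simp only [Finset.mem_insert, Finset.mem_singleton]
      rcases hpath with h | h
      · left
        apply Fin.ext
        show v.val = (u.val + 1) % n
        have : (u.val + 1) % n = u.val + 1 := Nat.mod_eq_of_lt (by omega)
        omega
      · right
        apply Fin.ext
        show v.val = (u.val + (n - 1)) % n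
        have h1 : u.val + (n - 1) = (u.val - 1) + n := by omega
        rw [h1, Nat.add_mod_right, Nat.mod_eq_of_lt (show u.val - 1 < n by omega)]
        omega
    have hcard1 : (N.filter (fun v => cg n s(u, v) = 0)).card ≤ 2 :=
      le_trans (Finset.card_le_card hsub)
        (le_trans (Finset.card_insert_le _ _) (by simp))
    omega
  · -- α = 1
    have key : (N.filter (fun v => cg n s(u, v) = 1)).card ≤
        (N.filter (fun v => ¬(cg n s(u, v) = 1))).card := by
      apply Finset.card_le_card_of_injOn (ivF hn u)
      · intro v hv
        simp only [Finset.mem_coe, Finset.mem_filter, hmemN, cg_mk, ivF_val] at hv ⊢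
        obtain ⟨hvu, hc⟩ := Finset.mem_filter.1 hv
        rw [hmemN] at hvu
        obtain ⟨hpar, -, -⟩ := f_eq_one hc
        have hvu' : v.val ≠ u.val := fun h => hvu (Fin.ext h)
        obtain ⟨hm1, hm2⟩ := iv_maps1 u.val v.val hpar hvu'
        exact Finset.mem_filter.2 ⟨(hmemN _).2 (fun h => hm1 ((ivF_val hn u v) ▸ congrArg Fin.val h)), hm2⟩
      · intro v hv w hw hvw
        simp only [Finset.mem_coe, Finset.mem_filter, hmemN, cg_mk] at hv hw
        obtain ⟨hvu, hcv⟩ := Finset.mem_filter.1 hv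
        obtain ⟨hwu, hcw⟩ := Finset.mem_filter.1 hw
        rw [hmemN] at hvu hwu
        obtain ⟨hpv, -, -⟩ := f_eq_one hcv
        obtain ⟨hpw, -, -⟩ := f_eq_one hcw
        have hvu' : v.val ≠ u.val := fun h => hvu (Fin.ext h)
        have hwu' : w.val ≠ u.val := fun h => hwu (Fin.ext h)
        have heq : iv u.val v.val = iv u.val w.val := by
          have := congrArg Fin.val hvw
          rwa [ivF_val, ivF_val] at this
        exact Fin.ext (iv_inj1 u.val v.val w.val hpv hvu' hpw hwu' heq)
    omega
  · -- α = 2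
    have key : (N.filter (fun v => cg n s(u, v) = 2)).card ≤
        (N.filter (fun v => ¬(cg n s(u, v) = 2))).card := by
      apply Finset.card_le_card_of_injOn (ivF hn u)
      · intro v hv
        simp only [Finset.mem_coe, Finset.mem_filter, hmemN, cg_mk, ivF_val] at hv ⊢
        obtain ⟨hvu, hc⟩ := Finset.mem_filter.1 hv
        rw [hmemN] at hvu
        have hvu' : v.val ≠ u.val := fun h => hvu (Fin.ext h)
        have hQ : Q2 u.val v.val := by
          unfold Q2
          rcases f_eq_two hc with h | h
          · tauto
          · right; right; omega
        obtain ⟨hm1, hm2⟩ := iv_maps2 u.val v.val hQ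
        exact Finset.mem_filter.2 ⟨(hmemN _).2 (fun h => hm1 ((ivF_val hn u v) ▸ congrArg Fin.val h)), hm2⟩
      · intro v hv w hw hvw
        simp only [Finset.mem_coe, Finset.mem_filter, hmemN, cg_mk] at hv hw
        obtain ⟨hvu, hcv⟩ := Finset.mem_filter.1 hv
        obtain ⟨hwu, hcw⟩ := Finset.mem_filter.1 hw
        rw [hmemN] at hvu hwu
        have hvu' : v.val ≠ u.val := fun h => hvu (Fin.ext h)
        have hwu' : w.val ≠ u.val := fun h => hwu (Fin.ext h)
        have hQv : Q2 u.val v.val := by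
          unfold Q2
          rcases f_eq_two hcv with h | h
          · tauto
          · right; right; omega
        have hQw : Q2 u.val w.val := by
          unfold Q2
          rcases f_eq_two hcw with h | h
          · tauto
          · right; right; omega
        have heq : iv u.val v.val = iv u.val w.val := by
          have := congrArg Fin.val hvw
          rwa [ivF_val, ivF_val] at this
        exact Fin.ext (iv_inj2 u.val v.val w.val hQv hQw heq)
    omega

lemma dist (n : ℕ) (hn : 6 ≤ n) (e : Fin n ≃ Fin n)
    (hc : ∀ u v : Fin n, u ≠ v → cg n s(e u, e v) = cg n s(u, v)) :
    ∀ x : Fin n, e x = x := by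
  have hpres : ∀ u v : Fin n, u ≠ v → f (e u).val (e v).val = f u.val v.val := by
    intro u v h
    have := hc u v h
    rwa [cg_mk, cg_mk] at this
  have hpath : ∀ u v : Fin n, u ≠ v →
      ((u.val + 1 = v.val ∨ v.val + 1 = u.val) ↔
       ((e u).val + 1 = (e v).val ∨ (e v).val + 1 = (e u).val)) := by
    intro u v h
    rw [← f_eq_zero_iff, ← f_eq_zero_iff, hpres u v h]
  have hne_of_val : ∀ (a b : ℕ) (ha : a < n) (hb : b < n), a ≠ b →
      (⟨a, ha⟩ : Fin n) ≠ ⟨b, hb⟩ := by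
    intro a b ha hb hab h
    exact hab (congrArg Fin.val h)
  have h0n : 0 < n := by omega
  have h1n : 1 < n := by omega
  -- the image of 0 is 0 or n-1
  have h0 : (e ⟨0, h0n⟩).val = 0 ∨ (e ⟨0, h0n⟩).val = n - 1 := by
    by_contra hcon
    push_neg at hcon
    obtain ⟨h1, h2⟩ := hcon
    have hm := (e ⟨0, h0n⟩).isLt
    have hw1 : (e ⟨0, h0n⟩).val - 1 < n := by omega
    have hw2 : (e ⟨0, h0n⟩).val + 1 < n := by omega
    have key : ∀ w : Fin n, ((e ⟨0, h0n⟩).val + 1 = w.val ∨ w.val + 1 = (e ⟨0, h0n⟩).val) →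
        w = e ⟨1, h1n⟩ := by
      intro w hw
      have hne : (⟨0, h0n⟩ : Fin n) ≠ e.symm w := by
        intro hh
        have : e ⟨0, h0n⟩ = w := by rw [hh, Equiv.apply_symm_apply]
        rw [← this] at hw
        omega
      have hiff := (hpath ⟨0, h0n⟩ (e.symm w) hne).2 (by rw [Equiv.apply_symm_apply]; exact hw)
      have hz0 : (⟨0, h0n⟩ : Fin n).val = 0 := rfl
      have hv1 : (e.symm w).val = 1 := by omega
      have : e.symm w = ⟨1, h1n⟩ := Fin.ext hv1
      rw [← this, Equiv.apply_symm_apply]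
    have k1 := key ⟨(e ⟨0, h0n⟩).val - 1, hw1⟩ (by
      right
      have : (⟨(e ⟨0, h0n⟩).val - 1, hw1⟩ : Fin n).val = (e ⟨0, h0n⟩).val - 1 := rfl
      omega)
    have k2 := key ⟨(e ⟨0, h0n⟩).val + 1, hw2⟩ (by
      left
      have : (⟨(e ⟨0, h0n⟩).val + 1, hw2⟩ : Fin n).val = (e ⟨0, h0n⟩).val + 1 := rfl
      omega)
    rw [← k2] at k1
    have hvv := congrArg Fin.val k1
    have e1 : (⟨(e ⟨0, h0n⟩).val - 1, hw1⟩ : Fin n).val = (e ⟨0, h0n⟩).val - 1 := rfl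
    have e2 : (⟨(e ⟨0, h0n⟩).val + 1, hw2⟩ : Fin n).val = (e ⟨0, h0n⟩).val + 1 := rfl
    omega
  rcases h0 with hA | hB
  · -- e 0 = 0 : induction
    have main : ∀ k, ∀ hk : k < n, (e ⟨k, hk⟩).val = k := by
      intro k
      induction k using Nat.strong_induction_on with
      | _ k ih =>
        match k with
        | 0 => intro hk; exact hA
        | 1 =>
          intro hk
          have hp := (hpath ⟨0, h0n⟩ ⟨1, hk⟩ (hne_of_val _ _ _ _ (by omega))).1 (by left; rfl)
          rcases hp with h | h
          · rw [hA] at h; omega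
          · rw [hA] at h; omega
        | (m+2) =>
          intro hk
          have h1 : m + 1 < n := by omega
          have h2 : m < n := by omega
          have e1 := ih (m+1) (by omega) h1
          have e0 := ih m (by omega) h2
          have hp := (hpath ⟨m+1, h1⟩ ⟨m+2, hk⟩ (hne_of_val _ _ _ _ (by omega))).1
            (by left; rfl)
          rw [e1] at hp
          have hm1 : (⟨m+1, h1⟩ : Fin n).val = m + 1 := rfl
          rcases hp with h | h
          · omega
          · -- (e ⟨m+2⟩).val = m = (e ⟨m⟩).val, contradiction with injectivity
            exfalso
            have heq : e ⟨m+2, hk⟩ = e ⟨m, h2⟩ := Fin.ext (by rw [e0]; omega)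
            have := congrArg Fin.val (e.injective heq)
            have hv2 : (⟨m+2, hk⟩ : Fin n).val = m + 2 := rfl
            have hv0 : (⟨m, h2⟩ : Fin n).val = m := rfl
            omega
    intro x
    exact Fin.ext (main x.val x.isLt)
  · -- e 0 = n - 1 : contradiction via the special pair {1,3}
    exfalso
    have h2n : 2 < n := by omega
    have h3n : 3 < n := by omega
    have he1 : (e ⟨1, h1n⟩).val = n - 2 := by
      have hp := (hpath ⟨0, h0n⟩ ⟨1, h1n⟩ (hne_of_val _ _ _ _ (by omega))).1 (by left; rfl)
      have hlt := (e ⟨1, h1n⟩).isLt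
      rcases hp with h | h <;> rw [hB] at h <;> omega
    have he2 : (e ⟨2, h2n⟩).val = n - 3 := by
      have hp := (hpath ⟨1, h1n⟩ ⟨2, h2n⟩ (hne_of_val _ _ _ _ (by omega))).1 (by left; rfl)
      have hlt := (e ⟨2, h2n⟩).isLt
      rcases hp with h | h <;> rw [he1] at h
      · -- (e 2).val = n - 1 = (e 0).val : contradiction
        exfalso
        have heq : e ⟨2, h2n⟩ = e ⟨0, h0n⟩ := Fin.ext (by rw [hB]; omega)
        have := congrArg Fin.val (e.injective heq)
        have hv2 : (⟨2, h2n⟩ : Fin n).val = 2 := rfl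
        have hv0 : (⟨0, h0n⟩ : Fin n).val = 0 := rfl
        omega
      · omega
    have he3 : (e ⟨3, h3n⟩).val = n - 4 := by
      have hp := (hpath ⟨2, h2n⟩ ⟨3, h3n⟩ (hne_of_val _ _ _ _ (by omega))).1 (by left; rfl)
      have hlt := (e ⟨3, h3n⟩).isLt
      rcases hp with h | h <;> rw [he2] at h
      · exfalso
        have heq : e ⟨3, h3n⟩ = e ⟨1, h1n⟩ := Fin.ext (by rw [he1]; omega)
        have := congrArg Fin.val (e.injective heq)
        have hv3 : (⟨3, h3n⟩ : Fin n).val = 3 := rfl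
        have hv1 : (⟨1, h1n⟩ : Fin n).val = 1 := rfl
        omega
      · omega
    have hcp := hpres ⟨1, h1n⟩ ⟨3, h3n⟩ (hne_of_val _ _ _ _ (by omega))
    rw [he1, he3] at hcp
    have hval : f (n-2) (n-4) = 1 := by
      apply f_one
      · omega
      · omega
      · omega
    rw [hval] at hcp
    have h13 : f 1 3 = 2 := by decide
    have : (1 : Fin 3) = 2 := by
      rw [hcp]
      exact h13
    exact absurd this (by decide)




def t3 : Fin 3 → Fin 3 → Fin 3 := ![![0, 0, 1], ![0, 0, 2], ![1, 2, 0]]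

def c3 : Sym2 (Fin 3) → Fin 3 := Sym2.lift ⟨t3, by decide⟩

def t5 : Fin 5 → Fin 5 → Fin 3 :=
  ![![0, 0, 0, 1, 1], ![0, 0, 0, 1, 2], ![0, 0, 0, 2, 2], ![1, 1, 2, 0, 0], ![1, 2, 2, 0, 0]]

def c5 : Sym2 (Fin 5) → Fin 3 := Sym2.lift ⟨t5, by decide⟩

lemma distinguishing_of_equiv {n k : ℕ} (c : Sym2 (Fin n) → Fin k)
    (h : ∀ e : Fin n ≃ Fin n,
      (∀ u v : Fin n, u ≠ v → c s(e u, e v) = c s(u, v)) → ∀ x, e x = x) :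
    IsDistinguishingEdgeColoring (⊤ : SimpleGraph (Fin n)) c := by
  intro φ hφ x
  exact h φ.toEquiv (fun u v huv => hφ u v ((top_adj u v).2 huv)) x

lemma maj3 : IsMajorityEdgeColoring (⊤ : SimpleGraph (Fin 3)) c3 := by
  unfold IsMajorityEdgeColoring; decide

lemma dist3 : IsDistinguishingEdgeColoring (⊤ : SimpleGraph (Fin 3)) c3 :=
  distinguishing_of_equiv c3 (by decide)

lemma maj5 : IsMajorityEdgeColoring (⊤ : SimpleGraph (Fin 5)) c5 := by
  unfold IsMajorityEdgeColoring; decide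

set_option maxHeartbeats 4000000 in
set_option maxRecDepth 10000 in
lemma dist5 : IsDistinguishingEdgeColoring (⊤ : SimpleGraph (Fin 5)) c5 :=
  distinguishing_of_equiv c5 (by decide)


end MDCaux

/-- For `n ≥ 3`, `n ≠ 4`, the complete graph `K_n` satisfies `M'_D(K_n) ≤ 3`. -/
theorem majority_distinguishing_complete_graph (n : ℕ) (hn : 3 ≤ n) (hn4 : n ≠ 4) :
    ∃ c : Sym2 (Fin n) → Fin 3,
      IsMajorityEdgeColoring (⊤ : SimpleGraph (Fin n)) c ∧
      IsDistinguishingEdgeColoring (⊤ : SimpleGraph (Fin n)) c := by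
  by_cases h3 : n = 3
  · subst h3; exact ⟨MDCaux.c3, MDCaux.maj3, MDCaux.dist3⟩
  · by_cases h5 : n = 5
    · subst h5; exact ⟨MDCaux.c5, MDCaux.maj5, MDCaux.dist5⟩
    · have h6 : 6 ≤ n := by omega
      exact ⟨MDCaux.cg n, fun u α => MDCaux.maj n (by omega) u α,
        MDCaux.distinguishing_of_equiv _ (MDCaux.dist n h6)⟩
end

section
/- The complete graph K_4 satisfies M'_D(K_4) = 5; that is, K_4 has an edge coloring with 5 colors that is both a majority edge coloring and a distinguishing edge coloring, and no such coloring with 4 colors exists. -/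
open SimpleGraph

/- ## Auxiliary material -/

/-- The 5-coloring of the edges of `K₄`, as a symmetric function. -/
def fcol : Fin 4 → Fin 4 → Fin 5 := fun i j => ![![0,0,1,2],![0,0,2,4],![1,2,0,3],![2,4,3,0]] i j

/-- The 5-coloring of the edges of `K₄`. -/
def ccol : Sym2 (Fin 4) → Fin 5 := Sym2.lift ⟨fcol, by decide⟩

lemma ccol_mk (a b : Fin 4) : ccol s(a, b) = fcol a b := rfl

lemma fcol_rigid : ∀ g : Equiv.Perm (Fin 4),
    (∀ u v : Fin 4, u ≠ v → fcol (g u) (g v) = fcol u v) → ∀ x, g x = x := by decide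

/-- Every permutation is an automorphism of the complete graph. -/
def permIso (e : Equiv.Perm (Fin 4)) : (⊤ : SimpleGraph (Fin 4)) ≃g (⊤ : SimpleGraph (Fin 4)) :=
  { toEquiv := e, map_rel_iff' := by simp }

/-- The double transposition `(0 3)(1 2)`. -/
def e1 : Equiv.Perm (Fin 4) := ⟨![3,2,1,0], ![3,2,1,0], by decide, by decide⟩
/-- The double transposition `(0 2)(1 3)`. -/
def e2 : Equiv.Perm (Fin 4) := ⟨![2,3,0,1], ![2,3,0,1], by decide, by decide⟩
/-- The double transposition `(0 1)(2 3)`. -/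
def e3 : Equiv.Perm (Fin 4) := ⟨![1,0,3,2], ![1,0,3,2], by decide, by decide⟩

lemma sw10 {k : ℕ} (c : Sym2 (Fin 4) → Fin k) : c s(1, 0) = c s(0, 1) := by rw [Sym2.eq_swap]
lemma sw20 {k : ℕ} (c : Sym2 (Fin 4) → Fin k) : c s(2, 0) = c s(0, 2) := by rw [Sym2.eq_swap]
lemma sw30 {k : ℕ} (c : Sym2 (Fin 4) → Fin k) : c s(3, 0) = c s(0, 3) := by rw [Sym2.eq_swap]
lemma sw21 {k : ℕ} (c : Sym2 (Fin 4) → Fin k) : c s(2, 1) = c s(1, 2) := by rw [Sym2.eq_swap]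
lemma sw31 {k : ℕ} (c : Sym2 (Fin 4) → Fin k) : c s(3, 1) = c s(1, 3) := by rw [Sym2.eq_swap]
lemma sw32 {k : ℕ} (c : Sym2 (Fin 4) → Fin k) : c s(3, 2) = c s(2, 3) := by rw [Sym2.eq_swap]

lemma preserve1 {k : ℕ} (c : Sym2 (Fin 4) → Fin k)
    (h1 : c s(0,1) = c s(2,3)) (h2 : c s(0,2) = c s(1,3)) :
    ∀ u v : Fin 4, u ≠ v → c s(e1 u, e1 v) = c s(u, v) := by
  intro u v huv
  fin_cases u <;> fin_cases v <;>
    simp_all [e1, sw10 c, sw20 c, sw30 c, sw21 c, sw31 c, sw32 c]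

lemma preserve2 {k : ℕ} (c : Sym2 (Fin 4) → Fin k)
    (h1 : c s(0,1) = c s(2,3)) (h2 : c s(0,3) = c s(1,2)) :
    ∀ u v : Fin 4, u ≠ v → c s(e2 u, e2 v) = c s(u, v) := by
  intro u v huv
  fin_cases u <;> fin_cases v <;>
    simp_all [e2, sw10 c, sw20 c, sw30 c, sw21 c, sw31 c, sw32 c]

lemma preserve3 {k : ℕ} (c : Sym2 (Fin 4) → Fin k)
    (h1 : c s(0,2) = c s(1,3)) (h2 : c s(0,3) = c s(1,2)) :
    ∀ u v : Fin 4, u ≠ v → c s(e3 u, e3 v) = c s(u, v) := by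
  intro u v huv
  fin_cases u <;> fin_cases v <;>
    simp_all [e3, sw10 c, sw20 c, sw30 c, sw21 c, sw31 c, sw32 c]

lemma degree_top_fin4 : ∀ u : Fin 4, (⊤ : SimpleGraph (Fin 4)).degree u = 3 := by decide

/-- A majority edge coloring of `K₄` is a proper edge coloring. -/
lemma majority_proper {k : ℕ} (c : Sym2 (Fin 4) → Fin k)
    (h : IsMajorityEdgeColoring (⊤ : SimpleGraph (Fin 4)) c) :
    ∀ u v w : Fin 4, u ≠ v → u ≠ w → v ≠ w → c s(u, v) ≠ c s(u, w) := by
  intro u v w huv huw hvw heq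
  have hsub : ({v, w} : Finset (Fin 4)) ⊆
      ((⊤ : SimpleGraph (Fin 4)).neighborFinset u).filter (fun x => c s(u, x) = c s(u, w)) := by
    intro x hx
    simp only [Finset.mem_insert, Finset.mem_singleton] at hx
    rcases hx with rfl | rfl <;>
      simp [SimpleGraph.mem_neighborFinset, huv, huw, heq, Ne.symm huv, Ne.symm huw]
  have hcard : 2 ≤ (((⊤ : SimpleGraph (Fin 4)).neighborFinset u).filter
      (fun x => c s(u, x) = c s(u, w))).card := by
    calc (2 : ℕ) = ({v, w} : Finset (Fin 4)).card := (Finset.card_pair hvw).symm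
    _ ≤ _ := Finset.card_le_card hsub
  have := h u (c s(u, w))
  rw [degree_top_fin4] at this
  omega

lemma key_fin4 : ∀ a b c d e f : Fin 4,
    a≠b → a≠c → b≠c → a≠d → a≠e → d≠e → b≠d → b≠f → d≠f → c≠e → c≠f → e≠f →
    ((a=f ∧ b=e) ∨ (a=f ∧ c=d) ∨ (b=e ∧ c=d)) := by decide

/-- `M'_D(K_4) = 5`: the complete graph `K_4` has a majority distinguishing edge coloring
with 5 colors, but none with 4 colors. -/
theorem majority_distinguishing_K4 :
    (∃ c : Sym2 (Fin 4) → Fin 5,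
      IsMajorityEdgeColoring (⊤ : SimpleGraph (Fin 4)) c ∧
      IsDistinguishingEdgeColoring (⊤ : SimpleGraph (Fin 4)) c) ∧
    ¬ (∃ c : Sym2 (Fin 4) → Fin 4,
      IsMajorityEdgeColoring (⊤ : SimpleGraph (Fin 4)) c ∧
      IsDistinguishingEdgeColoring (⊤ : SimpleGraph (Fin 4)) c) := by
  constructor
  · refine ⟨ccol, ?_, ?_⟩
    · unfold IsMajorityEdgeColoring
      decide
    · intro φ hφ x
      refine fcol_rigid φ.toEquiv ?_ x
      intro u v huv
      have := hφ u v (by simpa using huv)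
      simpa [ccol_mk] using this
  · rintro ⟨c, hmaj, hdist⟩
    have prop := majority_proper c hmaj
    have h01_02 : c s(0,1) ≠ c s(0,2) := prop 0 1 2 (by decide) (by decide) (by decide)
    have h01_03 : c s(0,1) ≠ c s(0,3) := prop 0 1 3 (by decide) (by decide) (by decide)
    have h02_03 : c s(0,2) ≠ c s(0,3) := prop 0 2 3 (by decide) (by decide) (by decide)
    have h01_12 : c s(0,1) ≠ c s(1,2) := by
      have := prop 1 0 2 (by decide) (by decide) (by decide); rwa [sw10 c] at this
    have h01_13 : c s(0,1) ≠ c s(1,3) := by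
      have := prop 1 0 3 (by decide) (by decide) (by decide); rwa [sw10 c] at this
    have h12_13 : c s(1,2) ≠ c s(1,3) := prop 1 2 3 (by decide) (by decide) (by decide)
    have h02_12 : c s(0,2) ≠ c s(1,2) := by
      have := prop 2 0 1 (by decide) (by decide) (by decide); rwa [sw20 c, sw21 c] at this
    have h02_23 : c s(0,2) ≠ c s(2,3) := by
      have := prop 2 0 3 (by decide) (by decide) (by decide); rwa [sw20 c] at this
    have h12_23 : c s(1,2) ≠ c s(2,3) := by
      have := prop 2 1 3 (by decide) (by decide) (by decide); rwa [sw21 c] at this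
    have h03_13 : c s(0,3) ≠ c s(1,3) := by
      have := prop 3 0 1 (by decide) (by decide) (by decide); rwa [sw30 c, sw31 c] at this
    have h03_23 : c s(0,3) ≠ c s(2,3) := by
      have := prop 3 0 2 (by decide) (by decide) (by decide); rwa [sw30 c, sw32 c] at this
    have h13_23 : c s(1,3) ≠ c s(2,3) := by
      have := prop 3 1 2 (by decide) (by decide) (by decide); rwa [sw31 c, sw32 c] at this
    have key := key_fin4 (c s(0,1)) (c s(0,2)) (c s(0,3)) (c s(1,2)) (c s(1,3)) (c s(2,3))
      h01_02 h01_03 h02_03 h01_12 h01_13 h12_13 h02_12 h02_23 h12_23 h03_13 h03_23 h13_23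
    rcases key with ⟨h1, h2⟩ | ⟨h1, h2⟩ | ⟨h1, h2⟩
    · have := hdist (permIso e1)
        (fun u v huv => preserve1 c h1 h2 u v (by simpa using huv)) 0
      exact absurd this (by decide)
    · have := hdist (permIso e2)
        (fun u v huv => preserve2 c h1 h2 u v (by simpa using huv)) 0
      exact absurd this (by decide)
    · have := hdist (permIso e3)
        (fun u v huv => preserve3 c h1 h2 u v (by simpa using huv)) 0
      exact absurd this (by decide)
end

section
/- For every natural number n ≥ 4, the complete balanced bipartite graph K_{n,n} satisfies M'_D(K_{n,n}) ≤ 3; that is, K_{n,n} has an edge coloring with 3 colors that is both a majority edge coloring and a distinguishing edge coloring. -/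
open SimpleGraph

instance {α β : Type*} : DecidableRel (completeBipartiteGraph α β).Adj := fun v w =>
  inferInstanceAs (Decidable (v.isLeft ∧ w.isRight ∨ v.isRight ∧ w.isLeft))

namespace MDaux

open Finset Sum

variable {n : ℕ}

lemma cast_val_eq [NeZero n] (x : ZMod n) : ((x.val : ℕ) : ZMod n) = x :=
  ZMod.natCast_rightInverse x

lemma zmod_ind [NeZero n] (P : ZMod n → Prop) (h0 : P 0) (hs : ∀ i, P i → P (i + 1)) :
    ∀ x : ZMod n, P x := by
  intro x
  have h : ∀ k : ℕ, P (k : ZMod n) := by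
    intro k
    induction k with
    | zero => simpa using h0
    | succ k ih =>
      have := hs _ ih
      rwa [show ((k + 1 : ℕ) : ZMod n) = (k : ZMod n) + 1 by push_cast; ring]
  have := h x.val
  rwa [cast_val_eq] at this

lemma natCast_inj_small [NeZero n] {a b : ℕ} (ha : a < n) (hb : b < n)
    (h : ((a : ZMod n) = (b : ZMod n))) : a = b := by
  have := congrArg ZMod.val h
  rwa [ZMod.val_natCast_of_lt ha, ZMod.val_natCast_of_lt hb] at this

lemma card_filter_equiv {A B : Type*} [Fintype A] [Fintype B] [DecidableEq B] (e : A ≃ B)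
    (p : B → Prop) [DecidablePred p] :
    (univ.filter fun a => p (e a)).card = (univ.filter p).card := by
  refine Finset.card_bij (fun a _ => e a) ?_ ?_ ?_
  · intro a ha
    simp only [mem_filter, mem_univ, true_and] at ha ⊢
    exact ha
  · intro a _ b _ hab
    exact e.injective hab
  · intro b hb
    simp only [mem_filter, mem_univ, true_and] at hb
    exact ⟨e.symm b, by simpa using hb, by simp⟩

section Prop4

variable [NeZero n] [Fact (1 < n)] (F : ZMod n → ZMod n → Fin 3)

lemma noswap_case
    (h2 : ∀ i d, F i d = 2 ↔ (d = 0 ∨ d = 1))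
    (ki : ∀ k : ZMod n, (∀ i d, F (i + k) d = F i d) → k = 0)
    (kii : ∀ c : ZMod n, ¬ (∀ i d, F (c - i) (1 - d) = F i d))
    (σ τ : ZMod n → ZMod n) (injσ : Function.Injective σ) (injτ : Function.Injective τ)
    (hF : ∀ x y, F (σ x) (τ y - σ x) = F x (y - x)) :
    ∀ x, σ x = x ∧ τ x = x := by
  have mem : ∀ i j : ZMod n, (τ j - σ i = 0 ∨ τ j - σ i = 1) ↔ (j - i = 0 ∨ j - i = 1) := by
    intro i j
    rw [← h2, ← h2, hF i j]
  have A : ∀ i, τ i = σ i ∨ τ i = σ i + 1 := by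
    intro i
    rcases (mem i i).mpr (Or.inl (sub_self i)) with h | h
    · exact Or.inl (sub_eq_zero.mp h)
    · exact Or.inr (by rw [sub_eq_iff_eq_add] at h; rw [h]; ring)
  have B : ∀ i, τ (i + 1) = σ i ∨ τ (i + 1) = σ i + 1 := by
    intro i
    rcases (mem i (i + 1)).mpr (Or.inr (by ring)) with h | h
    · exact Or.inl (sub_eq_zero.mp h)
    · exact Or.inr (by rw [sub_eq_iff_eq_add] at h; rw [h]; ring)
  have one_ne : (1 : ZMod n) ≠ 0 := one_ne_zero
  rcases A 0 with ht0 | ht0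
  · -- aligned case : rotation
    have step : ∀ i, τ i = σ i → σ (i + 1) = σ i + 1 ∧ τ (i + 1) = σ i + 1 := by
      intro i hti
      have hτ1 : τ (i + 1) = σ i + 1 := by
        rcases B i with h | h
        · exfalso
          have := injτ (h.trans hti.symm)
          exact one_ne (by simpa using congrArg (· - i) this)
        · exact h
      rcases A (i + 1) with h | h
      · exact ⟨by rw [← h, hτ1], hτ1⟩
      · exfalso
        have : σ (i + 1) + 1 = σ i + 1 := by rw [← h, hτ1]
        have := injσ (add_right_cancel this)
        exact one_ne (by simpa using congrArg (· - i) this)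
    have main : ∀ x, σ x = σ 0 + x ∧ τ x = σ 0 + x := by
      apply zmod_ind
      · exact ⟨by ring, by rw [ht0]; ring⟩
      · rintro i ⟨hσi, hτi⟩
        obtain ⟨s1, s2⟩ := step i (hτi.trans hσi.symm)
        exact ⟨by rw [s1, hσi]; ring, by rw [s2, hσi]; ring⟩
    have hk : σ 0 = 0 := by
      apply ki
      intro i d
      have := hF i (i + d)
      rw [(main i).1, (main (i + d)).2] at this
      have e1 : σ 0 + (i + d) - (σ 0 + i) = d := by ring
      have e2 : i + d - i = d := by ring
      rw [e1, e2] at this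
      rwa [add_comm i (σ 0)]
    intro x
    constructor
    · rw [(main x).1, hk, zero_add]
    · rw [(main x).2, hk, zero_add]
  · -- anti case : reflection, contradiction via kii
    exfalso
    have step : ∀ i, τ i = σ i + 1 → σ (i + 1) = σ i - 1 ∧ τ (i + 1) = σ i := by
      intro i hti
      have hτ1 : τ (i + 1) = σ i := by
        rcases B i with h | h
        · exact h
        · exfalso
          have := injτ (h.trans hti.symm)
          exact one_ne (by simpa using congrArg (· - i) this)
      rcases A (i + 1) with h | h
      · exfalso
        have := injσ ((h.symm.trans hτ1))
        exact one_ne (by simpa using congrArg (· - i) this)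
      · have hs : σ (i + 1) = σ i - 1 := by
          have : σ (i + 1) + 1 = σ i := by rw [← h, hτ1]
          rw [← this]; ring
        exact ⟨hs, hτ1⟩
    have main : ∀ x, σ x = σ 0 - x ∧ τ x = σ 0 + 1 - x := by
      apply zmod_ind
      · exact ⟨by ring, by rw [ht0]; ring⟩
      · rintro i ⟨hσi, hτi⟩
        have hti : τ i = σ i + 1 := by rw [hτi, hσi]; ring
        obtain ⟨s1, s2⟩ := step i hti
        exact ⟨by rw [s1, hσi]; ring, by rw [s2, hσi]; ring⟩
    apply kii (σ 0)
    intro i d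
    have := hF i (i + d)
    rw [(main i).1, (main (i + d)).2] at this
    have e1 : σ 0 + 1 - (i + d) - (σ 0 - i) = 1 - d := by ring
    have e2 : i + d - i = d := by ring
    rwa [e1, e2] at this

lemma swap_case
    (h2 : ∀ i d, F i d = 2 ↔ (d = 0 ∨ d = 1))
    (kiii : ∀ c : ZMod n, ¬ (∀ i d, F (c - i - d) d = F i d))
    (kiv : ∀ c : ZMod n, ¬ (∀ i d, F (c + i + d - 1) (1 - d) = F i d))
    (σ τ : ZMod n → ZMod n) (injσ : Function.Injective σ) (injτ : Function.Injective τ)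
    (hF : ∀ x y, F (τ y) (σ x - τ y) = F x (y - x)) :
    False := by
  have mem : ∀ i j : ZMod n, (σ i - τ j = 0 ∨ σ i - τ j = 1) ↔ (j - i = 0 ∨ j - i = 1) := by
    intro i j
    rw [← h2, ← h2, hF i j]
  have A : ∀ i, σ i = τ i ∨ σ i = τ i + 1 := by
    intro i
    rcases (mem i i).mpr (Or.inl (sub_self i)) with h | h
    · exact Or.inl (sub_eq_zero.mp h)
    · exact Or.inr (by rw [sub_eq_iff_eq_add] at h; rw [h]; ring)
  have B : ∀ i, σ i = τ (i + 1) ∨ σ i = τ (i + 1) + 1 := by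
    intro i
    rcases (mem i (i + 1)).mpr (Or.inr (by ring)) with h | h
    · exact Or.inl (sub_eq_zero.mp h)
    · exact Or.inr (by rw [sub_eq_iff_eq_add] at h; rw [h]; ring)
  have one_ne : (1 : ZMod n) ≠ 0 := one_ne_zero
  rcases A 0 with ht0 | ht0
  · -- σ 0 = τ 0 : side-swapping reflection
    have step : ∀ i, τ i = σ i → σ (i + 1) = σ i - 1 ∧ τ (i + 1) = σ i - 1 := by
      intro i hti
      have hτ1 : τ (i + 1) = σ i - 1 := by
        rcases B i with h | h
        · exfalso
          have := injτ (h.symm.trans hti.symm)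
          exact one_ne (by simpa using congrArg (· - i) this)
        · have : τ (i + 1) + 1 = σ i := h.symm
          rw [← this]; ring
      rcases A (i + 1) with h | h
      · exact ⟨h.trans hτ1, hτ1⟩
      · exfalso
        have : σ (i + 1) = σ i := by rw [h, hτ1]; ring
        have := injσ this
        exact one_ne (by simpa using congrArg (· - i) this)
    have main : ∀ x, σ x = σ 0 - x ∧ τ x = σ 0 - x := by
      apply zmod_ind
      · exact ⟨by ring, by rw [← ht0]; ring⟩
      · rintro i ⟨hσi, hτi⟩
        obtain ⟨s1, s2⟩ := step i (hτi.trans hσi.symm)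
        exact ⟨by rw [s1, hσi]; ring, by rw [s2, hσi]; ring⟩
    apply kiii (σ 0)
    intro i d
    have := hF i (i + d)
    rw [(main i).1, (main (i + d)).2] at this
    have e1 : σ 0 - i - (σ 0 - (i + d)) = d := by ring
    have e2 : i + d - i = d := by ring
    have e3 : σ 0 - (i + d) = σ 0 - i - d := by ring
    rw [e1, e2, e3] at this
    exact this
  · -- σ 0 = τ 0 + 1 : side-swapping rotation
    have step : ∀ i, τ i = σ i - 1 → σ (i + 1) = σ i + 1 ∧ τ (i + 1) = σ i := by
      intro i hti
      have one_ne : (1 : ZMod n) ≠ 0 := one_ne_zero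
      have hτ1 : τ (i + 1) = σ i := by
        rcases B i with h | h
        · exact h.symm
        · exfalso
          have h' : τ (i + 1) = τ i := by
            rw [hti, ← sub_eq_iff_eq_add.mpr h]
          have := injτ h'
          exact one_ne (by simpa using congrArg (· - i) this)
      rcases A (i + 1) with h | h
      · exfalso
        have := injσ (h.trans hτ1)
        exact one_ne (by simpa using congrArg (· - i) this)
      · exact ⟨by rw [h, hτ1], hτ1⟩
    have main : ∀ x, σ x = σ 0 + x ∧ τ x = σ 0 + x - 1 := by
      apply zmod_ind
      · constructor
        · ring
        · rw [eq_sub_of_add_eq ht0.symm]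
          ring_nf
      · rintro i ⟨hσi, hτi⟩
        have hti : τ i = σ i - 1 := by rw [hτi, hσi]
        obtain ⟨s1, s2⟩ := step i hti
        exact ⟨by rw [s1, hσi]; ring, by rw [s2, hσi]; ring⟩
    apply kiv (σ 0)
    intro i d
    have := hF i (i + d)
    rw [(main i).1, (main (i + d)).2] at this
    have e1 : σ 0 + i - (σ 0 + (i + d) - 1) = 1 - d := by ring
    have e2 : i + d - i = d := by ring
    have e3 : σ 0 + (i + d) - 1 = σ 0 + i + d - 1 := by ring
    rw [e1, e2, e3] at this
    exact this

end Prop4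

def zeta (n : ℕ) [NeZero n] : Fin n ≃ ZMod n where
  toFun i := ((i : ℕ) : ZMod n)
  invFun x := ⟨x.val, ZMod.val_lt x⟩
  left_inv i := by
    ext
    simp [ZMod.val_natCast_of_lt i.isLt]
  right_inv x := cast_val_eq x

def gfun (F : ZMod n → ZMod n → Fin 3) [NeZero n] :
    (Fin n ⊕ Fin n) → (Fin n ⊕ Fin n) → Fin 3
  | inl i, inr j => F (zeta n i) (zeta n j - zeta n i)
  | inr j, inl i => F (zeta n i) (zeta n j - zeta n i)
  | _, _ => 0

lemma gfun_symm (F : ZMod n → ZMod n → Fin 3) [NeZero n] :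
    ∀ x y, gfun F x y = gfun F y x := by
  rintro (i | i) (j | j) <;> rfl

def ccol (F : ZMod n → ZMod n → Fin 3) [NeZero n] : Sym2 (Fin n ⊕ Fin n) → Fin 3 :=
  Sym2.lift ⟨gfun F, gfun_symm F⟩

lemma ccol_lr (F : ZMod n → ZMod n → Fin 3) [NeZero n] (i j : Fin n) :
    ccol F s(inl i, inr j) = F (zeta n i) (zeta n j - zeta n i) := rfl

lemma ccol_rl (F : ZMod n → ZMod n → Fin 3) [NeZero n] (i j : Fin n) :
    ccol F s(inr j, inl i) = F (zeta n i) (zeta n j - zeta n i) := rfl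

lemma count_row [NeZero n] (F : ZMod n → ZMod n → Fin 3) (i : Fin n) (α : Fin 3) :
    (univ.filter fun j : Fin n => F (zeta n i) (zeta n j - zeta n i) = α).card
      = (univ.filter fun d : ZMod n => F (zeta n i) d = α).card := by
  apply Finset.card_bij (fun j _ => zeta n j - zeta n i)
  · intro a ha
    simp only [mem_filter, mem_univ, true_and] at ha ⊢
    exact ha
  · intro a _ b _ h
    exact (zeta n).injective (sub_left_injective h)
  · intro d hd
    simp only [mem_filter, mem_univ, true_and] at hd
    refine ⟨(zeta n).symm (zeta n i + d), ?_, ?_⟩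
    · simp only [mem_filter, mem_univ, true_and, Equiv.apply_symm_apply, add_sub_cancel_left]
      exact hd
    · simp only [Equiv.apply_symm_apply, add_sub_cancel_left]

lemma count_col [NeZero n] (F : ZMod n → ZMod n → Fin 3) (j : Fin n) (α : Fin 3) :
    (univ.filter fun i : Fin n => F (zeta n i) (zeta n j - zeta n i) = α).card
      = (univ.filter fun d : ZMod n => F (zeta n j - d) d = α).card := by
  apply Finset.card_bij (fun i _ => zeta n j - zeta n i)
  · intro a ha
    simp only [mem_filter, mem_univ, true_and, sub_sub_cancel] at ha ⊢
    exact ha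
  · intro a _ b _ h
    exact (zeta n).injective (sub_right_injective h)
  · intro d hd
    simp only [mem_filter, mem_univ, true_and] at hd
    refine ⟨(zeta n).symm (zeta n j - d), ?_, ?_⟩
    · simp only [mem_filter, mem_univ, true_and, Equiv.apply_symm_apply, sub_sub_cancel]
      exact hd
    · simp only [Equiv.apply_symm_apply, sub_sub_cancel]

lemma engine (n : ℕ) [NeZero n] (hn : 4 ≤ n) (F : ZMod n → ZMod n → Fin 3)
    (h2 : ∀ i d, F i d = 2 ↔ (d = 0 ∨ d = 1))
    (hrow : ∀ (i : ZMod n) (α : Fin 3), 2 * (univ.filter fun d => F i d = α).card ≤ n)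
    (hcol : ∀ (j : ZMod n) (α : Fin 3), 2 * (univ.filter fun d => F (j - d) d = α).card ≤ n)
    (ki : ∀ k : ZMod n, (∀ i d, F (i + k) d = F i d) → k = 0)
    (kii : ∀ c : ZMod n, ¬ (∀ i d, F (c - i) (1 - d) = F i d))
    (kiii : ∀ c : ZMod n, ¬ (∀ i d, F (c - i - d) d = F i d))
    (kiv : ∀ c : ZMod n, ¬ (∀ i d, F (c + i + d - 1) (1 - d) = F i d)) :
    ∃ c : Sym2 (Fin n ⊕ Fin n) → Fin 3,
      IsMajorityEdgeColoring (completeBipartiteGraph (Fin n) (Fin n)) c ∧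
      IsDistinguishingEdgeColoring (completeBipartiteGraph (Fin n) (Fin n)) c := by
  haveI : Fact (1 < n) := ⟨by omega⟩
  refine ⟨ccol F, ?_, ?_⟩
  · -- majority
    intro u α
    have hnbl : ∀ i : Fin n,
        (completeBipartiteGraph (Fin n) (Fin n)).neighborFinset (inl i)
          = univ.map ⟨inr, Sum.inr_injective⟩ := by
      intro i
      ext v
      cases v <;> simp [SimpleGraph.mem_neighborFinset]
    have hnbr : ∀ j : Fin n,
        (completeBipartiteGraph (Fin n) (Fin n)).neighborFinset (inr j)
          = univ.map ⟨inl, Sum.inl_injective⟩ := by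
      intro j
      ext v
      cases v <;> simp [SimpleGraph.mem_neighborFinset]
    cases u with
    | inl i =>
      have hdeg : (completeBipartiteGraph (Fin n) (Fin n)).degree (inl i) = n := by
        rw [SimpleGraph.degree, hnbl, Finset.card_map, Finset.card_univ, Fintype.card_fin]
      rw [hdeg, hnbl, Finset.filter_map, Finset.card_map]
      have : (univ.filter ((fun v => ccol F s(inl i, v) = α) ∘ (⟨inr, Sum.inr_injective⟩ : Fin n ↪ Fin n ⊕ Fin n))).card
          = (univ.filter fun d : ZMod n => F (zeta n i) d = α).card := by
        rw [← count_row]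
        rfl
      rw [this]
      exact hrow _ _
    | inr j =>
      have hdeg : (completeBipartiteGraph (Fin n) (Fin n)).degree (inr j) = n := by
        rw [SimpleGraph.degree, hnbr, Finset.card_map, Finset.card_univ, Fintype.card_fin]
      rw [hdeg, hnbr, Finset.filter_map, Finset.card_map]
      have : (univ.filter ((fun v => ccol F s(inr j, v) = α) ∘ (⟨inl, Sum.inl_injective⟩ : Fin n ↪ Fin n ⊕ Fin n))).card
          = (univ.filter fun d : ZMod n => F (zeta n j - d) d = α).card := by
        rw [← count_col]
        rfl
      rw [this]
      exact hcol _ _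
  · -- distinguishing
    intro φ hφ
    have key : ∀ (i j : Fin n),
        ccol F s(φ (inl i), φ (inr j)) = F (zeta n i) (zeta n j - zeta n i) := by
      intro i j
      have := hφ (inl i) (inr j) (by simp)
      rwa [ccol_lr] at this
    have hinj : Function.Injective (φ : (Fin n ⊕ Fin n) → (Fin n ⊕ Fin n)) :=
      φ.toEquiv.injective
    rcases hcase : φ (inl 0) with a | b
    · -- side-preserving case
      have hL : ∀ i : Fin n, ∃ a, φ (inl i) = inl a := by
        intro i
        rcases h' : φ (inl i) with x | x
        · exact ⟨x, rfl⟩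
        · exfalso
          rcases eq_or_ne i 0 with rfl | hne
          · rw [hcase] at h'
            simp at h'
          · have hadj : ¬ (completeBipartiteGraph (Fin n) (Fin n)).Adj (φ (inl 0)) (φ (inl i)) := by
              rw [φ.map_adj_iff]
              simp
            apply hadj
            rw [hcase, h']
            simp
      have hR : ∀ j : Fin n, ∃ b, φ (inr j) = inr b := by
        intro j
        rcases h' : φ (inr j) with x | x
        · exfalso
          have hadj : (completeBipartiteGraph (Fin n) (Fin n)).Adj (φ (inl 0)) (φ (inr j)) := by
            rw [φ.map_adj_iff]
            simp
          rw [hcase, h'] at hadj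
          simp at hadj
        · exact ⟨x, rfl⟩
      choose σf hσf using hL
      choose τf hτf using hR
      have injσf : Function.Injective σf := by
        intro x y hxy
        have : φ (inl x) = φ (inl y) := by rw [hσf, hσf, hxy]
        exact Sum.inl_injective (hinj this)
      have injτf : Function.Injective τf := by
        intro x y hxy
        have : φ (inr x) = φ (inr y) := by rw [hτf, hτf, hxy]
        exact Sum.inr_injective (hinj this)
      set σ : ZMod n → ZMod n := fun x => zeta n (σf ((zeta n).symm x)) with hσdef
      set τ : ZMod n → ZMod n := fun y => zeta n (τf ((zeta n).symm y)) with hτdef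
      have injσ : Function.Injective σ :=
        (zeta n).injective.comp (injσf.comp (zeta n).symm.injective)
      have injτ : Function.Injective τ :=
        (zeta n).injective.comp (injτf.comp (zeta n).symm.injective)
      have hF : ∀ x y, F (σ x) (τ y - σ x) = F x (y - x) := by
        intro x y
        have hk := key ((zeta n).symm x) ((zeta n).symm y)
        rw [hσf, hτf, ccol_lr, Equiv.apply_symm_apply, Equiv.apply_symm_apply] at hk
        exact hk
      have hid := noswap_case F h2 ki kii σ τ injσ injτ hF
      intro x
      cases x with
      | inl i =>
        rw [hσf i]
        have := (hid (zeta n i)).1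
        rw [hσdef] at this
        simp only [Equiv.symm_apply_apply] at this
        rw [(zeta n).injective this]
      | inr j =>
        rw [hτf j]
        have := (hid (zeta n j)).2
        rw [hτdef] at this
        simp only [Equiv.symm_apply_apply] at this
        rw [(zeta n).injective this]
    · -- side-swapping case : contradiction
      exfalso
      have hL : ∀ i : Fin n, ∃ a, φ (inl i) = inr a := by
        intro i
        rcases h' : φ (inl i) with x | x
        · exfalso
          rcases eq_or_ne i 0 with rfl | hne
          · rw [hcase] at h'
            simp at h'
          · have hadj : ¬ (completeBipartiteGraph (Fin n) (Fin n)).Adj (φ (inl 0)) (φ (inl i)) := by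
              rw [φ.map_adj_iff]
              simp
            apply hadj
            rw [hcase, h']
            simp
        · exact ⟨x, rfl⟩
      have hR : ∀ j : Fin n, ∃ b, φ (inr j) = inl b := by
        intro j
        rcases h' : φ (inr j) with x | x
        · exact ⟨x, rfl⟩
        · exfalso
          have hadj : (completeBipartiteGraph (Fin n) (Fin n)).Adj (φ (inl 0)) (φ (inr j)) := by
            rw [φ.map_adj_iff]
            simp
          rw [hcase, h'] at hadj
          simp at hadj
      choose σf hσf using hL
      choose τf hτf using hR
      have injσf : Function.Injective σf := by
        intro x y hxy
        have : φ (inl x) = φ (inl y) := by rw [hσf, hσf, hxy]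
        exact Sum.inl_injective (hinj this)
      have injτf : Function.Injective τf := by
        intro x y hxy
        have : φ (inr x) = φ (inr y) := by rw [hτf, hτf, hxy]
        exact Sum.inr_injective (hinj this)
      set σ : ZMod n → ZMod n := fun x => zeta n (σf ((zeta n).symm x)) with hσdef
      set τ : ZMod n → ZMod n := fun y => zeta n (τf ((zeta n).symm y)) with hτdef
      have injσ : Function.Injective σ :=
        (zeta n).injective.comp (injσf.comp (zeta n).symm.injective)
      have injτ : Function.Injective τ :=
        (zeta n).injective.comp (injτf.comp (zeta n).symm.injective)
      have hF : ∀ x y, F (τ y) (σ x - τ y) = F x (y - x) := by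
        intro x y
        have hk := key ((zeta n).symm x) ((zeta n).symm y)
        rw [hσf, hτf, ccol_rl, Equiv.apply_symm_apply, Equiv.apply_symm_apply] at hk
        exact hk
      exact swap_case F h2 kiii kiv σ τ injσ injτ hF

section Big

variable [NeZero n]

def rr (n : ℕ) [NeZero n] (i : ZMod n) : ℕ :=
  n / 2 - 1 + (if i = 0 ∨ i = 1 ∨ i = 3 then 1 else 0)

def Fbig (n : ℕ) [NeZero n] : ZMod n → ZMod n → Fin 3 := fun i d =>
  if d.val < 2 then 2
  else if d.val < 2 + rr n i then 1
  else 0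

lemma rr_bounds (i : ZMod n) : n / 2 - 1 ≤ rr n i ∧ rr n i ≤ n / 2 - 1 + 1 := by
  unfold rr
  split_ifs <;> omega

lemma neg_natCast (a : ℕ) (ha : a ≤ n) : ((n - a : ℕ) : ZMod n) = -(a : ZMod n) := by
  rw [Nat.cast_sub ha, ZMod.natCast_self, zero_sub]

lemma zmod_natCast_ne {a b : ℕ} (ha : a < n) (hb : b < n) (hne : a ≠ b) :
    ((a : ZMod n) ≠ (b : ZMod n)) := fun h => hne (natCast_inj_small ha hb h)

lemma not_w_of (h6 : 6 ≤ n) {v : ℕ} (hv : v < n) (h0 : v ≠ 0) (h1 : v ≠ 1) (h3 : v ≠ 3) :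
    ¬(((v : ℕ) : ZMod n) = 0 ∨ ((v : ℕ) : ZMod n) = 1 ∨ ((v : ℕ) : ZMod n) = 3) := by
  rintro (h | h | h)
  · rw [← Nat.cast_zero] at h
    exact zmod_natCast_ne hv (by omega) h0 h
  · rw [← Nat.cast_one] at h
    exact zmod_natCast_ne hv (by omega) h1 h
  · rw [show (3 : ZMod n) = ((3 : ℕ) : ZMod n) by push_cast; ring] at h
    exact zmod_natCast_ne hv (by omega) h3 h

lemma big_h2 (h6 : 6 ≤ n) : ∀ i d : ZMod n, Fbig n i d = 2 ↔ (d = 0 ∨ d = 1) := by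
  haveI : Fact (1 < n) := ⟨by omega⟩
  have hrhs : ∀ d : ZMod n, d.val < 2 ↔ (d = 0 ∨ d = 1) := by
    intro d
    constructor
    · intro hd1
      rcases (by omega : d.val = 0 ∨ d.val = 1) with h | h
      · exact Or.inl ((ZMod.val_eq_zero d).mp h)
      · refine Or.inr (ZMod.val_injective n ?_)
        rw [h, ZMod.val_one]
    · rintro (rfl | rfl)
      · rw [ZMod.val_zero]; omega
      · rw [ZMod.val_one]; omega
  intro i d
  unfold Fbig
  split_ifs with hd1 hd2
  · exact iff_of_true rfl ((hrhs d).mp hd1)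
  · exact iff_of_false (by decide) (fun h => hd1 ((hrhs d).mpr h))
  · exact iff_of_false (by decide) (fun h => hd1 ((hrhs d).mpr h))

lemma card_val_bound (P : ZMod n → Prop) [DecidablePred P] (s t : ℕ)
    (h : ∀ d, P d → s ≤ d.val ∧ d.val < t) : (univ.filter P).card ≤ t - s := by
  have hle : (univ.filter P).card ≤ (Finset.Ico s t).card := by
    apply Finset.card_le_card_of_injOn (fun d => d.val)
    · intro d hd
      simp only [mem_coe, mem_filter, mem_univ, true_and] at hd
      exact Finset.mem_Ico.mpr (h d hd)
    · intro a _ b _ hab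
      exact ZMod.val_injective n hab
  simpa [Nat.card_Ico] using hle

lemma big_balance (h6 : 6 ≤ n) (ρ : ZMod n → ZMod n) (α : Fin 3) :
    2 * (univ.filter fun d => Fbig n (ρ d) d = α).card ≤ n := by
  have hα : α = 0 ∨ α = 1 ∨ α = 2 := by omega
  rcases hα with rfl | rfl | rfl
  · have hb := card_val_bound (fun d => Fbig n (ρ d) d = 0) (n / 2 + 1) n ?_
    · omega
    · intro d hd
      unfold Fbig at hd
      split_ifs at hd with hd1 hd2
      · exact absurd hd (by decide)
      · exact absurd hd (by decide)
      · have := (rr_bounds (n := n) (ρ d)).1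
        exact ⟨by omega, ZMod.val_lt d⟩
  · have hb := card_val_bound (fun d => Fbig n (ρ d) d = 1) 2 (2 + n / 2) ?_
    · omega
    · intro d hd
      unfold Fbig at hd
      split_ifs at hd with hd1 hd2
      · exact absurd hd (by decide)
      · have := (rr_bounds (n := n) (ρ d)).2
        exact ⟨by omega, by omega⟩
      · exact absurd hd (by decide)
  · have hb := card_val_bound (fun d => Fbig n (ρ d) d = 2) 0 2 ?_
    · omega
    · intro d hd
      unfold Fbig at hd
      split_ifs at hd with hd1 hd2
      · exact ⟨Nat.zero_le _, hd1⟩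
      · exact absurd hd (by decide)
      · exact absurd hd (by decide)

lemma Fbig_eval_hi (h6 : 6 ≤ n) (i d : ZMod n) (hd : 2 + n / 2 ≤ d.val) : Fbig n i d = 0 := by
  have h1 := (rr_bounds (n := n) i).2
  unfold Fbig
  rw [if_neg (by omega), if_neg (by omega)]

lemma Fbig_eval_one (h6 : 6 ≤ n) (i d : ZMod n) (hd2 : 2 ≤ d.val) (hdm : d.val ≤ n / 2) :
    Fbig n i d = 1 := by
  have h1 := (rr_bounds (n := n) i).1
  unfold Fbig
  rw [if_neg (by omega), if_pos (by omega)]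

lemma val_two (h6 : 6 ≤ n) : ((2 : ℕ) : ZMod n).val = 2 := ZMod.val_natCast_of_lt (by omega)

lemma val_neg_one' (h6 : 6 ≤ n) : (-(1 : ZMod n)).val = n - 1 := by
  rw [show -(1 : ZMod n) = ((n - 1 : ℕ) : ZMod n) by rw [neg_natCast 1 (by omega), Nat.cast_one]]
  exact ZMod.val_natCast_of_lt (by omega)

lemma big_d0_one (h6 : 6 ≤ n) (i : ZMod n) :
    Fbig n i ((n / 2 + 1 : ℕ) : ZMod n) = 1 ↔ (i = 0 ∨ i = 1 ∨ i = 3) := by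
  have hval : (((n / 2 + 1 : ℕ)) : ZMod n).val = n / 2 + 1 :=
    ZMod.val_natCast_of_lt (by omega)
  unfold Fbig rr
  rw [hval]
  by_cases hw : i = 0 ∨ i = 1 ∨ i = 3
  · rw [if_pos hw, if_neg (by omega), if_pos (by omega)]
    exact iff_of_true rfl hw
  · rw [if_neg hw, if_neg (by omega), if_neg (by omega)]
    exact iff_of_false (by decide) hw

lemma big_ki (h6 : 6 ≤ n) :
    ∀ k : ZMod n, (∀ i d, Fbig n (i + k) d = Fbig n i d) → k = 0 := by
  intro k hk
  have hw : ∀ i : ZMod n, (i + k = 0 ∨ i + k = 1 ∨ i + k = 3) ↔ (i = 0 ∨ i = 1 ∨ i = 3) := by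
    intro i
    rw [← big_d0_one h6, ← big_d0_one h6, hk i]
  have wk : k = 0 ∨ k = 1 ∨ k = 3 := by
    have := (hw 0).mpr (Or.inl rfl)
    rwa [zero_add] at this
  rcases wk with h | h | h
  · exact h
  · exfalso
    have w2 := (hw 1).mpr (Or.inr (Or.inl rfl))
    rw [h, show (1 : ZMod n) + 1 = ((2 : ℕ) : ZMod n) by push_cast; ring] at w2
    exact not_w_of h6 (by omega) (by omega) (by omega) (by omega) w2
  · exfalso
    have w2 := (hw 1).mpr (Or.inr (Or.inl rfl))
    rw [h, show (1 : ZMod n) + 3 = ((4 : ℕ) : ZMod n) by push_cast; ring] at w2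
    exact not_w_of h6 (by omega) (by omega) (by omega) (by omega) w2

lemma big_kii (h6 : 6 ≤ n) :
    ∀ c : ZMod n, ¬ (∀ i d, Fbig n (c - i) (1 - d) = Fbig n i d) := by
  intro c hc
  have := hc 0 ((2 : ℕ) : ZMod n)
  rw [show (1 : ZMod n) - ((2 : ℕ) : ZMod n) = -1 by push_cast; ring] at this
  rw [Fbig_eval_hi h6 _ _ (by rw [val_neg_one' h6]; omega)] at this
  rw [Fbig_eval_one h6 _ _ (by rw [val_two h6]) (by rw [val_two h6]; omega)] at this
  exact absurd this (by decide)

lemma big_kiv (h6 : 6 ≤ n) :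
    ∀ c : ZMod n, ¬ (∀ i d, Fbig n (c + i + d - 1) (1 - d) = Fbig n i d) := by
  intro c hc
  have := hc 0 ((2 : ℕ) : ZMod n)
  rw [show (1 : ZMod n) - ((2 : ℕ) : ZMod n) = -1 by push_cast; ring] at this
  rw [Fbig_eval_hi h6 _ _ (by rw [val_neg_one' h6]; omega)] at this
  rw [Fbig_eval_one h6 _ _ (by rw [val_two h6]) (by rw [val_two h6]; omega)] at this
  exact absurd this (by decide)

lemma big_kiii (h6 : 6 ≤ n) :
    ∀ c : ZMod n, ¬ (∀ i d, Fbig n (c - i - d) d = Fbig n i d) := by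
  intro c hc
  set d0 : ZMod n := ((n / 2 + 1 : ℕ) : ZMod n) with hd0
  have hw : ∀ i : ZMod n, ((c - d0) - i = 0 ∨ (c - d0) - i = 1 ∨ (c - d0) - i = 3)
      ↔ (i = 0 ∨ i = 1 ∨ i = 3) := by
    intro i
    rw [← big_d0_one h6, ← big_d0_one h6, show c - d0 - i = c - i - d0 by ring, hc i d0]
  have h0 : (c - d0) = 0 ∨ (c - d0) = 1 ∨ (c - d0) = 3 := by
    have := (hw 0).mpr (Or.inl rfl)
    rwa [sub_zero] at this
  have h1 := (hw 1).mpr (Or.inr (Or.inl rfl))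
  have h3 := (hw 3).mpr (Or.inr (Or.inr rfl))
  rcases h0 with h | h | h
  · rw [h, show (0 : ZMod n) - 1 = -((1 : ℕ) : ZMod n) by push_cast; ring,
      ← neg_natCast 1 (by omega)] at h1
    exact not_w_of h6 (by omega) (by omega) (by omega) (by omega) h1
  · rw [h, show (1 : ZMod n) - 3 = -((2 : ℕ) : ZMod n) by push_cast; ring,
      ← neg_natCast 2 (by omega)] at h3
    exact not_w_of h6 (by omega) (by omega) (by omega) (by omega) h3
  · rw [h, show (3 : ZMod n) - 1 = ((2 : ℕ) : ZMod n) by push_cast; ring] at h1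
    exact not_w_of h6 (by omega) (by omega) (by omega) (by omega) h1

end Big

def F4 : ZMod 4 → ZMod 4 → Fin 3 := fun i d =>
  if d.val < 2 then 2
  else if i.val = 2 then (if d.val = 2 then 1 else 0)
  else if i.val = 3 then 1
  else 0

def F5 : ZMod 5 → ZMod 5 → Fin 3 := fun i d =>
  if d.val < 2 then 2
  else if i.val ≤ 2 then (if d.val = 4 then 1 else 0)
  else if i.val = 3 then (if d.val = 2 then 1 else 0)
  else (if 3 ≤ d.val then 1 else 0)

end MDaux

/-- For `n ≥ 4`, the complete balanced bipartite graph `K_{n,n}` satisfies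
`M'_D(K_{n,n}) ≤ 3`. -/
theorem majority_distinguishing_complete_bipartite (n : ℕ) (hn : 4 ≤ n) :
    ∃ c : Sym2 (Fin n ⊕ Fin n) → Fin 3,
      IsMajorityEdgeColoring (completeBipartiteGraph (Fin n) (Fin n)) c ∧
      IsDistinguishingEdgeColoring (completeBipartiteGraph (Fin n) (Fin n)) c := by
  rcases (show n = 4 ∨ n = 5 ∨ 6 ≤ n by omega) with rfl | h
  · exact MDaux.engine 4 (by omega) MDaux.F4 (by decide) (by decide) (by decide)
      (by decide) (by decide) (by decide) (by decide)
  rcases h with rfl | h6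
  · exact MDaux.engine 5 (by omega) MDaux.F5 (by decide) (by decide) (by decide)
      (by decide) (by decide) (by decide) (by decide)
  · haveI : NeZero n := ⟨by omega⟩
    exact MDaux.engine n (by omega) (MDaux.Fbig n) (MDaux.big_h2 h6)
      (fun i α => MDaux.big_balance h6 (fun _ => i) α)
      (fun j α => MDaux.big_balance h6 (fun d => j - d) α)
      (MDaux.big_ki h6) (MDaux.big_kii h6) (MDaux.big_kiii h6) (MDaux.big_kiv h6)
end

section
/- For every natural number n ≥ 3, the complete bipartite graph K_{2,n} satisfies M'_D(K_{2,n}) ≤ min{k ∈ ℕ : k(k−1) − 1 ≥ n}; that is, if k is the least natural number with k(k−1) − 1 ≥ n, then K_{2,n} has an edge coloring with k colors that is both a majority edge coloring and a distinguishing edge coloring. -/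
open SimpleGraph

lemma modCancel {k b b' : ℕ} (a : ℕ) (hb : b < k) (hb' : b' < k)
    (h : (a + b) % k = (a + b') % k) : b = b' := by
  have h2 : b ≡ b' [MOD k] := Nat.ModEq.add_left_cancel' a h
  rwa [Nat.ModEq, Nat.mod_eq_of_lt hb, Nat.mod_eq_of_lt hb'] at h2

/-- The color of the edge from left vertex `i` to right vertex `j`. -/
def col {k : ℕ} (hk0 : 0 < k) (i : Fin 2) (j : ℕ) : Fin k :=
  if i = 0 then ⟨j % k, Nat.mod_lt _ hk0⟩
  else ⟨(j % k + (j / k + 1)) % k, Nat.mod_lt _ hk0⟩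

lemma col_zero {k : ℕ} (hk0 : 0 < k) (j : ℕ) : (col hk0 0 j : ℕ) = j % k := rfl

lemma col_one {k : ℕ} (hk0 : 0 < k) (j : ℕ) :
    (col hk0 1 j : ℕ) = (j % k + (j / k + 1)) % k := rfl

lemma div_lt {k j : ℕ} (hk0 : 0 < k) (hj : j < k * (k - 1)) : j / k < k - 1 :=
  (Nat.div_lt_iff_lt_mul hk0).mpr (by rwa [Nat.mul_comm] at hj)

lemma col_ne {k : ℕ} (hk0 : 0 < k) {j : ℕ} (hj : j < k * (k - 1)) :
    col hk0 0 j ≠ col hk0 1 j := by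
  intro h
  have hd : j / k < k - 1 := div_lt hk0 hj
  have hrk : j % k < k := Nat.mod_lt _ hk0
  have hv := congrArg Fin.val h
  rw [col_zero, col_one] at hv
  have h' : (j % k + 0) % k = (j % k + (j / k + 1)) % k := by
    rw [Nat.add_zero, Nat.mod_eq_of_lt hrk]; exact hv
  have h2 : (0:ℕ) = j / k + 1 :=
    modCancel (j % k) hk0 (Nat.lt_sub_iff_add_lt.mp hd) h'
  exact absurd h2.symm (Nat.succ_ne_zero _)

lemma col_inj {k : ℕ} (hk0 : 0 < k) {j j' : ℕ} (hj : j < k * (k - 1)) (hj' : j' < k * (k - 1))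
    (h0 : col hk0 0 j = col hk0 0 j') (h1 : col hk0 1 j = col hk0 1 j') : j = j' := by
  have hm : j % k = j' % k := by
    have := congrArg Fin.val h0; rwa [col_zero, col_zero] at this
  have h1' : (j % k + (j / k + 1)) % k = (j % k + (j' / k + 1)) % k := by
    have := congrArg Fin.val h1; rw [col_one, col_one] at this; rw [this, hm]
  have hd : j / k < k - 1 := div_lt hk0 hj
  have hd' : j' / k < k - 1 := div_lt hk0 hj'
  have hc : j / k + 1 = j' / k + 1 :=
    modCancel (j % k) (Nat.lt_sub_iff_add_lt.mp hd) (Nat.lt_sub_iff_add_lt.mp hd') h1'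
  have hdiv : j / k = j' / k := by omega
  have e1 := Nat.div_add_mod j k
  have e2 := Nat.div_add_mod j' k
  rw [hdiv, hm] at e1
  omega

/-- The edge coloring of `K_{2,n}`. -/
def ecol (n : ℕ) {k : ℕ} (hk0 : 0 < k) : Sym2 (Fin 2 ⊕ Fin n) → Fin k :=
  Sym2.lift ⟨fun u v =>
    match u, v with
    | Sum.inl i, Sum.inr j => col hk0 i (j : ℕ)
    | Sum.inr j, Sum.inl i => col hk0 i (j : ℕ)
    | _, _ => ⟨0, hk0⟩,
   by rintro (i | j) (i' | j') <;> rfl⟩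

lemma ecol_lr (n : ℕ) {k : ℕ} (hk0 : 0 < k) (i : Fin 2) (j : Fin n) :
    ecol n hk0 s(Sum.inl i, Sum.inr j) = col hk0 i (j : ℕ) := rfl

lemma ecol_rl (n : ℕ) {k : ℕ} (hk0 : 0 < k) (i : Fin 2) (j : Fin n) :
    ecol n hk0 s(Sum.inr j, Sum.inl i) = col hk0 i (j : ℕ) := rfl

lemma count_bound (n : ℕ) {k : ℕ} (hk0 : 0 < k) (hn : 0 < n) (i : Fin 2) (α : Fin k) :
    (Finset.univ.filter (fun j : Fin n => col hk0 i (j : ℕ) = α)).card ≤ (n + k - 1) / k := by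
  have hq : (n + k - 1) / k = (n - 1) / k + 1 := by
    rw [show n + k - 1 = (n - 1) + k by omega, Nat.add_div_right _ hk0]
  rw [hq, ← Finset.card_range ((n - 1) / k + 1)]
  refine Finset.card_le_card_of_injOn (fun j : Fin n => (j : ℕ) / k) ?_ ?_
  · intro j _
    simp only [Finset.mem_coe, Finset.mem_range]
    have h1 : (j : ℕ) / k ≤ (n - 1) / k := Nat.div_le_div_right (by omega)
    omega
  · intro j hj j' hj' hdd
    simp only [Finset.coe_filter, Set.mem_setOf_eq, Finset.mem_univ, true_and] at hj hj'
    have hcc : col hk0 i (j : ℕ) = col hk0 i (j' : ℕ) := hj.trans hj'.symm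
    simp only at hdd
    have hi : i = 0 ∨ i = 1 := by fin_cases i <;> simp
    have hm : (j : ℕ) % k = (j' : ℕ) % k := by
      rcases hi with h | h
      · subst h
        have hv := congrArg Fin.val hcc
        rwa [col_zero, col_zero] at hv
      · subst h
        have hv := congrArg Fin.val hcc
        rw [col_one, col_one, ← hdd] at hv
        rw [Nat.add_comm ((j:ℕ) % k) _, Nat.add_comm ((j':ℕ) % k) _] at hv
        exact modCancel _ (Nat.mod_lt _ hk0) (Nat.mod_lt _ hk0) hv
    have e1 := Nat.div_add_mod (j : ℕ) k
    have e2 := Nat.div_add_mod (j' : ℕ) k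
    have : (j : ℕ) = (j' : ℕ) := by rw [← e1, ← e2, hdd, hm]
    exact Fin.ext this

lemma two_mul_div_le {n k : ℕ} (hn : 3 ≤ n) (hk : 3 ≤ k) : 2 * ((n + k - 1) / k) ≤ n := by
  have h1 : (n + k - 1) / k * k ≤ n + k - 1 := Nat.div_mul_le_self _ _
  rcases le_or_gt ((n + k - 1) / k) 1 with h | h
  · omega
  · have h2 : ((n + k - 1) / k - 1) * k = (n + k - 1) / k * k - k := by
      rw [Nat.sub_mul, Nat.one_mul]
    have h3 : ((n + k - 1) / k - 1) * 3 ≤ ((n + k - 1) / k - 1) * k :=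
      Nat.mul_le_mul_left _ hk
    omega

lemma nbhd_inl (n : ℕ) (i : Fin 2) :
    (completeBipartiteGraph (Fin 2) (Fin n)).neighborFinset (Sum.inl i) =
    Finset.univ.map ⟨Sum.inr, Sum.inr_injective⟩ := by
  ext v
  cases v with
  | inl i' => rw [SimpleGraph.mem_neighborFinset]; simp [completeBipartiteGraph]
  | inr j => rw [SimpleGraph.mem_neighborFinset]; simp [completeBipartiteGraph]

lemma nbhd_inr (n : ℕ) (j : Fin n) :
    (completeBipartiteGraph (Fin 2) (Fin n)).neighborFinset (Sum.inr j) =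
    {Sum.inl 0, Sum.inl 1} := by
  ext v
  cases v with
  | inl i =>
    rw [SimpleGraph.mem_neighborFinset]
    simp only [SimpleGraph.mem_neighborFinset, completeBipartiteGraph, Finset.mem_insert,
      Finset.mem_singleton]
    constructor
    · intro _
      have : i = 0 ∨ i = 1 := by fin_cases i <;> simp
      rcases this with h | h <;> [left; right] <;> rw [h]
    · intro _
      exact Or.inr ⟨rfl, rfl⟩
  | inr j' => rw [SimpleGraph.mem_neighborFinset]; simp [completeBipartiteGraph]


lemma phi_left {n : ℕ} (hn : 3 ≤ n)
    (φ : completeBipartiteGraph (Fin 2) (Fin n) ≃g completeBipartiteGraph (Fin 2) (Fin n))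
    (i : Fin 2) : ∃ i', φ (Sum.inl i) = Sum.inl i' := by
  cases h : φ (Sum.inl i) with
  | inl i' => exact ⟨i', rfl⟩
  | inr j =>
    exfalso
    have key : ∀ m : Fin n, ∃ t : Fin 2, φ (Sum.inr m) = Sum.inl t := by
      intro m
      have hadj : (completeBipartiteGraph (Fin 2) (Fin n)).Adj (φ (Sum.inl i)) (φ (Sum.inr m)) :=
        φ.map_rel_iff.mpr (Or.inl ⟨rfl, rfl⟩)
      rw [h] at hadj
      rcases hadj with ⟨h1, _⟩ | ⟨_, h2⟩
      · simp at h1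
      · exact Sum.isLeft_iff.mp h2
    obtain ⟨t0, ht0⟩ := key ⟨0, by omega⟩
    obtain ⟨t1, ht1⟩ := key ⟨1, by omega⟩
    obtain ⟨t2, ht2⟩ := key ⟨2, by omega⟩
    have d01 : t0 ≠ t1 := by
      intro e; rw [e, ← ht1] at ht0
      have := φ.injective ht0
      simp [Fin.ext_iff] at this
    have d02 : t0 ≠ t2 := by
      intro e; rw [e, ← ht2] at ht0
      have := φ.injective ht0
      simp [Fin.ext_iff] at this
    have d12 : t1 ≠ t2 := by
      intro e; rw [e, ← ht2] at ht1
      have := φ.injective ht1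
      simp [Fin.ext_iff] at this
    have v0 := t0.isLt
    have v1 := t1.isLt
    have v2 := t2.isLt
    have e01 : t0.val ≠ t1.val := fun e => d01 (Fin.ext e)
    have e02 : t0.val ≠ t2.val := fun e => d02 (Fin.ext e)
    have e12 : t1.val ≠ t2.val := fun e => d12 (Fin.ext e)
    omega

/-- For `n ≥ 3`, `M'_D(K_{2,n}) ≤ min {k ∈ ℕ : k(k-1) - 1 ≥ n}`: if `k` is the least
natural number with `k(k-1) - 1 ≥ n`, then `K_{2,n}` has a majority distinguishing
edge coloring with `k` colors. -/
theorem majority_distinguishing_K2n (n : ℕ) (hn : 3 ≤ n) (k : ℕ)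
    (hk : n ≤ k * (k - 1) - 1) (hkmin : ∀ j : ℕ, n ≤ j * (j - 1) - 1 → k ≤ j) :
    ∃ c : Sym2 (Fin 2 ⊕ Fin n) → Fin k,
      IsMajorityEdgeColoring (completeBipartiteGraph (Fin 2) (Fin n)) c ∧
      IsDistinguishingEdgeColoring (completeBipartiteGraph (Fin 2) (Fin n)) c := by
  have hk3 : 3 ≤ k := by
    by_contra h
    push_neg at h
    interval_cases k <;> omega
  have hk0 : 0 < k := by omega
  have hmul : 3 * 2 ≤ k * (k - 1) := Nat.mul_le_mul hk3 (by omega)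
  have hnk : n < k * (k - 1) := by omega
  refine ⟨ecol n hk0, ?_, ?_⟩
  · -- majority
    intro u α
    cases u with
    | inl i =>
      rw [← SimpleGraph.card_neighborFinset_eq_degree, nbhd_inl, Finset.filter_map,
        Finset.card_map, Finset.card_map, Finset.card_univ, Fintype.card_fin]
      have heq : Finset.filter
          ((fun v => ecol n hk0 s(Sum.inl i, v) = α) ∘ (⟨Sum.inr, Sum.inr_injective⟩ : Fin n ↪ Fin 2 ⊕ Fin n))
          Finset.univ = Finset.univ.filter (fun j : Fin n => col hk0 i (j : ℕ) = α) := by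
        apply Finset.filter_congr
        intro j _
        simp [ecol_lr]
      rw [heq]
      calc 2 * (Finset.univ.filter (fun j : Fin n => col hk0 i (j : ℕ) = α)).card
          ≤ 2 * ((n + k - 1) / k) := by
            have := count_bound n hk0 (by omega) i α
            omega
        _ ≤ n := two_mul_div_le hn hk3
    | inr j =>
      rw [← SimpleGraph.card_neighborFinset_eq_degree, nbhd_inr]
      have hcard : ({Sum.inl 0, Sum.inl 1} : Finset (Fin 2 ⊕ Fin n)).card = 2 :=
        Finset.card_pair (by simp)
      have hjlt : (j : ℕ) < k * (k - 1) := by have := j.isLt; omega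
      have hle : (Finset.filter (fun v => ecol n hk0 s(Sum.inr j, v) = α)
          ({Sum.inl 0, Sum.inl 1} : Finset (Fin 2 ⊕ Fin n))).card ≤ 1 := by
        rw [Finset.card_le_one]
        intro a ha b hb
        simp only [Finset.mem_filter, Finset.mem_insert, Finset.mem_singleton] at ha hb
        obtain ⟨ha1, ha2⟩ := ha
        obtain ⟨hb1, hb2⟩ := hb
        have hne := col_ne hk0 hjlt
        rcases ha1 with h | h <;> rcases hb1 with h' | h' <;> subst h <;> subst h' <;> try rfl
        · exfalso; apply hne
          rw [← ecol_rl n hk0 0 j, ← ecol_rl n hk0 1 j, ha2, hb2]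
        · exfalso; apply hne
          rw [← ecol_rl n hk0 0 j, ← ecol_rl n hk0 1 j, hb2, ha2]
      omega
  · -- distinguishing
    have hkn : k - 2 < n := by
      have h1 : ¬ (n ≤ (k - 1) * ((k - 1) - 1) - 1) := fun h => absurd (hkmin (k - 1) h) (by omega)
      push_neg at h1
      have h2 : 2 * ((k - 1) - 1) ≤ (k - 1) * ((k - 1) - 1) :=
        Nat.mul_le_mul_right _ (by omega)
      omega
    intro φ hc x
    obtain ⟨s0, hs0⟩ := phi_left hn φ 0
    obtain ⟨s1, hs1⟩ := phi_left hn φ 1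
    have hss : s0 ≠ s1 := by
      intro e
      rw [e, ← hs1] at hs0
      have := φ.injective hs0
      simp at this
    have hright : ∀ m : Fin n, ∃ t : Fin n, φ (Sum.inr m) = Sum.inr t := by
      intro m
      cases h : φ (Sum.inr m) with
      | inr t => exact ⟨t, rfl⟩
      | inl t =>
        exfalso
        have hne : s0.val ≠ s1.val := fun e => hss (Fin.ext e)
        have hv : t.val = s0.val ∨ t.val = s1.val := by
          have := t.isLt; have := s0.isLt; have := s1.isLt; omega
        have ht : t = s0 ∨ t = s1 :=
          hv.imp (fun e => Fin.ext e) (fun e => Fin.ext e)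
        rcases ht with h' | h'
        · rw [h', ← hs0] at h
          have := φ.injective h
          simp at this
        · rw [h', ← hs1] at h
          have := φ.injective h
          simp at this
    have key : ∀ (i i' : Fin 2) (j t : Fin n), φ (Sum.inl i) = Sum.inl i' →
        φ (Sum.inr j) = Sum.inr t → col hk0 i' (t : ℕ) = col hk0 i (j : ℕ) := by
      intro i i' j t h1 h2
      have h3 := hc (Sum.inl i) (Sum.inr j) (Or.inl ⟨rfl, rfl⟩)
      rw [h1, h2] at h3
      rwa [ecol_lr, ecol_lr] at h3
    have hcase : (s0 = 0 ∧ s1 = 1) ∨ (s0 = 1 ∧ s1 = 0) := by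
      have hne : s0.val ≠ s1.val := fun e => hss (Fin.ext e)
      have hv : (s0.val = 0 ∧ s1.val = 1) ∨ (s0.val = 1 ∧ s1.val = 0) := by
        have := s0.isLt; have := s1.isLt; omega
      rcases hv with ⟨a, b⟩ | ⟨a, b⟩
      · exact Or.inl ⟨Fin.ext a, Fin.ext b⟩
      · exact Or.inr ⟨Fin.ext a, Fin.ext b⟩
    rcases hcase with ⟨e0, e1⟩ | ⟨e0, e1⟩
    · -- identity on the left part
      cases x with
      | inl i =>
        have hi : i = 0 ∨ i = 1 := by fin_cases i <;> simp
        rcases hi with h | h <;> subst h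
        · rw [hs0, e0]
        · rw [hs1, e1]
      | inr j =>
        obtain ⟨t, ht⟩ := hright j
        have k0 := key 0 s0 j t hs0 ht
        rw [e0] at k0
        have k1 := key 1 s1 j t hs1 ht
        rw [e1] at k1
        have hjt : (t : ℕ) = (j : ℕ) :=
          col_inj hk0 (by have := t.isLt; omega) (by have := j.isLt; omega) k0 k1
        rw [ht]
        exact congrArg Sum.inr (Fin.ext hjt)
    · -- swap on the left part: impossible
      exfalso
      obtain ⟨t, ht⟩ := hright ⟨k - 2, hkn⟩
      have k0 := key 0 s0 ⟨k - 2, hkn⟩ t hs0 ht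
      rw [e0] at k0
      have k1 := key 1 s1 ⟨k - 2, hkn⟩ t hs1 ht
      rw [e1] at k1
      have hv0 := congrArg Fin.val k0
      have hv1 := congrArg Fin.val k1
      rw [col_one, col_zero] at hv0
      rw [col_zero, col_one] at hv1
      have hj0 : ((⟨k - 2, hkn⟩ : Fin n) : ℕ) = k - 2 := rfl
      have hkk : k - 2 < k := by omega
      have hm0 : (k - 2) % k = k - 2 := Nat.mod_eq_of_lt hkk
      have hd0 : (k - 2) / k = 0 := Nat.div_eq_of_lt hkk
      rw [hj0, hm0] at hv0 hv1
      rw [hd0] at hv1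
      have h11 : (k - 2 + (0 + 1)) = k - 1 := by omega
      rw [h11, Nat.mod_eq_of_lt (show k - 1 < k by omega)] at hv1
      rw [hv1] at hv0
      have htlt : (t : ℕ) < k * (k - 1) := by have := t.isLt; omega
      have htd : (t : ℕ) / k < k - 1 := div_lt hk0 htlt
      have h12 : k - 1 + ((t : ℕ) / k + 1) = k + (t : ℕ) / k := by omega
      rw [h12, Nat.add_mod_left, Nat.mod_eq_of_lt (show (t:ℕ) / k < k by omega)] at hv0
      have e := Nat.div_add_mod (t : ℕ) k
      rw [hv0, hv1] at e
      have hkk2 : k * (k - 1) = k * (k - 2) + k := by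
        rw [show k - 1 = (k - 2) + 1 by omega, Nat.mul_add, Nat.mul_one]
      have := t.isLt
      omega
end
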